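/- arXiv:2604.14429 — 10 statements merged into one kernel-verified Lean document; each statement's English description precedes it below -/
import Mathlib

section
/- Let N ≥ 1 be an integer and let S_k = (s_{k;l,j})_{0≤l,j≤N−1} ∈ ℂ^{N×N} for k ≥ 0 with S_0 = E_N (the N×N identity matrix). Suppose there exist constants C > 0 and R > 0 such that |s_{k;l,j}| ≤ C·R^k for all l,j ∈ {0,…,N−1} and all k ≥ 1. Then there exist r > 0 and a measurable bounded function W : [0,2π] → ℂ^{N×N} such that W(θ) is a Hermitian positive semidefinite matrix for every θ, and ∫₀^{2π} (r e^{iθ})^k · W(θ) dθ = S_k for every k ≥ 0. (In particular the matrix moment problem ∫_ℂ z^k dM(z) = S_k, k ≥ 0, has a positive-matrix-valued solution supported on a circle centered at the origin.) -/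
open scoped ComplexOrder

/-- The basic exponential `e^{iaθ}` used to build the weight. -/
noncomputable def cexpI (a : ℤ) (θ : ℝ) : ℂ := Complex.exp ((a : ℂ) * θ * Complex.I)

lemma cexpI_abs (a : ℤ) (θ : ℝ) : ‖cexpI a θ‖ = 1 := by
  simp [cexpI, Complex.norm_exp]

lemma cexpI_conj (a : ℤ) (θ : ℝ) : (starRingEnd ℂ) (cexpI a θ) = cexpI (-a) θ := by
  rw [cexpI, ← Complex.exp_conj]
  congr 1
  simp only [map_mul, Complex.conj_ofReal, Complex.conj_I, map_intCast]
  push_cast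
  ring

lemma cexpI_mul (a b : ℤ) (θ : ℝ) : cexpI a θ * cexpI b θ = cexpI (a + b) θ := by
  rw [cexpI, cexpI, cexpI, ← Complex.exp_add]
  congr 1
  push_cast
  ring

lemma cexpI_norm (a : ℤ) (θ : ℝ) : ‖cexpI a θ‖ = 1 := by
  rw [cexpI_abs]

lemma cexpI_continuous (a : ℤ) : Continuous (cexpI a) := by
  unfold cexpI
  fun_prop

lemma cexpI_integral (a : ℤ) :
    ∫ θ in (0:ℝ)..(2*Real.pi), cexpI a θ = if a = 0 then (2*Real.pi : ℂ) else 0 := by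
  unfold cexpI
  split_ifs with h
  · simp [h]
  · have hc : (a : ℂ) * Complex.I ≠ 0 := by
      simp [Complex.I_ne_zero, h]
    have h2 : (fun θ : ℝ => Complex.exp ((a:ℂ) * θ * Complex.I))
        = fun θ : ℝ => Complex.exp (((a:ℂ) * Complex.I) * θ) := by
      funext θ; ring_nf
    rw [h2, integral_exp_mul_complex hc]
    have h3 : Complex.exp ((a:ℂ) * Complex.I * (2*Real.pi)) = 1 := by
      have := Complex.exp_int_mul_two_pi_mul_I a
      rw [← this]; congr 1; ring
    rw [show ((2*Real.pi : ℝ) : ℂ) = (2*Real.pi : ℂ) by push_cast; ring, h3]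
    simp

/-- **Solvability of the full matrix moment problem on a circle.**
If `S 0` is the identity and the entries of `S k` grow at most like `C * R ^ k`, then there
exist a radius `r > 0` and a bounded measurable Hermitian positive semidefinite matrix weight
`W` on `[0, 2π]` with `∫₀^{2π} (r e^{iθ})^k • W(θ) dθ = S k` entrywise, for all `k ≥ 0`. -/
theorem matrix_moment_problem_solvable
    (N : ℕ) (hN : 1 ≤ N) (S : ℕ → Matrix (Fin N) (Fin N) ℂ)
    (hS0 : S 0 = 1)
    (C R : ℝ) (hC : 0 < C) (hR : 0 < R)
    (hbound : ∀ k : ℕ, 1 ≤ k → ∀ l j : Fin N, ‖S k l j‖ ≤ C * R ^ k) :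
    ∃ (r : ℝ) (W : ℝ → Matrix (Fin N) (Fin N) ℂ),
      0 < r ∧
      (∀ l j : Fin N, Measurable fun θ : ℝ => W θ l j) ∧
      (∃ B : ℝ, ∀ (θ : ℝ) (l j : Fin N), ‖W θ l j‖ ≤ B) ∧
      (∀ θ : ℝ, (W θ).PosSemidef) ∧
      (∀ (k : ℕ) (l j : Fin N),
        ∫ θ in (0:ℝ)..(2 * Real.pi),
          ((r : ℂ) * Complex.exp ((θ : ℂ) * Complex.I)) ^ k * W θ l j = S k l j) := by
  -- the parameters
  set D : ℝ := 2 * C * N + 1 with hD_def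
  have hD1 : 1 < D := by
    have : (0:ℝ) < 2 * C * N := by positivity
    simp [hD_def]; nlinarith
  have hD0 : 0 < D := lt_trans one_pos hD1
  set t : ℝ := D⁻¹ with ht_def
  have ht0 : 0 < t := inv_pos.2 hD0
  have ht1 : t < 1 := by
    rw [ht_def, inv_lt_one_iff₀]; right; exact hD1
  set r : ℝ := R / t with hr_def
  have hr0 : 0 < r := div_pos hR ht0
  set u : ℝ := t / R with hu_def
  have hu0 : 0 < u := div_pos ht0 hR
  have huR : u * R = t := by rw [hu_def, div_mul_cancel₀ _ hR.ne']
  have hru : r * u = 1 := by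
    rw [hr_def, hu_def, div_mul_div_comm, mul_comm R t, div_self (mul_pos ht0 hR).ne']
  -- the summand
  set f : ℕ → ℝ → Fin N → Fin N → ℂ := fun n θ l j =>
    ((u : ℂ))^(n+1) * (cexpI (-(n+1)) θ * S (n+1) l j
      + cexpI (n+1) θ * (starRingEnd ℂ) (S (n+1) j l)) with hf_def
  -- entrywise bound
  have hfb : ∀ (n : ℕ) (θ : ℝ) (l j : Fin N),
      ‖f n θ l j‖ ≤ 2 * C * t^(n+1) := by
    intro n θ l j
    have hb1 : ‖S (n+1) l j‖ ≤ C * R^(n+1) := hbound (n+1) (by omega) l j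
    have hb2 : ‖(starRingEnd ℂ) (S (n+1) j l)‖ ≤ C * R^(n+1) := by
      rw [RCLike.norm_conj]; exact hbound (n+1) (by omega) j l
    rw [hf_def]
    simp only [norm_mul, norm_pow]
    calc ‖((u:ℂ))‖^(n+1) * ‖cexpI (-(n+1)) θ * S (n+1) l j
          + cexpI (n+1) θ * (starRingEnd ℂ) (S (n+1) j l)‖
        ≤ u^(n+1) * (C * R^(n+1) + C * R^(n+1)) := by
          apply mul_le_mul
          · simp [Complex.norm_real, abs_of_pos hu0]
          · refine le_trans (norm_add_le _ _) ?_
            rw [norm_mul, norm_mul, cexpI_norm, cexpI_norm, one_mul, one_mul]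
            exact add_le_add hb1 hb2
          · positivity
          · positivity
      _ = 2 * C * t^(n+1) := by
          rw [← huR, mul_pow]; ring
  -- summability of the bound, and its value
  have hsb : Summable (fun n : ℕ => 2 * C * t^(n+1)) :=
    ((summable_geometric_of_lt_one ht0.le ht1).mul_left (2*C)).comp_injective
      Nat.succ_injective
  have hts : ∑' n : ℕ, 2 * C * t^(n+1) = (N : ℝ)⁻¹ := by
    have h1 : (fun n : ℕ => 2 * C * t^(n+1)) = fun n : ℕ => (2*C*t) * t^n := by
      funext n; ring
    rw [h1, tsum_mul_left, tsum_geometric_of_lt_one ht0.le ht1]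
    have hN0 : (0:ℝ) < N := by exact_mod_cast hN
    have h2 : 1 - t = (2*C*N) * t := by
      rw [ht_def]; field_simp [hD_def]; linarith
    rw [h2]
    rw [mul_inv]
    field_simp
  have hNinv_le : (N : ℝ)⁻¹ ≤ 1 := by
    have hN1 : (1:ℝ) ≤ N := by exact_mod_cast hN
    rw [inv_le_one_iff₀]; right; exact hN1
  -- summability of the series
  have hfsum : ∀ (θ : ℝ) (l j : Fin N), Summable fun n => f n θ l j := by
    intro θ l j
    exact Summable.of_norm_bounded hsb (fun n => hfb n θ l j)
  -- bound on the tail sum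
  have htail : ∀ (θ : ℝ) (l j : Fin N),
      ‖∑' n, f n θ l j‖ ≤ (N : ℝ)⁻¹ := by
    intro θ l j
    have := tsum_of_norm_bounded (hts ▸ hsb.hasSum) (fun n => hfb n θ l j)
    exact this
  -- the weight
  set W : ℝ → Matrix (Fin N) (Fin N) ℂ := fun θ => Matrix.of fun l j =>
    (((2*Real.pi)⁻¹ : ℝ) : ℂ) * ((1 : Matrix (Fin N) (Fin N) ℂ) l j + ∑' n, f n θ l j)
    with hW_def
  have hW_apply : ∀ (θ : ℝ) (l j : Fin N), W θ l j =
      (((2*Real.pi)⁻¹ : ℝ) : ℂ) * ((1 : Matrix (Fin N) (Fin N) ℂ) l j + ∑' n, f n θ l j) := by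
    intro θ l j; rfl
  -- continuity
  have hWcont : ∀ l j : Fin N, Continuous fun θ : ℝ => W θ l j := by
    intro l j
    simp only [hW_apply]
    apply Continuous.mul continuous_const
    apply Continuous.add continuous_const
    refine continuous_tsum (fun n => ?_) hsb (fun n θ => hfb n θ l j)
    apply Continuous.mul continuous_const
    apply Continuous.add
    · exact ((cexpI_continuous _)).mul continuous_const
    · exact ((cexpI_continuous _)).mul continuous_const
  refine ⟨r, W, hr0, ?_, ⟨1, ?_⟩, ?_, ?_⟩
  · -- measurability
    intro l j
    exact (hWcont l j).measurable
  · -- boundedness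
    intro θ l j
    rw [hW_apply, norm_mul]
    have h1 : ‖(1 : Matrix (Fin N) (Fin N) ℂ) l j‖ ≤ 1 := by
      rw [Matrix.one_apply]
      split_ifs <;> simp
    have h2 : ‖(1 : Matrix (Fin N) (Fin N) ℂ) l j + ∑' n, f n θ l j‖ ≤ 2 := by
      refine le_trans (norm_add_le _ _) ?_
      have := htail θ l j
      linarith [hNinv_le]
    have hπ : (2:ℝ) ≤ 2*Real.pi := by nlinarith [Real.pi_gt_three]
    have h3 : ‖(((2*Real.pi)⁻¹ : ℝ) : ℂ)‖ ≤ 1/2 := by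
      rw [Complex.norm_real, Real.norm_eq_abs, abs_of_pos (by positivity)]
      rw [inv_le_comm₀ (by positivity) (by norm_num)]
      linarith
    calc ‖(((2*Real.pi)⁻¹ : ℝ) : ℂ)‖ *
          ‖(1 : Matrix (Fin N) (Fin N) ℂ) l j + ∑' n, f n θ l j‖
        ≤ (1/2) * 2 := by
          apply mul_le_mul h3 h2 (by positivity) (by norm_num)
      _ ≤ 1 := by norm_num
  · -- positive semidefiniteness
    intro θ
    set c : ℂ := (((2*Real.pi)⁻¹ : ℝ) : ℂ) with hc_def
    have hconj_f : ∀ (n : ℕ) (l j : Fin N), (starRingEnd ℂ) (f n θ j l) = f n θ l j := by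
      intro n l j
      rw [hf_def]
      simp only [map_mul, map_pow, map_add, Complex.conj_ofReal, cexpI_conj, neg_neg,
        Complex.conj_conj]
      ring
    refine Matrix.posSemidef_iff_dotProduct_mulVec.mpr ⟨?_, ?_⟩
    · -- Hermitian
      rw [Matrix.IsHermitian]
      ext l j
      rw [Matrix.conjTranspose_apply, hW_apply, hW_apply]
      show (starRingEnd ℂ) (c * ((1 : Matrix (Fin N) (Fin N) ℂ) j l + ∑' n, f n θ j l)) = _
      rw [map_mul, map_add]
      have h1 : (starRingEnd ℂ) c = c := Complex.conj_ofReal _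
      have h2 : (starRingEnd ℂ) ((1 : Matrix (Fin N) (Fin N) ℂ) j l)
          = (1 : Matrix (Fin N) (Fin N) ℂ) l j := by
        rw [Matrix.one_apply, Matrix.one_apply]
        split_ifs with ha hb hb
        · simp
        · exact absurd ha.symm hb
        · exact absurd hb.symm ha
        · simp
      have h3 : (starRingEnd ℂ) (∑' n, f n θ j l) = ∑' n, f n θ l j := by
        rw [show (starRingEnd ℂ) (∑' n, f n θ j l) = star (∑' n, f n θ j l) from rfl,
          tsum_star]
        exact tsum_congr fun n => hconj_f n l j
      rw [h1, h2, h3]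
    · -- nonnegativity of the quadratic form
      intro x
      set V : ℝ := ∑ l, Complex.normSq (x l) with hV_def
      have hV0 : 0 ≤ V := Finset.sum_nonneg fun l _ => Complex.normSq_nonneg _
      set z : ℕ → ℂ := fun m => ∑ l, ∑ j, (starRingEnd ℂ) (x l) * S m l j * x j with hz_def
      have hzb : ∀ m : ℕ, 1 ≤ m → ‖z m‖ ≤ C * R^m * (N * V) := by
        intro m hm
        have hstep : ‖z m‖ ≤ ∑ l, ∑ j, ‖x l‖ * (C * R^m) * ‖x j‖ := by
          refine le_trans (norm_sum_le _ _) (Finset.sum_le_sum fun l _ => ?_)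
          refine le_trans (norm_sum_le _ _) (Finset.sum_le_sum fun j _ => ?_)
          rw [norm_mul, norm_mul, RCLike.norm_conj]
          have hSb : ‖S m l j‖ ≤ C * R^m := hbound m hm l j
          have hxl : (0:ℝ) ≤ ‖x l‖ := norm_nonneg _
          have hxj : (0:ℝ) ≤ ‖x j‖ := norm_nonneg _
          exact mul_le_mul_of_nonneg_right (mul_le_mul_of_nonneg_left hSb hxl) hxj
        have hsq : (∑ l, ‖x l‖)^2 ≤ (N : ℝ) * V := by
          have := sq_sum_le_card_mul_sum_sq (s := (Finset.univ : Finset (Fin N)))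
            (f := fun l => ‖x l‖)
          simp only [Finset.card_univ, Fintype.card_fin] at this
          refine le_trans this ?_
          rw [hV_def]
          apply mul_le_mul_of_nonneg_left _ (by positivity)
          apply le_of_eq
          refine Finset.sum_congr rfl fun l _ => ?_
          rw [← Complex.sq_norm]
        calc ‖z m‖ ≤ ∑ l, ∑ j, ‖x l‖ * (C * R^m) * ‖x j‖ := hstep
          _ = (C * R^m) * ((∑ l, ‖x l‖) * (∑ j, ‖x j‖)) := by
              rw [Finset.sum_mul_sum]
              rw [Finset.mul_sum]
              refine Finset.sum_congr rfl fun l _ => ?_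
              rw [Finset.mul_sum]
              refine Finset.sum_congr rfl fun j _ => ?_
              ring
          _ = (C * R^m) * (∑ l, ‖x l‖)^2 := by ring
          _ ≤ (C * R^m) * ((N:ℝ) * V) := by
              apply mul_le_mul_of_nonneg_left hsq (by positivity)
          _ = C * R^m * (N * V) := by ring
      set β : ℕ → ℂ := fun n => (u:ℂ)^(n+1) * cexpI (-(n+1)) θ * z (n+1) with hβ_def
      have hβb : ∀ n : ℕ, ‖2 * (β n).re‖ ≤ (2*C*t^(n+1)) * ((N:ℝ) * V) := by
        intro n
        rw [Real.norm_eq_abs, abs_mul]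
        have h1 : |(β n).re| ≤ ‖β n‖ := Complex.abs_re_le_norm _
        have h2 : ‖β n‖ ≤ C * t^(n+1) * (N * V) := by
          rw [hβ_def]
          simp only [norm_mul, norm_pow, cexpI_norm, mul_one]
          rw [Complex.norm_real, Real.norm_eq_abs, abs_of_pos hu0]
          calc u^(n+1) * ‖z (n+1)‖ ≤ u^(n+1) * (C * R^(n+1) * (N * V)) := by
                apply mul_le_mul_of_nonneg_left (hzb (n+1) (by omega)) (by positivity)
            _ = C * (u*R)^(n+1) * (N * V) := by rw [mul_pow]; ring
            _ = C * t^(n+1) * (N * V) := by rw [huR]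
        calc |(2:ℝ)| * |(β n).re| ≤ 2 * (C * t^(n+1) * (N*V)) := by
              rw [abs_two]
              apply mul_le_mul_of_nonneg_left (le_trans h1 h2) (by norm_num)
          _ = (2*C*t^(n+1)) * ((N:ℝ) * V) := by ring
      have hsumβ : Summable fun n : ℕ => 2 * (β n).re :=
        Summable.of_norm_bounded (hsb.mul_right ((N:ℝ)*V)) hβb
      set sβ : ℝ := ∑' n, 2 * (β n).re with hsβ_def
      have hsV : |sβ| ≤ V := by
        have h1 : ‖sβ‖ ≤ (N:ℝ)⁻¹ * ((N:ℝ)*V) := by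
          refine tsum_of_norm_bounded ?_ hβb
          have := (hts ▸ hsb.hasSum).mul_right ((N:ℝ)*V)
          exact this
        have hN0 : ((N:ℝ)) ≠ 0 := by positivity
        rw [Real.norm_eq_abs] at h1
        calc |sβ| ≤ (N:ℝ)⁻¹ * ((N:ℝ)*V) := h1
          _ = V := by field_simp
      -- expansion of the quadratic form
      have hsum1 : ∀ l j : Fin N,
          Summable fun n => c * ((starRingEnd ℂ) (x l) * f n θ l j * x j) :=
        fun l j => ((((hfsum θ l j).mul_left (c * (starRingEnd ℂ) (x l))).mul_right
          (x j)).congr (fun n => by ring))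
      have hb : ∀ l j : Fin N, (starRingEnd ℂ) (x l) * (W θ l j * x j)
          = c * ((starRingEnd ℂ) (x l) * (1 : Matrix (Fin N) (Fin N) ℂ) l j * x j)
            + ∑' n, c * ((starRingEnd ℂ) (x l) * f n θ l j * x j) := by
        intro l j
        have hthis : ∑' n, c * ((starRingEnd ℂ) (x l) * f n θ l j * x j)
            = c * (starRingEnd ℂ) (x l) * (∑' n, f n θ l j) * x j := by
          rw [show (fun n => c * ((starRingEnd ℂ) (x l) * f n θ l j * x j))
            = fun n => (c * (starRingEnd ℂ) (x l)) * f n θ l j * x j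
            from funext fun n => by ring]
          rw [tsum_mul_right, tsum_mul_left]
        rw [hW_apply, hthis]
        ring
      have ha : dotProduct (star x) (Matrix.mulVec (W θ) x)
          = ∑ l, ∑ j, (starRingEnd ℂ) (x l) * (W θ l j * x j) := by
        rw [dotProduct]
        refine Finset.sum_congr rfl fun l _ => ?_
        rw [Matrix.mulVec, dotProduct, Finset.mul_sum]
        exact Finset.sum_congr rfl fun j _ => rfl
      have hone : ∑ l, ∑ j, c * ((starRingEnd ℂ) (x l)
          * (1 : Matrix (Fin N) (Fin N) ℂ) l j * x j) = c * ((V:ℝ):ℂ) := by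
        have hrow : ∀ l : Fin N, ∑ j, c * ((starRingEnd ℂ) (x l)
            * (1 : Matrix (Fin N) (Fin N) ℂ) l j * x j)
            = c * ((Complex.normSq (x l) : ℝ) : ℂ) := by
          intro l
          rw [Finset.sum_eq_single l]
          · rw [Matrix.one_apply_eq, mul_one, Complex.normSq_eq_conj_mul_self]
          · intro b _ hbl
            rw [Matrix.one_apply_ne (Ne.symm hbl)]
            ring
          · intro h; exact absurd (Finset.mem_univ l) h
        rw [Finset.sum_congr rfl (fun l _ => hrow l), ← Finset.mul_sum, hV_def]
        congr 1
        rw [Complex.ofReal_sum]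
      have hzc : ∀ m : ℕ, (starRingEnd ℂ) (z m)
          = ∑ l, ∑ j, (starRingEnd ℂ) (x l) * (starRingEnd ℂ) (S m j l) * x j := by
        intro m
        rw [hz_def]
        simp only [map_sum, map_mul, Complex.conj_conj]
        rw [Finset.sum_comm]
        refine Finset.sum_congr rfl fun l _ => Finset.sum_congr rfl fun j _ => ?_
        ring
      have hQn : ∀ n : ℕ, ∑ l, ∑ j, c * ((starRingEnd ℂ) (x l) * f n θ l j * x j)
          = c * (β n + (starRingEnd ℂ) (β n)) := by
        intro n
        have hcβ : (starRingEnd ℂ) (β n)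
            = (u:ℂ)^(n+1) * cexpI (n+1) θ * (starRingEnd ℂ) (z (n+1)) := by
          rw [hβ_def]
          simp only [map_mul, map_pow, Complex.conj_ofReal, cexpI_conj, neg_neg]
        have step1 : ∑ l, ∑ j, (starRingEnd ℂ) (x l) * f n θ l j * x j
            = β n + (starRingEnd ℂ) (β n) := by
          have e1 : ∑ l, ∑ j, (starRingEnd ℂ) (x l) * f n θ l j * x j
              = ∑ l, ∑ j, ((u:ℂ)^(n+1) * cexpI (-(n+1)) θ
                  * ((starRingEnd ℂ) (x l) * S (n+1) l j * x j)
                + (u:ℂ)^(n+1) * cexpI (n+1) θ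
                  * ((starRingEnd ℂ) (x l) * (starRingEnd ℂ) (S (n+1) j l) * x j)) := by
            refine Finset.sum_congr rfl fun l _ => Finset.sum_congr rfl fun j _ => ?_
            rw [hf_def]
            ring
          rw [e1]
          simp only [Finset.sum_add_distrib, ← Finset.mul_sum]
          rw [hcβ, hzc]
          try simp only [hβ_def, hz_def]
          try rfl
        simp only [← Finset.mul_sum]
        rw [step1]
      have hsum2 : ∀ l : Fin N,
          Summable fun n => ∑ j, c * ((starRingEnd ℂ) (x l) * f n θ l j * x j) :=
        fun l => summable_sum fun j _ => hsum1 l j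
      have hswap : ∑ l, ∑ j, ∑' n, c * ((starRingEnd ℂ) (x l) * f n θ l j * x j)
          = ∑' n, ∑ l, ∑ j, c * ((starRingEnd ℂ) (x l) * f n θ l j * x j) := by
        calc ∑ l, ∑ j, ∑' n, c * ((starRingEnd ℂ) (x l) * f n θ l j * x j)
            = ∑ l, ∑' n, ∑ j, c * ((starRingEnd ℂ) (x l) * f n θ l j * x j) :=
              Finset.sum_congr rfl fun l _ => (Summable.tsum_finsetSum (fun j _ => hsum1 l j)).symm
          _ = ∑' n, ∑ l, ∑ j, c * ((starRingEnd ℂ) (x l) * f n θ l j * x j) :=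
              (Summable.tsum_finsetSum (fun l _ => hsum2 l)).symm
      have hQn2 : ∀ n : ℕ, ∑ l, ∑ j, c * ((starRingEnd ℂ) (x l) * f n θ l j * x j)
          = c * ((2 * (β n).re : ℝ) : ℂ) := by
        intro n
        rw [hQn n, Complex.add_conj]
      -- put it together
      have hQ : dotProduct (star x) (Matrix.mulVec (W θ) x)
          = (((2*Real.pi)⁻¹ * (V + sβ) : ℝ) : ℂ) := by
        rw [ha]
        rw [Finset.sum_congr rfl (fun l _ => Finset.sum_congr rfl fun j _ => hb l j)]
        simp only [Finset.sum_add_distrib]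
        rw [hone, hswap, tsum_congr hQn2, tsum_mul_left, ← Complex.ofReal_tsum,
          ← hsβ_def, hc_def]
        push_cast
        ring
      show (0:ℂ) ≤ dotProduct (star x) (Matrix.mulVec (W θ) x)
      rw [hQ, Complex.zero_le_real]
      have h2 : 0 ≤ V + sβ := by
        have := neg_abs_le sβ
        linarith
      positivity
  · -- moments
    intro k l j
    have hπ0 : (0:ℝ) < 2*Real.pi := by positivity
    have hGk : ∀ θ : ℝ, ((r:ℂ) * Complex.exp ((θ:ℂ) * Complex.I))^k
        = (r:ℂ)^k * cexpI (k:ℤ) θ := by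
      intro θ
      rw [mul_pow, cexpI]
      congr 1
      rw [← Complex.exp_nat_mul]
      congr 1
      push_cast
      ring
    set c : ℂ := (((2*Real.pi)⁻¹ : ℝ) : ℂ) with hc_def
    set g : ℕ → ℝ → ℂ := fun n θ => (r:ℂ)^k * cexpI (k:ℤ) θ * f n θ l j with hg_def
    have hTcont : Continuous fun θ : ℝ => ∑' n, f n θ l j := by
      refine continuous_tsum (fun n => ?_) hsb (fun n θ => hfb n θ l j)
      apply Continuous.mul continuous_const
      exact ((cexpI_continuous _).mul continuous_const).add
        ((cexpI_continuous _).mul continuous_const)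
    have hgcont : Continuous fun θ : ℝ => ∑' n, g n θ := by
      have : (fun θ : ℝ => ∑' n, g n θ)
          = fun θ : ℝ => ((r:ℂ)^k * cexpI (k:ℤ) θ) * ∑' n, f n θ l j := by
        funext θ
        rw [← tsum_mul_left]
      rw [this]
      exact (continuous_const.mul (cexpI_continuous _)).mul hTcont
    have hint : (fun θ : ℝ => ((r:ℂ) * Complex.exp ((θ:ℂ) * Complex.I))^k * W θ l j)
        = fun θ : ℝ => c * (((r:ℂ)^k * ((1 : Matrix (Fin N) (Fin N) ℂ) l j)) * cexpI (k:ℤ) θ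
            + ∑' n, g n θ) := by
      funext θ
      rw [hGk θ, hW_apply]
      have : ∑' n, g n θ = ((r:ℂ)^k * cexpI (k:ℤ) θ) * ∑' n, f n θ l j := by
        rw [← tsum_mul_left]
      rw [this]
      ring
    rw [hint]
    rw [intervalIntegral.integral_const_mul]
    have hI1 : ∫ θ in (0:ℝ)..(2*Real.pi),
        ((r:ℂ)^k * ((1 : Matrix (Fin N) (Fin N) ℂ) l j)) * cexpI (k:ℤ) θ
        = ((r:ℂ)^k * ((1 : Matrix (Fin N) (Fin N) ℂ) l j))
            * (if (k:ℤ) = 0 then (2*Real.pi : ℂ) else 0) := by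
      rw [intervalIntegral.integral_const_mul, cexpI_integral]
    have hbg : ∀ (n : ℕ) (θ : ℝ), ‖g n θ‖ ≤ r^k * (2*C*t^(n+1)) := by
      intro n θ
      rw [hg_def]
      simp only [norm_mul, norm_pow, cexpI_norm, mul_one]
      rw [Complex.norm_real, Real.norm_eq_abs, abs_of_pos hr0]
      exact mul_le_mul_of_nonneg_left (hfb n θ l j) (by positivity)
    have hIsum : ∫ θ in (0:ℝ)..(2*Real.pi), ∑' n, g n θ
        = ∑' n, ∫ θ in (0:ℝ)..(2*Real.pi), g n θ := by
      rw [intervalIntegral.integral_of_le hπ0.le]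
      have hswap : ∫ θ in Set.Ioc (0:ℝ) (2*Real.pi), ∑' n, g n θ
          = ∑' n, ∫ θ in Set.Ioc (0:ℝ) (2*Real.pi), g n θ := by
        apply MeasureTheory.integral_tsum
        · intro n
          apply Continuous.aestronglyMeasurable
          apply Continuous.mul (continuous_const.mul (cexpI_continuous _))
          exact Continuous.mul continuous_const
            (((cexpI_continuous _).mul continuous_const).add
              ((cexpI_continuous _).mul continuous_const))
        · have hb1 : ∀ n : ℕ, ∫⁻ θ in Set.Ioc (0:ℝ) (2*Real.pi), ‖g n θ‖₊
              ≤ ENNReal.ofReal (r^k * (2*C*t^(n+1))) * ENNReal.ofReal (2*Real.pi) := by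
            intro n
            calc ∫⁻ θ in Set.Ioc (0:ℝ) (2*Real.pi), (‖g n θ‖₊ : ENNReal)
                ≤ ∫⁻ _ in Set.Ioc (0:ℝ) (2*Real.pi),
                    ENNReal.ofReal (r^k * (2*C*t^(n+1))) := by
                  apply MeasureTheory.lintegral_mono
                  intro θ
                  show (‖g n θ‖₊ : ENNReal) ≤ ENNReal.ofReal (r^k * (2*C*t^(n+1)))
                  rw [← enorm_eq_nnnorm, ← ofReal_norm]
                  exact ENNReal.ofReal_le_ofReal (hbg n θ)
              _ = ENNReal.ofReal (r^k * (2*C*t^(n+1))) * ENNReal.ofReal (2*Real.pi) := by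
                  rw [MeasureTheory.lintegral_const, MeasureTheory.Measure.restrict_apply
                    MeasurableSet.univ, Set.univ_inter, Real.volume_Ioc]
                  norm_num
          refine ne_top_of_le_ne_top ?_ (ENNReal.tsum_le_tsum hb1)
          rw [ENNReal.tsum_mul_right]
          apply ENNReal.mul_ne_top ?_ ENNReal.ofReal_ne_top
          rw [← ENNReal.ofReal_tsum_of_nonneg (fun n => by positivity)
            (hsb.mul_left (r^k))]
          exact ENNReal.ofReal_ne_top
      rw [hswap]
      congr 1
      funext n
      rw [intervalIntegral.integral_of_le hπ0.le]
    have hgint : ∀ n : ℕ, ∫ θ in (0:ℝ)..(2*Real.pi), g n θ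
        = if n + 1 = k then (2*Real.pi : ℂ) * S k l j else 0 := by
      intro n
      have hsplit : (fun θ : ℝ => g n θ)
          = fun θ : ℝ => ((r:ℂ)^k * (u:ℂ)^(n+1) * S (n+1) l j) * cexpI ((k:ℤ) - (n+1)) θ
              + ((r:ℂ)^k * (u:ℂ)^(n+1) * (starRingEnd ℂ) (S (n+1) j l))
                  * cexpI ((k:ℤ) + (n+1)) θ := by
        funext θ
        rw [hg_def, hf_def]
        simp only []
        have e1 : cexpI (k:ℤ) θ * cexpI (-(n+1)) θ = cexpI ((k:ℤ) - (n+1)) θ := by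
          rw [cexpI_mul, sub_eq_add_neg]
        have e2 : cexpI (k:ℤ) θ * cexpI (n+1) θ = cexpI ((k:ℤ) + (n+1)) θ := by
          rw [cexpI_mul]
        rw [← e1, ← e2]
        ring
      rw [hsplit, intervalIntegral.integral_add
          (Continuous.intervalIntegrable (u := fun θ => _ * cexpI _ θ) (continuous_const.mul (cexpI_continuous _)) _ _)
          (Continuous.intervalIntegrable (u := fun θ => _ * cexpI _ θ) (continuous_const.mul (cexpI_continuous _)) _ _),
        intervalIntegral.integral_const_mul,
        intervalIntegral.integral_const_mul, cexpI_integral, cexpI_integral]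
      have h2 : ¬((k:ℤ) + (n+1) = 0) := by omega
      rw [if_neg h2, mul_zero, add_zero]
      by_cases hk : n + 1 = k
      · have hk' : (k:ℤ) - (n+1) = 0 := by omega
        have hrk : (r:ℂ)^k * (u:ℂ)^(n+1) = 1 := by
          rw [← hk, ← mul_pow]
          have : (r:ℂ) * (u:ℂ) = 1 := by
            rw [← Complex.ofReal_mul, hru, Complex.ofReal_one]
          rw [this, one_pow]
        rw [if_pos hk', if_pos hk, hrk, one_mul, ← hk]
        ring
      · have hk' : ¬((k:ℤ) - (n+1) = 0) := by omega
        rw [if_neg hk', if_neg hk, mul_zero]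
    rw [intervalIntegral.integral_add
      (Continuous.intervalIntegrable (u := fun θ => _ * cexpI _ θ) (continuous_const.mul (cexpI_continuous _)) _ _)
      (hgcont.intervalIntegrable _ _), hI1, hIsum]
    have hc2π : c * ((2*Real.pi:ℂ)) = 1 := by
      rw [hc_def, show ((2*Real.pi:ℂ)) = (((2*Real.pi:ℝ)):ℂ) by push_cast; ring,
        ← Complex.ofReal_mul, inv_mul_cancel₀ (ne_of_gt hπ0), Complex.ofReal_one]
    rcases Nat.eq_zero_or_pos k with hk0 | hk1
    · have hall : ∀ n : ℕ, (if n + 1 = k then (2*Real.pi : ℂ) * S k l j else 0) = 0 := by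
        intro n; rw [if_neg (by omega)]
      have hite : ((k:ℤ) = 0) := by omega
      rw [tsum_congr (fun n => (hgint n).trans (hall n)), tsum_zero, add_zero,
        if_pos hite, hk0, pow_zero, one_mul, hS0]
      rw [mul_comm ((1 : Matrix (Fin N) (Fin N) ℂ) l j), ← mul_assoc, hc2π, one_mul]
    · have hne : ¬((k:ℤ) = 0) := by omega
      rw [if_neg hne, mul_zero, zero_add]
      have htsum : ∑' n, (if n + 1 = k then (2*Real.pi : ℂ) * S k l j else 0)
          = (2*Real.pi : ℂ) * S k l j := by
        rw [tsum_eq_single (k-1)]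
        · rw [if_pos (by omega)]
        · intro n hn
          rw [if_neg (by omega)]
      rw [tsum_congr hgint, htsum, ← mul_assoc, hc2π, one_mul]
end

section
/- Let N ≥ 1 and d ≥ 1 be integers, and let S_0 = E_N (the N×N identity matrix) and S_1, …, S_d ∈ ℂ^{N×N} be arbitrary complex matrices. Then there exist r > 0 and a measurable bounded function W : [0,2π] → ℂ^{N×N}, with W(θ) Hermitian positive semidefinite for every θ, such that ∫₀^{2π} (r e^{iθ})^k · W(θ) dθ = S_k for every k ∈ {0,1,…,d}. (In particular the truncated matrix moment problem ∫_ℂ z^k dM(z) = S_k, 0 ≤ k ≤ d, has a positive-matrix-valued solution supported on a circle centered at the origin.) -/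
open scoped ComplexOrder
open Complex Matrix Finset

lemma key_integral (n : ℤ) : ∫ θ in (0:ℝ)..(2*Real.pi), Complex.exp (n * θ * Complex.I) =
    if n = 0 then (2*Real.pi : ℂ) else 0 := by
  rcases eq_or_ne n 0 with h|h
  · simp [h, Complex.ofReal_mul]
  · have hc : (n : ℂ) * Complex.I ≠ 0 := by
      simp [Complex.I_ne_zero, Int.cast_ne_zero, h]
    have h2 := integral_exp_mul_complex (a := 0) (b := 2*Real.pi) hc
    have e1 : ∀ θ : ℝ, ((n:ℂ) * Complex.I) * θ = n * θ * Complex.I := by intro θ; ring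
    simp only [e1] at h2
    rw [h2, if_neg h]
    have h3 : Complex.exp ((n:ℂ) * ((2*Real.pi:ℝ):ℂ) * Complex.I) = 1 := by
      rw [show (n:ℂ) * ((2*Real.pi:ℝ):ℂ) * Complex.I = n * (2*Real.pi*Complex.I) by push_cast; ring]
      exact Complex.exp_int_mul_two_pi_mul_I n
    rw [h3]; simp

lemma key_integral' (n : ℤ) (c : ℂ) :
    ∫ θ in (0:ℝ)..(2*Real.pi), Complex.exp (n * θ * Complex.I) * c =
    (if n = 0 then (2*Real.pi : ℂ) else 0) * c := by
  rw [intervalIntegral.integral_mul_const, key_integral]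

lemma contE (c z : ℂ) : Continuous fun θ : ℝ => Complex.exp (c * θ * Complex.I) * z :=
  (Complex.continuous_exp.comp
    (((continuous_const.mul Complex.continuous_ofReal).mul continuous_const))).mul
    continuous_const

lemma psd_smul' {n : ℕ} (c : ℝ) (hc : 0 ≤ c) {M : Matrix (Fin n) (Fin n) ℂ}
    (h : M.PosSemidef) : (c • M).PosSemidef := by
  rw [Matrix.posSemidef_iff_dotProduct_mulVec] at h ⊢
  constructor
  · unfold Matrix.IsHermitian
    rw [conjTranspose_smul, h.1.eq, star_trivial]
  · intro x
    rw [smul_mulVec, dotProduct_smul]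
    have h2 := h.2 x
    have hcc : (0:ℂ) ≤ (c:ℂ) := by rw [Complex.le_def]; simp [hc]
    calc (0:ℂ) = (c:ℂ) * 0 := by ring
    _ ≤ (c:ℂ) * (star x ⬝ᵥ M *ᵥ x) := mul_le_mul_of_nonneg_left h2 hcc
    _ = c • (star x ⬝ᵥ M *ᵥ x) := by rw [Complex.real_smul]

lemma one_add_psd {n : ℕ} (hn : 0 < n) (A : Matrix (Fin n) (Fin n) ℂ)
    (hA : A.IsHermitian) (hb : ∀ l j, ‖A l j‖ ≤ 1/n) :
    (1 + A).PosSemidef := by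
  have hherm : (1 + A).IsHermitian := Matrix.IsHermitian.add Matrix.isHermitian_one hA
  refine Matrix.PosSemidef.of_dotProduct_mulVec_nonneg hherm fun x => ?_
  set z := star x ⬝ᵥ (1 + A) *ᵥ x with hz
  have hconj : (starRingEnd ℂ) z = z := by
    rw [hz, starRingEnd_apply, ← Matrix.star_dotProduct, Matrix.star_mulVec,
      ← Matrix.dotProduct_mulVec, hherm.eq]
  have him : z.im = 0 := Complex.conj_eq_iff_im.mp hconj
  have hsplit : z = star x ⬝ᵥ x + star x ⬝ᵥ A *ᵥ x := by
    rw [hz, Matrix.add_mulVec, Matrix.one_mulVec, dotProduct_add]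
  set f : Fin n → ℝ := fun i => ‖x i‖ with hf
  have h1 : (star x ⬝ᵥ x).re = ∑ i, f i ^ 2 := by
    simp only [dotProduct, Pi.star_apply, Complex.re_sum]
    refine Finset.sum_congr rfl fun i _ => ?_
    simp [hf, ← Complex.normSq_eq_norm_sq, Complex.normSq_apply, Complex.mul_re]
  set S2 := star x ⬝ᵥ A *ᵥ x with hS2
  have habs : ‖S2‖ ≤ ∑ i, f i ^ 2 := by
    have step1 : ‖S2‖ ≤ ∑ l, ∑ j, f l * (1/n) * f j := by
      rw [hS2]
      simp only [dotProduct, Matrix.mulVec, dotProduct, Pi.star_apply, Finset.mul_sum]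
      refine (norm_sum_le _ _).trans (Finset.sum_le_sum fun l _ => ?_)
      refine (norm_sum_le _ _).trans (Finset.sum_le_sum fun j _ => ?_)
      rw [norm_mul, norm_mul]
      have hfl : ‖star (x l)‖ = f l := Complex.norm_conj (x l)
      rw [hfl]
      calc f l * (‖A l j‖ * f j) ≤ f l * ((1/n) * f j) := by
            refine mul_le_mul_of_nonneg_left ?_ (norm_nonneg _)
            exact mul_le_mul_of_nonneg_right (hb l j) (norm_nonneg _)
        _ = f l * (1/n) * f j := by ring
    refine step1.trans ?_
    have e1 : ∑ l, ∑ j, f l * (1/(n:ℝ)) * f j = (1/n) * ((∑ i, f i) * (∑ i, f i)) := by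
      rw [Finset.sum_mul_sum, Finset.mul_sum]
      refine Finset.sum_congr rfl fun l _ => ?_
      rw [Finset.mul_sum]
      exact Finset.sum_congr rfl fun j _ => by ring
    rw [e1, ← sq]
    have e2 : (∑ i, f i) ^ 2 ≤ (n:ℝ) * ∑ i, f i ^ 2 := by
      have := sq_sum_le_card_mul_sum_sq (s := Finset.univ) (f := f)
      simpa using this
    have hn' : (0:ℝ) < n := by exact_mod_cast hn
    calc (1/(n:ℝ)) * (∑ i, f i)^2 ≤ (1/n) * ((n:ℝ) * ∑ i, f i ^2) :=
          mul_le_mul_of_nonneg_left e2 (by positivity)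
      _ = ∑ i, f i ^ 2 := by field_simp
  have hre : 0 ≤ z.re := by
    rw [hsplit, Complex.add_re, h1]
    have h3 : -(‖S2‖) ≤ S2.re := (abs_le.mp (Complex.abs_re_le_norm S2)).1
    linarith
  rw [Complex.le_def]
  simp [him, hre]



lemma key_integral_sub (a b : ℤ) (c : ℂ) :
    ∫ θ in (0:ℝ)..(2*Real.pi), Complex.exp (((a:ℂ) - (b:ℂ)) * θ * Complex.I) * c =
    (if a - b = 0 then (2*Real.pi : ℂ) else 0) * c := by
  have h : (((a - b : ℤ)):ℂ) = (a:ℂ) - (b:ℂ) := by push_cast; ring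
  rw [← h, key_integral']

lemma key_integral_add (a b : ℤ) (c : ℂ) :
    ∫ θ in (0:ℝ)..(2*Real.pi), Complex.exp (((a:ℂ) + (b:ℂ)) * θ * Complex.I) * c =
    (if a + b = 0 then (2*Real.pi : ℂ) else 0) * c := by
  have h : (((a + b : ℤ)):ℂ) = (a:ℂ) + (b:ℂ) := by push_cast; ring
  rw [← h, key_integral']

lemma moment_calc (d k : ℕ) (hkd : k ≤ d) (c0 : ℂ) (c1 c2 : ℕ → ℂ) :
    (∫ θ in (0:ℝ)..(2*Real.pi), (Complex.exp (((k:ℤ):ℂ) * θ * Complex.I) * c0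
      + ∑ m ∈ Finset.Icc 1 d, (Complex.exp ((((k:ℤ)-(m:ℤ)):ℂ) * θ * Complex.I) * c1 m
        + Complex.exp ((((k:ℤ)+(m:ℤ)):ℂ) * θ * Complex.I) * c2 m)))
    = if k = 0 then (2*Real.pi:ℂ) * c0 else (2*Real.pi:ℂ) * c1 k := by
  have hII : ∀ (n:ℤ) (c:ℂ), IntervalIntegrable (fun θ:ℝ => Complex.exp ((n:ℂ)*θ*Complex.I) * c)
      MeasureTheory.volume 0 (2*Real.pi) := fun n c => (contE _ _).intervalIntegrable _ _
  have hIsum : IntervalIntegrable (fun θ:ℝ => ∑ m ∈ Finset.Icc 1 d,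
      (Complex.exp ((((k:ℤ)-(m:ℤ)):ℂ) * θ * Complex.I) * c1 m
        + Complex.exp ((((k:ℤ)+(m:ℤ)):ℂ) * θ * Complex.I) * c2 m))
      MeasureTheory.volume 0 (2*Real.pi) := by
    exact (continuous_finset_sum _ (fun m _ => ((contE _ _).add (contE _ _)))).intervalIntegrable _ _
  rw [intervalIntegral.integral_add (hII _ _) hIsum,
    intervalIntegral.integral_finset_sum (f := fun (m:ℕ) (θ:ℝ) => Complex.exp ((((k:ℤ)-(m:ℤ)):ℂ) * θ * Complex.I) * c1 m
        + Complex.exp ((((k:ℤ)+(m:ℤ)):ℂ) * θ * Complex.I) * c2 m) (fun m _ =>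
      ((((contE _ _).add (contE _ _)).intervalIntegrable (0:ℝ) (2*Real.pi)) :
        IntervalIntegrable _ MeasureTheory.volume _ _)),
    key_integral']
  have hterm : ∀ m ∈ Finset.Icc 1 d,
      (∫ θ in (0:ℝ)..(2*Real.pi), (Complex.exp ((((k:ℤ)-(m:ℤ)):ℂ) * θ * Complex.I) * c1 m
        + Complex.exp ((((k:ℤ)+(m:ℤ)):ℂ) * θ * Complex.I) * c2 m))
      = (if (k:ℤ) - (m:ℤ) = 0 then (2*Real.pi:ℂ) else 0) * c1 m := by
    intro m hm
    rw [intervalIntegral.integral_add (((contE _ _).intervalIntegrable _ _ : IntervalIntegrable _ MeasureTheory.volume _ _)) ((contE _ _).intervalIntegrable _ _),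
      key_integral_sub, key_integral_add]
    have hne : ((k:ℤ) + (m:ℤ) ≠ 0) := by
      have := (Finset.mem_Icc.mp hm).1
      omega
    rw [if_neg hne, zero_mul, add_zero]
  rw [Finset.sum_congr rfl hterm]
  rcases Nat.eq_zero_or_pos k with hk0 | hk1
  · subst hk0
    have hz : ∀ m ∈ Finset.Icc 1 d,
        (if ((0:ℕ):ℤ) - (m:ℤ) = 0 then (2*Real.pi:ℂ) else 0) * c1 m = 0 := by
      intro m hm
      have : ((0:ℕ):ℤ) - (m:ℤ) ≠ 0 := by
        have := (Finset.mem_Icc.mp hm).1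
        omega
      rw [if_neg this, zero_mul]
    rw [Finset.sum_congr rfl hz, Finset.sum_const_zero, add_zero,
      if_pos (show ((0:ℕ):ℤ) = 0 by norm_num), if_pos rfl]
  · have hkz : ((k:ℤ) ≠ 0) := by omega
    rw [if_neg hkz, zero_mul, zero_add, if_neg (by omega : ¬ k = 0)]
    rw [Finset.sum_eq_single_of_mem k (Finset.mem_Icc.mpr ⟨hk1, hkd⟩)
      (fun m hm hne => by
        have : (k:ℤ) - (m:ℤ) ≠ 0 := by
          intro hc
          apply hne
          omega
        rw [if_neg this, zero_mul])]
    rw [if_pos (by omega)]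


set_option maxHeartbeats 4000000 in
/-- **Solvability of the truncated matrix moment problem on a circle.**
If `S 0` is the identity and `S 1, …, S d` are arbitrary complex `N × N` matrices, then there
exist a radius `r > 0` and a bounded measurable Hermitian positive semidefinite matrix weight
`W` on `[0, 2π]` with `∫₀^{2π} (r e^{iθ})^k • W(θ) dθ = S k` entrywise, for all `0 ≤ k ≤ d`. -/
theorem truncated_matrix_moment_problem_solvable
    (N d : ℕ) (hN : 1 ≤ N) (hd : 1 ≤ d)
    (S : ℕ → Matrix (Fin N) (Fin N) ℂ) (hS0 : S 0 = 1) :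
    ∃ (r : ℝ) (W : ℝ → Matrix (Fin N) (Fin N) ℂ),
      0 < r ∧
      (∀ l j : Fin N, Measurable fun θ : ℝ => W θ l j) ∧
      (∃ B : ℝ, ∀ (θ : ℝ) (l j : Fin N), ‖W θ l j‖ ≤ B) ∧
      (∀ θ : ℝ, (W θ).PosSemidef) ∧
      (∀ k : ℕ, k ≤ d → ∀ l j : Fin N,
        ∫ θ in (0:ℝ)..(2 * Real.pi),
          ((r : ℂ) * Complex.exp ((θ : ℂ) * Complex.I)) ^ k * W θ l j = S k l j) := by
  set C : ℝ := 1 + ∑ m ∈ Finset.Icc 1 d, ∑ l, ∑ j, 2 * ‖S m l j‖ with hC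
  have hC1 : 1 ≤ C := by
    rw [hC]
    have : (0:ℝ) ≤ ∑ m ∈ Finset.Icc 1 d, ∑ l, ∑ j, 2 * ‖S m l j‖ := by positivity
    linarith
  set r : ℝ := N * C with hr
  have hr1 : 1 ≤ r := by
    rw [hr]
    calc (1:ℝ) = 1 * 1 := by ring
    _ ≤ N * C := by
        apply mul_le_mul (by exact_mod_cast hN) hC1 zero_le_one (by positivity)
  have hr0 : 0 < r := lt_of_lt_of_le one_pos hr1
  set E : ℕ → ℝ → ℂ := fun m θ => Complex.exp ((m:ℂ) * θ * Complex.I) with hE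
  set A : ℝ → Matrix (Fin N) (Fin N) ℂ := fun θ => Matrix.of fun l j =>
    ∑ m ∈ Finset.Icc 1 d, ((r ^ m : ℝ) : ℂ)⁻¹ *
      ((starRingEnd ℂ) (E m θ) * S m l j + E m θ * (starRingEnd ℂ) (S m j l)) with hA
  -- basic facts
  have habsE : ∀ m θ, ‖E m θ‖ = 1 := by
    intro m θ
    rw [hE]
    simp [Complex.norm_exp]
  have hsingle : ∀ m (a b : Fin N),
      ‖S m a b‖ ≤ ∑ l, ∑ j, ‖S m l j‖ := by
    intro m a b
    calc ‖S m a b‖ ≤ ∑ j, ‖S m a j‖ :=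
          Finset.single_le_sum (fun i _ => norm_nonneg _) (Finset.mem_univ b)
    _ ≤ ∑ l, ∑ j, ‖S m l j‖ :=
          Finset.single_le_sum (f := fun l => ∑ j, ‖S m l j‖)
            (fun i _ => Finset.sum_nonneg fun _ _ => norm_nonneg _) (Finset.mem_univ a)
  have hbound : ∀ θ (l j : Fin N), ‖A θ l j‖ ≤ r⁻¹ * (C - 1) := by
    intro θ l j
    rw [hA]
    simp only [Matrix.of_apply]
    refine (norm_sum_le _ _).trans ?_
    have : ∀ m ∈ Finset.Icc 1 d, ‖((r ^ m : ℝ) : ℂ)⁻¹ *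
        ((starRingEnd ℂ) (E m θ) * S m l j + E m θ * (starRingEnd ℂ) (S m j l))‖
        ≤ r⁻¹ * (∑ l', ∑ j', 2 * ‖S m l' j'‖) := by
      intro m hm
      rw [norm_mul]
      have h1 : ‖((r ^ m : ℝ) : ℂ)⁻¹‖ = (r ^ m)⁻¹ := by
        rw [norm_inv, Complex.norm_real, Real.norm_eq_abs, abs_of_pos (by positivity)]
      rw [h1]
      have h2 : ‖(starRingEnd ℂ) (E m θ) * S m l j + E m θ * (starRingEnd ℂ) (S m j l)‖
          ≤ ‖S m l j‖ + ‖S m j l‖ := by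
        refine (norm_add_le _ _).trans ?_
        rw [norm_mul, norm_mul, Complex.norm_conj, Complex.norm_conj,
          habsE, one_mul, one_mul]
      have h3 : (r ^ m)⁻¹ ≤ r⁻¹ := by
        apply inv_anti₀ hr0
        exact le_self_pow₀ hr1 (Nat.one_le_iff_ne_zero.mp (Finset.mem_Icc.mp hm).1)
      have h4 : ‖S m l j‖ + ‖S m j l‖
          ≤ ∑ l', ∑ j', 2 * ‖S m l' j'‖ := by
        have := hsingle m l j
        have := hsingle m j l
        have e : ∑ l', ∑ j', 2 * ‖S m l' j'‖
            = 2 * ∑ l', ∑ j', ‖S m l' j'‖ := by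
          rw [Finset.mul_sum]
          exact Finset.sum_congr rfl fun l' _ => by rw [Finset.mul_sum]
        rw [e]
        linarith
      exact mul_le_mul h3 (h2.trans h4) (norm_nonneg _) (inv_nonneg.mpr hr0.le)
    refine (Finset.sum_le_sum this).trans ?_
    rw [← Finset.mul_sum, hC]
    simp
  have hbound' : ∀ θ (l j : Fin N), ‖A θ l j‖ ≤ 1 / N := by
    intro θ l j
    refine (hbound θ l j).trans ?_
    have hC0 : (0:ℝ) < C := lt_of_lt_of_le one_pos hC1
    calc r⁻¹ * (C - 1) ≤ r⁻¹ * C := by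
          apply mul_le_mul_of_nonneg_left (by linarith) (by positivity)
    _ = 1 / N := by
        rw [hr]
        field_simp
  have hAherm : ∀ θ, (A θ).IsHermitian := by
    intro θ
    unfold Matrix.IsHermitian
    ext i j
    rw [Matrix.conjTranspose_apply, hA]
    simp only [Matrix.of_apply, star_sum, star_add, star_mul', RCLike.star_def, map_inv₀,
      Complex.conj_ofReal, Complex.conj_conj]
    refine Finset.sum_congr rfl fun m _ => ?_
    ring
  clear_value C r E A
  refine ⟨r, fun θ => ((2 * Real.pi)⁻¹ : ℝ) • (1 + A θ), hr0, ?_, ?_, ?_, ?_⟩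
  · -- measurable
    intro l j
    apply Continuous.measurable
    simp only [Matrix.smul_apply, Matrix.add_apply]
    refine Continuous.fun_const_smul (g := fun θ : ℝ => (1 : Matrix (Fin N) (Fin N) ℂ) l j + A θ l j) ?_ _
    refine continuous_const.add ?_
    rw [hA]
    simp only [Matrix.of_apply, hE]
    refine continuous_finset_sum _ fun m _ => continuous_const.mul ?_
    refine Continuous.add ?_ ?_
    · refine Continuous.mul ?_ continuous_const
      exact Complex.continuous_conj.comp
        (Complex.continuous_exp.comp ((continuous_const.mul Complex.continuous_ofReal).mul continuous_const))
    · refine Continuous.mul ?_ continuous_const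
      exact Complex.continuous_exp.comp ((continuous_const.mul Complex.continuous_ofReal).mul continuous_const)
  · -- bounded
    refine ⟨(2*Real.pi)⁻¹ * C, fun θ l j => ?_⟩
    simp only [Matrix.smul_apply, Matrix.add_apply, Complex.real_smul, norm_mul,
      Complex.norm_real, Real.norm_eq_abs]
    have hpi : |(2*Real.pi)⁻¹| = (2*Real.pi)⁻¹ := abs_of_pos (by positivity)
    rw [hpi]
    refine mul_le_mul_of_nonneg_left ?_ (by positivity)
    refine (norm_add_le _ _).trans ?_
    have h1 : ‖(1 : Matrix (Fin N) (Fin N) ℂ) l j‖ ≤ 1 := by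
      by_cases h : l = j <;> simp [Matrix.one_apply, h]
    have h2 := (hbound θ l j).trans (by
      nlinarith [inv_le_one_of_one_le₀ hr1, sub_nonneg.mpr hC1] : r⁻¹ * (C - 1) ≤ C - 1)
    linarith
  · -- PosSemidef
    intro θ
    exact psd_smul' _ (by positivity) (one_add_psd (by omega) _ (hAherm θ) (fun l j => by
      simpa using hbound' θ l j))
  · -- moments
    intro k hk l j
    have hrC : (r:ℂ) ≠ 0 := by exact_mod_cast hr0.ne'
    have hconjE : ∀ (m:ℕ) (θ:ℝ), (starRingEnd ℂ) (Complex.exp ((m:ℂ)*θ*Complex.I))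
        = Complex.exp (-(m:ℂ)*θ*Complex.I) := by
      intro m θ
      rw [← Complex.exp_conj]
      congr 1
      simp [Complex.conj_ofReal]
    have hfun : ∀ θ : ℝ, ((r:ℂ) * Complex.exp ((θ:ℂ) * Complex.I)) ^ k *
        ((((2 * Real.pi)⁻¹ : ℝ)) • (1 + A θ)) l j
        = (((2 * Real.pi)⁻¹ : ℝ) : ℂ) *
          (Complex.exp (((k:ℤ):ℂ) * θ * Complex.I) * ((r:ℂ)^k * (1:Matrix (Fin N) (Fin N) ℂ) l j)
          + ∑ m ∈ Finset.Icc 1 d,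
            (Complex.exp ((((k:ℤ) - (m:ℤ)):ℂ) * θ * Complex.I) * ((r:ℂ)^k * ((r^m:ℝ):ℂ)⁻¹ * S m l j)
             + Complex.exp ((((k:ℤ) + (m:ℤ)):ℂ) * θ * Complex.I) *
               ((r:ℂ)^k * ((r^m:ℝ):ℂ)⁻¹ * (starRingEnd ℂ) (S m j l)))) := by
      intro θ
      simp only [Matrix.smul_apply, Matrix.add_apply, Complex.real_smul, hA, Matrix.of_apply, hE]
      have hP : ((r:ℂ) * Complex.exp ((θ:ℂ) * Complex.I)) ^ k
          = (r:ℂ)^k * Complex.exp ((k:ℂ) * θ * Complex.I) := by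
        rw [mul_pow, ← Complex.exp_nat_mul]
        congr 2
        ring
      rw [hP]
      push_cast
      have hsum : ∑ m ∈ Finset.Icc 1 d,
          (Complex.exp (((k:ℂ) - m) * θ * Complex.I) * ((r:ℂ)^k * ((r:ℂ)^m)⁻¹ * S m l j)
           + Complex.exp (((k:ℂ) + m) * θ * Complex.I) *
             ((r:ℂ)^k * ((r:ℂ)^m)⁻¹ * (starRingEnd ℂ) (S m j l)))
          = ((r:ℂ)^k * Complex.exp ((k:ℂ) * θ * Complex.I)) *
            ∑ m ∈ Finset.Icc 1 d, ((r:ℂ)^m)⁻¹ *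
              ((starRingEnd ℂ) (Complex.exp ((m:ℂ)*θ*Complex.I)) * S m l j
               + Complex.exp ((m:ℂ)*θ*Complex.I) * (starRingEnd ℂ) (S m j l)) := by
        rw [Finset.mul_sum]
        refine Finset.sum_congr rfl fun m _ => ?_
        rw [hconjE]
        have e1 : Complex.exp (((k:ℂ) - m) * θ * Complex.I)
            = Complex.exp ((k:ℂ) * θ * Complex.I) * Complex.exp (-(m:ℂ) * θ * Complex.I) := by
          rw [← Complex.exp_add]; ring_nf
        have e2 : Complex.exp (((k:ℂ) + m) * θ * Complex.I)
            = Complex.exp ((k:ℂ) * θ * Complex.I) * Complex.exp ((m:ℂ) * θ * Complex.I) := by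
          rw [← Complex.exp_add]; ring_nf
        rw [e1, e2]
        ring
      rw [hsum]
      ring
    rw [intervalIntegral.integral_congr (g := fun θ : ℝ => (((2 * Real.pi)⁻¹ : ℝ) : ℂ) *
          (Complex.exp (((k:ℤ):ℂ) * θ * Complex.I) * ((r:ℂ)^k * (1:Matrix (Fin N) (Fin N) ℂ) l j)
          + ∑ m ∈ Finset.Icc 1 d,
            (Complex.exp ((((k:ℤ) - (m:ℤ)):ℂ) * θ * Complex.I) * ((r:ℂ)^k * ((r^m:ℝ):ℂ)⁻¹ * S m l j)
             + Complex.exp ((((k:ℤ) + (m:ℤ)):ℂ) * θ * Complex.I) *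
               ((r:ℂ)^k * ((r^m:ℝ):ℂ)⁻¹ * (starRingEnd ℂ) (S m j l)))))
        (fun θ _ => hfun θ)]
    rw [intervalIntegral.integral_const_mul]
    rw [moment_calc d k hk ((r:ℂ)^k * (1:Matrix (Fin N) (Fin N) ℂ) l j)
      (fun m => (r:ℂ)^k * ((r^m:ℝ):ℂ)⁻¹ * S m l j)
      (fun m => (r:ℂ)^k * ((r^m:ℝ):ℂ)⁻¹ * (starRingEnd ℂ) (S m j l))]
    have hpi : (Real.pi:ℂ) ≠ 0 := by exact_mod_cast Real.pi_ne_zero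
    rcases Nat.eq_zero_or_pos k with hk0 | hk1
    · subst hk0
      rw [if_pos rfl, hS0, pow_zero, one_mul]
      push_cast
      field_simp
    · rw [if_neg (by omega : ¬ k = 0)]
      rw [Complex.ofReal_pow, mul_inv_cancel₀ (pow_ne_zero k hrC), one_mul]
      push_cast
      field_simp
end

section
/- Let N ≥ 1 and let g = (g_{m,n})_{m,n≥0} be complex numbers with: |g_{m,n}| ≤ C for some C > 0 and all m,n; g_{k,l} = 0 whenever |k−l| > N; g_{k,k+N} ≠ 0 for all k ≥ 0 and g_{l−N,l} ≠ 0 for all l ≥ N; and g_{m,n} = g_{n,m} for all m,n. Let p_n ∈ ℂ[λ] (n ≥ 0) satisfy λ^N p_n(λ) = Σ_{j≥0, |j−n|≤N} g_{n,j} p_j(λ) for all n ≥ 0, with p_j(λ) = λ^j for 0 ≤ j ≤ N−1; then deg p_n = n, so {p_n} is a basis of ℂ[λ], and there is a unique bilinear functional σ : ℂ[λ] × ℂ[λ] → ℂ (linear in both arguments) with σ(p_n, p_m) = δ_{n,m} for all n,m. Then there exists D > 0 such that |σ(λ^{kN+l}, λ^j)| ≤ D^k for all k ≥ 0 and all l,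 j ∈ {0, …, N−1}. -/
/-- Coefficients of `X^(k*N+l)` in the basis `p`. -/
noncomputable def specCoeff (g : ℕ → ℕ → ℂ) (N l : ℕ) : ℕ → ℕ → ℂ
  | 0, j => if j = l then 1 else 0
  | (k+1), j => ∑ i ∈ Finset.range ((k+1)*N), specCoeff g N l k i * g i j

lemma specCoeff_repr (N : ℕ) (hN : 1 ≤ N) (g : ℕ → ℕ → ℂ)
    (hband : ∀ k l : ℕ, N < ((k : ℤ) - (l : ℤ)).natAbs → g k l = 0)
    (p : ℕ → Polynomial ℂ)
    (hrec : ∀ n : ℕ, Polynomial.X ^ N * p n =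
      ∑ j ∈ Finset.Icc (n - N) (n + N), Polynomial.C (g n j) * p j)
    (hinit : ∀ j : ℕ, j < N → p j = Polynomial.X ^ j)
    (l : ℕ) (hl : l < N) :
    ∀ k, Polynomial.X ^ (k * N + l) =
      ∑ j ∈ Finset.range ((k+1)*N), Polynomial.C (specCoeff g N l k j) * p j := by
  intro k
  induction k with
  | zero =>
    simp only [specCoeff, zero_mul, zero_add, one_mul]
    rw [Finset.sum_eq_single l]
    · simp [hinit l hl]
    · intro b _ hb; simp [hb]
    · intro h; exact absurd (Finset.mem_range.2 hl) h
  | succ k ih =>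
    have hexp : (k+1) * N + l = N + (k * N + l) := by ring
    rw [hexp, pow_add, ih, Finset.mul_sum]
    have step : ∀ j ∈ Finset.range ((k+1)*N),
        Polynomial.X ^ N * (Polynomial.C (specCoeff g N l k j) * p j) =
        ∑ i ∈ Finset.range ((k+1+1)*N),
          Polynomial.C (specCoeff g N l k j) * (Polynomial.C (g j i) * p i) := by
      intro j hj
      rw [mul_left_comm, hrec j, Finset.mul_sum]
      apply Finset.sum_subset
      · intro i hi
        simp only [Finset.mem_Icc] at hi
        simp only [Finset.mem_range]
        have hj' : j < (k+1)*N := Finset.mem_range.1 hj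
        have : (k+1+1)*N = (k+1)*N + N := by ring
        omega
      · intro i _ hi
        simp only [Finset.mem_Icc, not_and_or, not_le] at hi
        have : g j i = 0 := by
          apply hband
          omega
        simp [this]
    rw [Finset.sum_congr rfl step, Finset.sum_comm]
    apply Finset.sum_congr rfl
    intro i _
    have : specCoeff g N l (k+1) i
        = ∑ j ∈ Finset.range ((k+1)*N), specCoeff g N l k j * g j i := rfl
    rw [this, map_sum, Finset.sum_mul]
    apply Finset.sum_congr rfl
    intro j _
    rw [← mul_assoc, ← Polynomial.C_mul]

lemma specCoeff_bound (N : ℕ) (g : ℕ → ℕ → ℂ) (C' : ℝ)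
    (hbd : ∀ m n : ℕ, ‖g m n‖ ≤ C')
    (hband : ∀ k l : ℕ, N < ((k : ℤ) - (l : ℤ)).natAbs → g k l = 0)
    (l : ℕ) :
    ∀ k j, ‖specCoeff g N l k j‖ ≤ ((2*N+1) * C')^k := by
  have hC' : 0 ≤ C' := le_trans (norm_nonneg _) (hbd 0 0)
  have hB : (0:ℝ) ≤ (2*N+1) * C' := by positivity
  intro k
  induction k with
  | zero =>
    intro j
    simp only [specCoeff, pow_zero]
    split <;> simp
  | succ k ih =>
    intro j
    have key : specCoeff g N l (k+1) j
        = ∑ i ∈ (Finset.range ((k+1)*N)).filter (fun i => g i j ≠ 0),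
            specCoeff g N l k i * g i j := by
      show (∑ i ∈ Finset.range ((k+1)*N), specCoeff g N l k i * g i j) = _
      refine (Finset.sum_filter_of_ne ?_).symm
      intro i _ h h0
      exact h (by simp [h0])
    rw [key]
    calc ‖∑ i ∈ (Finset.range ((k+1)*N)).filter (fun i => g i j ≠ 0),
            specCoeff g N l k i * g i j‖
        ≤ ∑ i ∈ (Finset.range ((k+1)*N)).filter (fun i => g i j ≠ 0),
            ‖specCoeff g N l k i * g i j‖ := by
          exact norm_sum_le _ _
      _ ≤ ∑ _i ∈ (Finset.range ((k+1)*N)).filter (fun i => g i j ≠ 0),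
            ((2*N+1) * C')^k * C' := by
          apply Finset.sum_le_sum
          intro i _
          rw [norm_mul]
          exact mul_le_mul (ih i) (hbd i j) (norm_nonneg _) (pow_nonneg hB k)
      _ = ((Finset.range ((k+1)*N)).filter (fun i => g i j ≠ 0)).card
            * (((2*N+1) * C')^k * C') := by
          rw [Finset.sum_const, nsmul_eq_mul]
      _ ≤ (2*N+1) * (((2*N+1) * C')^k * C') := by
          apply mul_le_mul_of_nonneg_right _ (by positivity)
          have hsubset : (Finset.range ((k+1)*N)).filter (fun i => g i j ≠ 0)
              ⊆ Finset.Icc (j - N) (j + N) := by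
            intro i hi
            simp only [Finset.mem_filter] at hi
            simp only [Finset.mem_Icc]
            by_contra h
            exact hi.2 (hband i j (by omega))
          have h1 := Finset.card_le_card hsubset
          have h2 : (Finset.Icc (j - N) (j + N)).card ≤ 2*N+1 := by
            rw [Nat.card_Icc]; omega
          have : ((Finset.range ((k+1)*N)).filter (fun i => g i j ≠ 0)).card ≤ 2*N+1 :=
            le_trans h1 h2
          exact_mod_cast Nat.cast_le.mpr this |>.trans_eq (by push_cast; ring)
      _ = ((2*N+1) * C')^(k+1) := by ring

/-- **Moment bound for the spectral function of a bounded complex symmetric banded matrix.**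
If `σ` is the bilinear spectral functional determined by `σ(p_n, p_m) = δ_{n,m}` for the
polynomial solutions `p_n` of the difference equation associated to `g`, then the moments
`σ(λ^{kN+l}, λ^j)` (`0 ≤ l, j ≤ N-1`) are bounded by `D^k` for some `D > 0`. -/
theorem spectral_function_moment_bound
    (N : ℕ) (hN : 1 ≤ N) (g : ℕ → ℕ → ℂ) (C : ℝ) (hC : 0 < C)
    (hbd : ∀ m n : ℕ, ‖g m n‖ ≤ C)
    (hband : ∀ k l : ℕ, N < ((k : ℤ) - (l : ℤ)).natAbs → g k l = 0)
    (hsup : ∀ k : ℕ, g k (k + N) ≠ 0)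
    (hsub : ∀ l : ℕ, N ≤ l → g (l - N) l ≠ 0)
    (hsym : ∀ m n : ℕ, g m n = g n m)
    (p : ℕ → Polynomial ℂ)
    (hrec : ∀ n : ℕ, Polynomial.X ^ N * p n =
      ∑ j ∈ Finset.Icc (n - N) (n + N), Polynomial.C (g n j) * p j)
    (hinit : ∀ j : ℕ, j < N → p j = Polynomial.X ^ j)
    (σ : Polynomial ℂ →ₗ[ℂ] Polynomial ℂ →ₗ[ℂ] ℂ)
    (hσ : ∀ n m : ℕ, σ (p n) (p m) = if n = m then 1 else 0) :
    ∃ D : ℝ, 0 < D ∧ ∀ (k l j : ℕ), l < N → j < N →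
      ‖σ (Polynomial.X ^ (k * N + l)) (Polynomial.X ^ j)‖ ≤ D ^ k := by
  refine ⟨(2*N+1) * C + 1, by positivity, ?_⟩
  intro k l j hl hj
  rw [specCoeff_repr N hN g hband p hrec hinit l hl k, ← hinit j hj]
  have hval : σ (∑ i ∈ Finset.range ((k+1)*N),
      Polynomial.C (specCoeff g N l k i) * p i) (p j) = specCoeff g N l k j := by
    simp only [← Polynomial.smul_eq_C_mul, map_sum, map_smul, LinearMap.sum_apply,
      LinearMap.smul_apply, hσ, smul_eq_mul, mul_ite, mul_one, mul_zero]
    rw [Finset.sum_ite_eq' (Finset.range ((k+1)*N)) j (specCoeff g N l k)]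
    have hjmem : j < (k+1)*N := lt_of_lt_of_le hj (Nat.le_mul_of_pos_left N (Nat.succ_pos k))
    simp [Finset.mem_range.2 hjmem]
  rw [hval]
  calc ‖specCoeff g N l k j‖ ≤ ((2*N+1) * C)^k :=
        specCoeff_bound N g C hbd hband l k j
    _ ≤ ((2*N+1) * C + 1)^k := by
        apply pow_le_pow_left₀ (by positivity) (by linarith)
end

section
/- Let c ∈ ℂ and let p_n ∈ ℂ[z] (n ≥ 0) be defined by p_0 = 1, p_1 = z − c, and p_{n+1} = z·p_n − p_{n−1} for n ≥ 1. Then for every k ≥ 0: z^{2k} = (2k)! · Σ_{j=0}^{k} Σ_{m=0}^{2j} [(2j+1)/((k−j)!·(k+j+1)!)] · c^{2j−m} · p_m(z), and for every k ≥ 1: z^{2k−1} = (2k−1)! · Σ_{j=1}^{k} Σ_{m=0}^{2j−1} [2j/((k−j)!·(k+j)!)] · c^{2j−1−m} · p_m(z), as identities in ℂ[z]. -/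
open Polynomial Finset

noncomputable def Gc (k j : ℕ) : ℂ :=
  if j ≤ k then (((2*k).factorial : ℂ) * ((2*j+1 : ℕ) : ℂ)) /
    (((k-j).factorial : ℂ) * ((k+j+1).factorial : ℂ)) else 0

noncomputable def Hc (k j : ℕ) : ℂ :=
  if j ≤ k then (((2*k-1).factorial : ℂ) * ((2*j : ℕ) : ℂ)) /
    (((k-j).factorial : ℂ) * ((k+j).factorial : ℂ)) else 0

lemma Hc_zero (k : ℕ) : Hc k 0 = 0 := by simp [Hc]
lemma Gc_top (k j : ℕ) (h : k < j) : Gc k j = 0 := by rw [Gc, if_neg (by omega)]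
lemma Hc_top (k j : ℕ) (h : k < j) : Hc k j = 0 := by rw [Hc, if_neg (by omega)]

lemma fact_ne (n : ℕ) : ((n.factorial : ℂ)) ≠ 0 :=
  Nat.cast_ne_zero.mpr n.factorial_ne_zero

lemma key1 (k j : ℕ) : Hc (k+1) (j+1) = Gc k j + Gc k (j+1) := by
  rcases lt_trichotomy j k with h | h | h
  · obtain ⟨d, rfl⟩ : ∃ d, k = j + d + 1 := ⟨k - j - 1, by omega⟩
    rw [Hc, if_pos (by omega), Gc, if_pos (by omega), Gc, if_pos (by omega)]
    rw [show 2*(j+d+1+1)-1 = (2*j+2*d+2)+1 by omega,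
        show (j+d+1+1)-(j+1) = d+1 by omega,
        show (j+d+1+1)+(j+1) = (2*j+d+2)+1 by omega,
        show 2*(j+d+1) = 2*j+2*d+2 by omega,
        show (j+d+1)-j = d+1 by omega,
        show (j+d+1)+j+1 = 2*j+d+2 by omega,
        show (j+d+1)-(j+1) = d by omega,
        show (j+d+1)+(j+1)+1 = (2*j+d+2)+1 by omega]
    have h1 := fact_ne (2*j+2*d+2)
    have h2 := fact_ne (2*j+d+2)
    have h3 := fact_ne d
    have h4 := fact_ne (d+1)
    have h5 := fact_ne ((2*j+d+2)+1)
    field_simp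
    rw [Nat.factorial_succ (2*j+2*d+2), Nat.factorial_succ (2*j+d+2),
        Nat.factorial_succ d]
    push_cast
    ring
  · subst h
    rw [Hc, if_pos (by omega), Gc, if_pos (by omega), Gc_top _ _ (by omega)]
    rw [show 2*(j+1)-1 = 2*j+1 by omega, show (j+1)-(j+1) = 0 by omega,
        show (j+1)+(j+1) = (2*j+1)+1 by omega, show j - j = 0 by omega,
        show j+j+1 = (2*j)+1 by omega]
    have h1 := fact_ne (2*j+1)
    have h2 := fact_ne (2*j)
    have h3 := fact_ne ((2*j+1)+1)
    field_simp
    rw [Nat.factorial_succ (2*j+1), Nat.factorial_succ (2*j)]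
    push_cast
    ring
  · rw [Hc_top _ _ (by omega), Gc_top _ _ (by omega), Gc_top _ _ (by omega)]
    ring

lemma key2 (k j : ℕ) : Gc (k+1) j = Hc (k+1) j + Hc (k+1) (j+1) := by
  rcases lt_trichotomy j (k+1) with h | h | h
  · obtain ⟨d, rfl⟩ : ∃ d, k = j + d := ⟨k - j, by omega⟩
    rw [Gc, if_pos (by omega), Hc, if_pos (by omega), Hc, if_pos (by omega)]
    rw [show 2*(j+d+1)-1 = 2*j+2*d+1 by omega,
        show 2*(j+d+1) = (2*j+2*d+1)+1 by omega,
        show (j+d+1)-j = d+1 by omega,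
        show (j+d+1)+j+1 = (2*j+d+1)+1 by omega,
        show (j+d+1)+j = 2*j+d+1 by omega,
        show (j+d+1)-(j+1) = d by omega,
        show (j+d+1)+(j+1) = (2*j+d+1)+1 by omega]
    have h1 := fact_ne (2*j+2*d+1)
    have h2 := fact_ne (2*j+d+1)
    have h3 := fact_ne d
    have h4 := fact_ne (d+1)
    have h5 := fact_ne ((2*j+d+1)+1)
    field_simp
    rw [Nat.factorial_succ (2*j+2*d+1), Nat.factorial_succ (2*j+d+1),
        Nat.factorial_succ d]
    push_cast
    ring
  · subst h
    rw [Gc, if_pos (by omega), Hc, if_pos (by omega), Hc_top _ _ (by omega)]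
    rw [show 2*(k+1)-1 = 2*k+1 by omega,
        show 2*(k+1) = (2*k+1)+1 by omega,
        show (k+1)-(k+1) = 0 by omega,
        show (k+1)+(k+1)+1 = ((2*k+1)+1)+1 by omega,
        show (k+1)+(k+1) = (2*k+1)+1 by omega]
    have h1 := fact_ne (2*k+1)
    have h2 := fact_ne ((2*k+1)+1)
    have h3 := fact_ne (((2*k+1)+1)+1)
    field_simp
    rw [Nat.factorial_succ ((2*k+1)+1), Nat.factorial_succ (2*k+1)]
    push_cast
    ring
  · rw [Gc_top _ _ (by omega), Hc_top _ _ (by omega), Hc_top _ _ (by omega)]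
    ring

noncomputable def qq (c : ℂ) (p : ℕ → Polynomial ℂ) (n : ℕ) : Polynomial ℂ :=
  ∑ m ∈ range (n+1), C (c ^ (n-m)) * p m

variable {c : ℂ} {p : ℕ → Polynomial ℂ}

lemma qq_zero' (hp0 : p 0 = 1) : qq c p 0 = 1 := by simp [qq, hp0]

lemma qq_succ' (n : ℕ) : qq c p (n+1) = C c * qq c p n + p (n+1) := by
  unfold qq
  rw [Finset.sum_range_succ]
  simp only [Nat.sub_self, pow_zero, map_one, one_mul]
  congr 1
  rw [Finset.mul_sum]
  refine Finset.sum_congr rfl fun m hm => ?_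
  rw [Finset.mem_range] at hm
  rw [show n + 1 - m = (n - m) + 1 by omega, pow_succ', map_mul, mul_assoc]

lemma qq_one' (hp0 : p 0 = 1) (hp1 : p 1 = X - C c) : qq c p 1 = X := by
  rw [show (1:ℕ) = 0 + 1 from rfl, qq_succ', qq_zero' hp0, hp1]; ring

lemma qq_rec' (hp0 : p 0 = 1) (hp1 : p 1 = X - C c)
    (hrec : ∀ n : ℕ, 1 ≤ n → p (n + 1) = X * p n - p (n - 1)) (n : ℕ) :
    qq c p (n+2) = X * qq c p (n+1) - qq c p n := by
  induction n with
  | zero =>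
    have h2 : p 2 = X * p 1 - p 0 := by
      have := hrec 1 le_rfl; simpa using this
    rw [show (2:ℕ) = 1 + 1 from rfl, qq_succ', h2, qq_one' hp0 hp1, qq_zero' hp0, hp0, hp1]
    ring
  | succ n ih =>
    have h3 : p (n+3) = X * p (n+2) - p (n+1) := by
      have := hrec (n+2) (by omega); simpa using this
    have e2 : p (n+2) = qq c p (n+2) - C c * qq c p (n+1) := by
      rw [qq_succ']; ring
    have e1 : p (n+1) = qq c p (n+1) - C c * qq c p n := by
      rw [qq_succ']; ring
    rw [show n+1+2 = (n+2)+1 by ring, qq_succ', h3, e2, e1, ih]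
    ring

lemma qq_X_mul' (hp0 : p 0 = 1) (hp1 : p 1 = X - C c)
    (hrec : ∀ n : ℕ, 1 ≤ n → p (n + 1) = X * p n - p (n - 1)) (n : ℕ) :
    X * qq c p (n+1) = qq c p (n+2) + qq c p n := by
  rw [qq_rec' hp0 hp1 hrec]; ring

section
variable (hp0 : p 0 = 1) (hp1 : p 1 = X - C c)
  (hrec : ∀ n : ℕ, 1 ≤ n → p (n + 1) = X * p n - p (n - 1))

include hp0 hp1 hrec

lemma step1 (k : ℕ)
    (h : (X : Polynomial ℂ)^(2*k) = ∑ j ∈ range (k+1), C (Gc k j) * qq c p (2*j)) :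
    (X : Polynomial ℂ)^(2*k+1) = ∑ j ∈ range (k+2), C (Hc (k+1) j) * qq c p (2*j-1) := by
  have hL : (X : Polynomial ℂ)^(2*k+1)
      = (∑ i ∈ range k, C (Gc k (i+1)) * (qq c p (2*i+3) + qq c p (2*i+1)))
        + C (Gc k 0) * qq c p 1 := by
    rw [pow_succ, h, Finset.sum_mul, Finset.sum_range_succ']
    congr 1
    · refine Finset.sum_congr rfl fun i _ => ?_
      have hx : X * qq c p (2*(i+1)) = qq c p (2*i+3) + qq c p (2*i+1) := by
        rw [show 2*(i+1) = (2*i+1)+1 by ring, qq_X_mul' hp0 hp1 hrec,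
          show 2*i+1+2 = 2*i+3 by ring]
      rw [mul_comm _ X, mul_left_comm, hx]
    · rw [mul_comm _ X, mul_left_comm, show 2*0 = 0 by ring, qq_zero' hp0, mul_one,
        ← qq_one' hp0 hp1]
  have hR : ∑ j ∈ range (k+2), C (Hc (k+1) j) * qq c p (2*j-1)
      = (∑ i ∈ range k, C (Gc k (i+1)) * (qq c p (2*i+3) + qq c p (2*i+1)))
        + C (Gc k 0) * qq c p 1 := by
    rw [Finset.sum_range_succ', Hc_zero, map_zero, zero_mul, add_zero]
    calc ∑ i ∈ range (k+1), C (Hc (k+1) (i+1)) * qq c p (2*(i+1)-1)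
        = ∑ i ∈ range (k+1),
            (C (Gc k i) * qq c p (2*i+1) + C (Gc k (i+1)) * qq c p (2*i+1)) := by
          refine Finset.sum_congr rfl fun i _ => ?_
          rw [show 2*(i+1)-1 = 2*i+1 by omega, key1, map_add, add_mul]
      _ = (∑ i ∈ range (k+1), C (Gc k i) * qq c p (2*i+1))
          + ∑ i ∈ range (k+1), C (Gc k (i+1)) * qq c p (2*i+1) :=
          Finset.sum_add_distrib
      _ = ((∑ i ∈ range k, C (Gc k (i+1)) * qq c p (2*(i+1)+1)) + C (Gc k 0) * qq c p (2*0+1))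
          + ((∑ i ∈ range k, C (Gc k (i+1)) * qq c p (2*i+1)) + C (Gc k (k+1)) * qq c p (2*k+1)) := by
          rw [Finset.sum_range_succ' (fun i => C (Gc k i) * qq c p (2*i+1)),
            Finset.sum_range_succ]
      _ = (∑ i ∈ range k, C (Gc k (i+1)) * (qq c p (2*i+3) + qq c p (2*i+1)))
          + C (Gc k 0) * qq c p 1 := by
          rw [Gc_top k (k+1) (by omega), map_zero, zero_mul, add_zero]
          have : ∀ i, 2*(i+1)+1 = 2*i+3 := fun i => by ring
          simp only [this, mul_add, Finset.sum_add_distrib]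
          ring
  rw [hL, hR]

lemma step2 (k : ℕ)
    (h : (X : Polynomial ℂ)^(2*k+1) = ∑ j ∈ range (k+2), C (Hc (k+1) j) * qq c p (2*j-1)) :
    (X : Polynomial ℂ)^(2*(k+1)) = ∑ j ∈ range (k+2), C (Gc (k+1) j) * qq c p (2*j) := by
  have hL : (X : Polynomial ℂ)^(2*(k+1))
      = ∑ i ∈ range (k+1), C (Hc (k+1) (i+1)) * (qq c p (2*i+2) + qq c p (2*i)) := by
    rw [show 2*(k+1) = (2*k+1)+1 by ring, pow_succ, h, Finset.sum_mul,
      Finset.sum_range_succ', Hc_zero, map_zero, zero_mul, zero_mul, add_zero]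
    refine Finset.sum_congr rfl fun i _ => ?_
    have hx : X * qq c p (2*(i+1)-1) = qq c p (2*i+2) + qq c p (2*i) := by
      rw [show 2*(i+1)-1 = (2*i)+1 by omega, qq_X_mul' hp0 hp1 hrec]
    rw [mul_comm _ X, mul_left_comm, hx]
  have hR : ∑ j ∈ range (k+2), C (Gc (k+1) j) * qq c p (2*j)
      = ∑ i ∈ range (k+1), C (Hc (k+1) (i+1)) * (qq c p (2*i+2) + qq c p (2*i)) := by
    calc ∑ j ∈ range (k+2), C (Gc (k+1) j) * qq c p (2*j)
        = ∑ j ∈ range (k+2),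
            (C (Hc (k+1) j) * qq c p (2*j) + C (Hc (k+1) (j+1)) * qq c p (2*j)) := by
          refine Finset.sum_congr rfl fun j _ => ?_
          rw [key2, map_add, add_mul]
      _ = (∑ j ∈ range (k+2), C (Hc (k+1) j) * qq c p (2*j))
          + ∑ j ∈ range (k+2), C (Hc (k+1) (j+1)) * qq c p (2*j) :=
          Finset.sum_add_distrib
      _ = (∑ i ∈ range (k+1), C (Hc (k+1) (i+1)) * qq c p (2*(i+1)))
          + ∑ j ∈ range (k+1), C (Hc (k+1) (j+1)) * qq c p (2*j) := by
          rw [Finset.sum_range_succ' (fun j => C (Hc (k+1) j) * qq c p (2*j)),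
            Hc_zero, map_zero, zero_mul, add_zero,
            Finset.sum_range_succ (fun j => C (Hc (k+1) (j+1)) * qq c p (2*j)),
            Hc_top (k+1) (k+2) (by omega), map_zero, zero_mul, add_zero]
      _ = ∑ i ∈ range (k+1), C (Hc (k+1) (i+1)) * (qq c p (2*i+2) + qq c p (2*i)) := by
          have : ∀ i, 2*(i+1) = 2*i+2 := fun i => by ring
          simp only [this, mul_add, Finset.sum_add_distrib]
  rw [hL, hR]

lemma even_main : ∀ k : ℕ,
    (X : Polynomial ℂ)^(2*k) = ∑ j ∈ range (k+1), C (Gc k j) * qq c p (2*j) := by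
  intro k
  induction k with
  | zero =>
    rw [Finset.sum_range_one, show 2*0 = 0 by ring, qq_zero' hp0, mul_one]
    have : Gc 0 0 = 1 := by simp [Gc]
    rw [this, map_one, pow_zero]
  | succ n ih => exact step2 hp0 hp1 hrec n (step1 hp0 hp1 hrec n ih)

lemma odd_main (k : ℕ) :
    (X : Polynomial ℂ)^(2*k+1) = ∑ j ∈ range (k+2), C (Hc (k+1) j) * qq c p (2*j-1) :=
  step1 hp0 hp1 hrec k (even_main hp0 hp1 hrec k)

end

/-- **Expansion of monomials in the polynomial solutions for a complex rank-one perturbation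
of the free Jacobi matrix** (identities in `ℂ[z]`):
`z^{2k} = (2k)! Σ_{j=0}^{k} Σ_{m=0}^{2j} (2j+1)/((k-j)!(k+j+1)!) · c^{2j-m} · p_m(z)` and,
for `k ≥ 1`,
`z^{2k-1} = (2k-1)! Σ_{j=1}^{k} Σ_{m=0}^{2j-1} 2j/((k-j)!(k+j)!) · c^{2j-1-m} · p_m(z)`. -/
theorem monomial_expansion_rank_one_perturbation
    (c : ℂ) (p : ℕ → Polynomial ℂ)
    (hp0 : p 0 = 1) (hp1 : p 1 = Polynomial.X - Polynomial.C c)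
    (hrec : ∀ n : ℕ, 1 ≤ n → p (n + 1) = Polynomial.X * p n - p (n - 1)) :
    (∀ k : ℕ, (Polynomial.X : Polynomial ℂ) ^ (2 * k) =
      Polynomial.C (((2 * k).factorial : ℂ)) *
        ∑ j ∈ Finset.range (k + 1), ∑ m ∈ Finset.range (2 * j + 1),
          Polynomial.C (((2 * j + 1 : ℕ) : ℂ) /
              (((k - j).factorial : ℂ) * (((k + j + 1).factorial : ℂ))) * c ^ (2 * j - m)) *
            p m) ∧
    (∀ k : ℕ, 1 ≤ k → (Polynomial.X : Polynomial ℂ) ^ (2 * k - 1) =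
      Polynomial.C (((2 * k - 1).factorial : ℂ)) *
        ∑ j ∈ Finset.Icc 1 k, ∑ m ∈ Finset.range (2 * j),
          Polynomial.C (((2 * j : ℕ) : ℂ) /
              (((k - j).factorial : ℂ) * (((k + j).factorial : ℂ))) * c ^ (2 * j - 1 - m)) *
            p m) := by
  constructor
  · intro k
    rw [even_main hp0 hp1 hrec k, Finset.mul_sum]
    refine Finset.sum_congr rfl fun j hj => ?_
    rw [Finset.mem_range] at hj
    set A : ℂ := ((2 * j + 1 : ℕ) : ℂ) /
      (((k - j).factorial : ℂ) * (((k + j + 1).factorial : ℂ))) with hA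
    have hin : ∑ m ∈ Finset.range (2 * j + 1), C (A * c ^ (2 * j - m)) * p m
        = C A * qq c p (2 * j) := by
      rw [qq, Finset.mul_sum]
      refine Finset.sum_congr rfl fun m _ => ?_
      rw [map_mul, mul_assoc]
    rw [hin, ← mul_assoc, ← map_mul]
    congr 2
    rw [Gc, if_pos (by omega), hA, mul_div_assoc]
  · intro k hk
    obtain ⟨e, rfl⟩ : ∃ e, k = e + 1 := ⟨k - 1, by omega⟩
    rw [show 2 * (e + 1) - 1 = 2 * e + 1 by omega, odd_main hp0 hp1 hrec e,
      Finset.sum_range_succ', Hc_zero, map_zero, zero_mul, add_zero,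
      show Finset.Icc 1 (e + 1) = Finset.Ico 1 (e + 2) by exact (Finset.Ico_add_one_right_eq_Icc 1 (e + 1)).symm,
      Finset.sum_Ico_eq_sum_range, show e + 2 - 1 = e + 1 by omega, Finset.mul_sum]
    refine Finset.sum_congr rfl fun i hi => ?_
    rw [Finset.mem_range] at hi
    set B : ℂ := ((2 * (1 + i) : ℕ) : ℂ) /
      (((e + 1 - (1 + i)).factorial : ℂ) * (((e + 1 + (1 + i)).factorial : ℂ))) with hB
    have hin : ∑ m ∈ Finset.range (2 * (1 + i)), C (B * c ^ (2 * (1 + i) - 1 - m)) * p m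
        = C B * qq c p (2 * i + 1) := by
      rw [qq, Finset.mul_sum, show 2 * (1 + i) = (2 * i + 1) + 1 by ring]
      refine Finset.sum_congr rfl fun m _ => ?_
      rw [show 2 * i + 1 + 1 - 1 - m = 2 * i + 1 - m by omega, map_mul, mul_assoc]
    rw [hin, ← mul_assoc, ← map_mul, show 2 * (i + 1) - 1 = 2 * i + 1 by omega]
    congr 2
    rw [Hc, if_pos (by omega), hB,
      show 2 * (e + 1) - 1 = 2 * e + 1 by omega,
      show (e + 1) - (i + 1) = e + 1 - (1 + i) by omega,
      show (e + 1) + (i + 1) = e + 1 + (1 + i) by omega,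
      show 2 * (i + 1) = 2 * (1 + i) by omega, mul_div_assoc]
end

section
/- Let c ∈ ℂ and let p_n ∈ ℂ[λ] (n ≥ 0) be defined by p_0 = 1, p_1 = λ − c, and p_{n+1} = λ·p_n − p_{n−1} for n ≥ 1. Let S : ℂ[λ] → ℂ be a linear functional satisfying S(p_n · p_m) = δ_{n,m} for all n, m ≥ 0. Then for every k ≥ 0: S(λ^{2k}) = (2k)! · Σ_{j=0}^{k} [(2j+1)/((k−j)!·(k+j+1)!)] · c^{2j}, and for every k ≥ 1: S(λ^{2k−1}) = (2k−1)! · Σ_{j=1}^{k} [2j/((k−j)!·(k+j)!)] · c^{2j−1}. -/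
open Polynomial Finset

private def Bn : ℕ → ℕ → ℕ
  | 0, M => if M = 0 then 1 else 0
  | n+1, 0 => Bn n 1
  | n+1, M+1 => Bn n (M+2) + Bn n M

private lemma Bn_big : ∀ n M, n < M → Bn n M = 0 := by
  intro n
  induction n with
  | zero => intro M h; simp [Bn]; omega
  | succ n ih =>
    intro M h
    match M, h with
    | M+1, h =>
      simp only [Bn]
      rw [ih _ (by omega), ih _ (by omega)]

private lemma Bn_diag : ∀ n, Bn n n = 1 := by
  intro n; induction n with
  | zero => simp [Bn]
  | succ n ih => simp only [Bn]; rw [Bn_big n (n+2) (by omega), ih]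

private lemma Bn_odd : ∀ n M, ¬ (2 ∣ (n + M)) → Bn n M = 0 := by
  intro n
  induction n with
  | zero => intro M h; simp [Bn]; omega
  | succ n ih =>
    intro M h
    match M with
    | 0 => simp only [Bn]; exact ih 1 (by omega)
    | M+1 =>
      simp only [Bn]
      rw [ih (M+2) (by omega), ih M (by omega)]

private lemma Bn_fact : ∀ n M t, M + 2*t = n →
    Bn n M * (t.factorial * (M+t+1).factorial) = (M+1) * n.factorial := by
  intro n
  induction n with
  | zero =>
    intro M t h
    obtain rfl : M = 0 := by omega
    obtain rfl : t = 0 := by omega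
    simp [Bn]
  | succ n ih =>
    intro M t h
    match M with
    | 0 =>
      obtain ⟨s, rfl⟩ : ∃ s, t = s + 1 := ⟨t-1, by omega⟩
      obtain rfl : n = 2*s+1 := by omega
      have h1 := ih 1 s (by omega)
      rw [show (1:ℕ)+s+1 = s+2 from by omega] at h1
      simp only [Bn, Nat.zero_add]
      rw [Nat.factorial_succ s, Nat.factorial_succ (2*s+1)]
      calc Bn (2*s+1) 1 * ((s+1) * s.factorial * (s+2).factorial)
          = (s+1) * (Bn (2*s+1) 1 * (s.factorial * (s+2).factorial)) := by ring
        _ = (s+1) * ((1+1) * (2*s+1).factorial) := by rw [h1]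
        _ = (0+1) * ((2*s+1+1) * (2*s+1).factorial) := by ring
    | M+1 =>
      match t with
      | 0 =>
        obtain rfl : M = n := by omega
        have unf : Bn (M+1) (M+1) = Bn M (M+2) + Bn M M := rfl
        rw [unf, Bn_big M (M+2) (by omega), Bn_diag M]
        rw [show (M:ℕ)+1+0+1 = M+2 from by omega, Nat.factorial_succ (M+1)]
        simp only [Nat.factorial_zero]
        ring
      | s+1 =>
        obtain rfl : n = M + 2*s + 2 := by omega
        have h1 := ih (M+2) s (by omega)
        have h2 := ih M (s+1) (by omega)
        rw [show (M:ℕ)+2+s+1 = M+s+3 from by omega] at h1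
        rw [show (M:ℕ)+(s+1)+1 = M+s+2 from by omega] at h2
        have unf : Bn (M+2*s+2+1) (M+1) = Bn (M+2*s+2) (M+2) + Bn (M+2*s+2) M := rfl
        rw [unf, show (M:ℕ)+1+(s+1)+1 = M+s+3 from by omega]
        have e1 : Bn (M+2*s+2) (M+2) * ((s+1).factorial * (M+s+3).factorial)
            = (s+1) * ((M+2+1) * (M+2*s+2).factorial) := by
          rw [Nat.factorial_succ s]
          calc Bn (M+2*s+2) (M+2) * ((s+1) * s.factorial * (M+s+3).factorial)
              = (s+1) * (Bn (M+2*s+2) (M+2) * (s.factorial * (M+s+3).factorial)) := by ring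
            _ = (s+1) * ((M+2+1) * (M+2*s+2).factorial) := by rw [h1]
        have e2 : Bn (M+2*s+2) M * ((s+1).factorial * (M+s+3).factorial)
            = (M+s+3) * ((M+1) * (M+2*s+2).factorial) := by
          rw [Nat.factorial_succ (M+s+2)]
          calc Bn (M+2*s+2) M * ((s+1).factorial * ((M+s+2+1) * (M+s+2).factorial))
              = (M+s+2+1) * (Bn (M+2*s+2) M * ((s+1).factorial * (M+s+2).factorial)) := by ring
            _ = (M+s+3) * ((M+1) * (M+2*s+2).factorial) := by rw [h2]
        rw [add_mul, e1, e2, Nat.factorial_succ (M+2*s+2)]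
        ring

private lemma sum_even_helper (f : ℕ → ℂ) (h : ∀ j, ¬ 2 ∣ j → f j = 0) (k : ℕ) :
    ∑ j ∈ range (2*k+1), f j = ∑ i ∈ range (k+1), f (2*i) := by
  induction k with
  | zero => simp
  | succ k ih =>
    rw [show 2*(k+1)+1 = (2*k+1)+1+1 from by omega, sum_range_succ, sum_range_succ, ih,
      sum_range_succ (fun i => f (2*i)) (k+1), h (2*k+1) (by omega),
      show (2*k+1+1) = 2*(k+1) from by omega]
    ring

private lemma sum_odd_helper (f : ℕ → ℂ) (h : ∀ j, 2 ∣ j → f j = 0) (k : ℕ) :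
    ∑ j ∈ range (2*k), f j = ∑ i ∈ Icc 1 k, f (2*i - 1) := by
  induction k with
  | zero => simp
  | succ k ih =>
    rw [show 2*(k+1) = (2*k)+1+1 from by omega, sum_range_succ, sum_range_succ, ih,
      h (2*k) (by omega)]
    rw [show Icc 1 (k+1) = insert (k+1) (Icc 1 k) from by ext x; simp; omega]
    rw [sum_insert (by simp)]
    rw [show 2*(k+1)-1 = 2*k+1 from by omega]
    ring

private lemma key_lemma (c : ℂ) (p : ℕ → Polynomial ℂ)
    (hp0 : p 0 = 1) (hp1 : p 1 = Polynomial.X - Polynomial.C c)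
    (hrec : ∀ n : ℕ, 1 ≤ n → p (n + 1) = Polynomial.X * p n - p (n - 1))
    (S : Polynomial ℂ →ₗ[ℂ] ℂ)
    (hS : ∀ n m : ℕ, S (p n * p m) = if n = m then 1 else 0) :
    ∀ n m : ℕ, S ((Polynomial.X : Polynomial ℂ)^n * p m)
      = ∑ j ∈ range (n+1), c^j * (Bn n (m+j) : ℂ) := by
  intro n
  induction n with
  | zero =>
    intro m
    have h0 := hS 0 m
    rw [hp0, one_mul] at h0
    rw [pow_zero, one_mul, h0]
    rcases m with _ | m
    · simp [Bn]
    · simp [Bn]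
  | succ n ih =>
    intro m
    rcases m with _ | m
    · -- m = 0
      have hx : (Polynomial.X : Polynomial ℂ)^(n+1) * p 0
          = Polynomial.X^n * p 1 + c • (Polynomial.X^n * p 0) := by
        rw [hp0, hp1, mul_one, Polynomial.smul_eq_C_mul, pow_succ]
        ring
      rw [hx, map_add, map_smul, ih 1, ih 0, smul_eq_mul]
      have lhs1 : ∑ j ∈ range (n+1+1), c^j * (Bn (n+1) (0+j) : ℂ)
          = (∑ j ∈ range (n+1), c^(j+1) * (Bn (n+1) (j+1) : ℂ)) + (Bn n 1 : ℂ) := by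
        rw [Finset.sum_range_succ' (fun j => c^j * (Bn (n+1) (0+j) : ℂ)) (n+1)]
        simp only [Nat.zero_add, pow_zero, one_mul]
        have : Bn (n+1) 0 = Bn n 1 := rfl
        rw [this]
      rw [lhs1]
      have unf : ∀ j, Bn (n+1) (j+1) = Bn n (j+2) + Bn n j := fun j => rfl
      have step : ∀ j ∈ range (n+1), c^(j+1) * (Bn (n+1) (j+1) : ℂ)
          = c^(j+1) * (Bn n (j+2) : ℂ) + c^(j+1) * (Bn n j : ℂ) := by
        intro j _; rw [unf j]; push_cast; ring
      rw [Finset.sum_congr rfl step, Finset.sum_add_distrib]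
      -- now RHS pieces
      have r1 : ∑ j ∈ range (n+1), c^j * (Bn n (1+j) : ℂ)
          = (∑ j ∈ range n, c^(j+1) * (Bn n (j+2) : ℂ)) + (Bn n 1 : ℂ) := by
        rw [Finset.sum_range_succ' (fun j => c^j * (Bn n (1+j) : ℂ)) n]
        have e : ∀ j ∈ range n, c^(j+1) * (Bn n (1+(j+1)) : ℂ)
            = c^(j+1) * (Bn n (j+2) : ℂ) := by
          intro j _; rw [show 1+(j+1) = j+2 from by omega]
        rw [Finset.sum_congr rfl e]
        norm_num
      have r2 : ∑ j ∈ range (n+1), c^(j+1) * (Bn n (j+2) : ℂ)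
          = ∑ j ∈ range n, c^(j+1) * (Bn n (j+2) : ℂ) := by
        rw [Finset.sum_range_succ, Bn_big n (n+2) (by omega)]
        push_cast; ring
      have r3 : c * ∑ j ∈ range (n+1), c^j * (Bn n (0+j) : ℂ)
          = ∑ j ∈ range (n+1), c^(j+1) * (Bn n j : ℂ) := by
        rw [Finset.mul_sum]
        apply Finset.sum_congr rfl; intro j _
        rw [Nat.zero_add]; ring
      rw [r1, r2, ← r3]
      ring
    · -- m = m'+1
      have hr := hrec (m+1) (by omega)
      simp only [Nat.add_sub_cancel] at hr
      have hx : (Polynomial.X : Polynomial ℂ)^(n+1) * p (m+1)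
          = Polynomial.X^n * p (m+2) + Polynomial.X^n * p m := by
        rw [hr, pow_succ]; ring
      rw [hx, map_add, ih (m+2), ih m]
      have unf : ∀ j, Bn (n+1) (m+1+j) = Bn n (m+j+2) + Bn n (m+j) := by
        intro j
        have : m+1+j = (m+j)+1 := by omega
        rw [this]
        rfl
      have step : ∀ j ∈ range (n+1+1), c^j * (Bn (n+1) (m+1+j) : ℂ)
          = c^j * (Bn n (m+2+j) : ℂ) + c^j * (Bn n (m+j) : ℂ) := by
        intro j _
        rw [unf j, show m+2+j = m+j+2 from by omega]
        push_cast; ring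
      rw [Finset.sum_congr rfl step, Finset.sum_add_distrib,
        Finset.sum_range_succ (fun j => c^j * (Bn n (m+2+j) : ℂ)) (n+1),
        Finset.sum_range_succ (fun j => c^j * (Bn n (m+j) : ℂ)) (n+1),
        Bn_big n (m+2+(n+1)) (by omega), Bn_big n (m+(n+1)) (by omega)]
      push_cast; ring

/-- **Moments of the spectral functional of a complex rank-one perturbation of the free Jacobi
matrix:** if `S` is a linear functional with `S(p_n p_m) = δ_{n,m}`, then
`S(λ^{2k}) = (2k)! Σ_{j=0}^{k} (2j+1)/((k-j)!(k+j+1)!) · c^{2j}` and, for `k ≥ 1`,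
`S(λ^{2k-1}) = (2k-1)! Σ_{j=1}^{k} 2j/((k-j)!(k+j)!) · c^{2j-1}`. -/
theorem spectral_functional_moments_rank_one_perturbation
    (c : ℂ) (p : ℕ → Polynomial ℂ)
    (hp0 : p 0 = 1) (hp1 : p 1 = Polynomial.X - Polynomial.C c)
    (hrec : ∀ n : ℕ, 1 ≤ n → p (n + 1) = Polynomial.X * p n - p (n - 1))
    (S : Polynomial ℂ →ₗ[ℂ] ℂ)
    (hS : ∀ n m : ℕ, S (p n * p m) = if n = m then 1 else 0) :
    (∀ k : ℕ, S ((Polynomial.X : Polynomial ℂ) ^ (2 * k)) =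
      (((2 * k).factorial : ℂ)) *
        ∑ j ∈ Finset.range (k + 1),
          ((2 * j + 1 : ℕ) : ℂ) /
              (((k - j).factorial : ℂ) * (((k + j + 1).factorial : ℂ))) * c ^ (2 * j)) ∧
    (∀ k : ℕ, 1 ≤ k → S ((Polynomial.X : Polynomial ℂ) ^ (2 * k - 1)) =
      (((2 * k - 1).factorial : ℂ)) *
        ∑ j ∈ Finset.Icc 1 k,
          ((2 * j : ℕ) : ℂ) /
              (((k - j).factorial : ℂ) * (((k + j).factorial : ℂ))) * c ^ (2 * j - 1)) := by
  have key := key_lemma c p hp0 hp1 hrec S hS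
  have mom : ∀ n : ℕ, S ((Polynomial.X : Polynomial ℂ)^n)
      = ∑ j ∈ range (n+1), c^j * (Bn n j : ℂ) := by
    intro n
    have h := key n 0
    rw [hp0, mul_one] at h
    simpa using h
  constructor
  · intro k
    rw [show 2*k = 2*k from rfl, mom (2*k)]
    have hvan : ∀ j, ¬ 2 ∣ j → c^j * (Bn (2*k) j : ℂ) = 0 := by
      intro j hj
      rw [Bn_odd (2*k) j (by omega)]
      push_cast; ring
    rw [show (2*k+1 : ℕ) = 2*k+1 from rfl]
    rw [sum_even_helper (fun j => c^j * (Bn (2*k) j : ℂ)) hvan k, Finset.mul_sum]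
    apply Finset.sum_congr rfl
    intro i hi
    have hik : i ≤ k := by
      have := mem_range.mp hi; omega
    have hf := Bn_fact (2*k) (2*i) (k-i) (by omega)
    rw [show 2*i + (k-i) + 1 = k+i+1 from by omega] at hf
    have hc : (Bn (2*k) (2*i) : ℂ) * (((k-i).factorial : ℂ) * ((k+i+1).factorial : ℂ))
        = ((2*i+1 : ℕ) : ℂ) * ((2*k).factorial : ℂ) := by exact_mod_cast hf
    have hne1 : (((k-i).factorial : ℕ) : ℂ) ≠ 0 := Nat.cast_ne_zero.mpr (Nat.factorial_ne_zero _)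
    have hne2 : (((k+i+1).factorial : ℕ) : ℂ) ≠ 0 := Nat.cast_ne_zero.mpr (Nat.factorial_ne_zero _)
    push_cast at hc ⊢
    field_simp
    linear_combination c^(2*i) * hc
  · intro k hk
    rw [mom (2*k-1), show (2*k-1)+1 = 2*k from by omega]
    have hvan : ∀ j, 2 ∣ j → c^j * (Bn (2*k-1) j : ℂ) = 0 := by
      intro j hj
      rw [Bn_odd (2*k-1) j (by omega)]
      push_cast; ring
    rw [sum_odd_helper (fun j => c^j * (Bn (2*k-1) j : ℂ)) hvan k, Finset.mul_sum]
    apply Finset.sum_congr rfl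
    intro i hi
    have hik : 1 ≤ i ∧ i ≤ k := by
      have := Finset.mem_Icc.mp hi; omega
    have hf := Bn_fact (2*k-1) (2*i-1) (k-i) (by omega)
    rw [show 2*i-1 + (k-i) + 1 = k+i from by omega,
        show (2*i-1)+1 = 2*i from by omega] at hf
    have hc : (Bn (2*k-1) (2*i-1) : ℂ) * (((k-i).factorial : ℂ) * ((k+i).factorial : ℂ))
        = ((2*i : ℕ) : ℂ) * ((2*k-1).factorial : ℂ) := by exact_mod_cast hf
    have hne1 : (((k-i).factorial : ℕ) : ℂ) ≠ 0 := Nat.cast_ne_zero.mpr (Nat.factorial_ne_zero _)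
    have hne2 : (((k+i).factorial : ℕ) : ℂ) ≠ 0 := Nat.cast_ne_zero.mpr (Nat.factorial_ne_zero _)
    push_cast at hc ⊢
    field_simp
    linear_combination c^(2*i-1) * hc
end

section
/- (Factorial estimate.) For all integers n ≥ 1 and m ≥ 0: (2m+n−1)!/(m!·(m+n)!) ≤ 2^n · 4^m / n; equivalently n·(2m+n−1)! ≤ 2^n · 4^m · m! · (m+n)!. -/
lemma choose_le_two_pow' (N k : ℕ) : N.choose k ≤ 2 ^ N := by
  rcases le_or_gt k N with h | h
  · calc N.choose k ≤ ∑ i ∈ Finset.range (N + 1), N.choose i :=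
        Finset.single_le_sum (fun i _ => Nat.zero_le _)
          (Finset.mem_range.mpr (Nat.lt_succ_of_le h))
    _ = 2 ^ N := Nat.sum_range_choose N
  · simp [Nat.choose_eq_zero_of_lt h]

lemma fact_est_nat (n m : ℕ) (hn : 1 ≤ n) :
    n * (2 * m + n - 1).factorial ≤ 2 ^ n * 4 ^ m * m.factorial * (m + n).factorial := by
  have hm : m ≤ 2 * m + n - 1 := by omega
  have hsub : 2 * m + n - 1 - m = m + n - 1 := by omega
  have key : (2 * m + n - 1).choose m * m.factorial * (m + n - 1).factorial
      = (2 * m + n - 1).factorial := by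
    have := Nat.choose_mul_factorial_mul_factorial hm
    rwa [hsub] at this
  have hch : (2 * m + n - 1).choose m ≤ 2 ^ (2 * m + n - 1) := choose_le_two_pow' _ _
  have hfac : (m + n) * (m + n - 1).factorial = (m + n).factorial := by
    have h1 : m + n = (m + n - 1) + 1 := by omega
    rw [h1, Nat.factorial_succ]; simp
  have hpow : 2 ^ n * 4 ^ m = 2 * 2 ^ (2 * m + n - 1) := by
    have : 4 ^ m = 2 ^ (2 * m) := by rw [pow_mul]; norm_num
    rw [this, ← pow_add, ← pow_succ']
    congr 1
    omega
  calc n * (2 * m + n - 1).factorial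
      = n * ((2 * m + n - 1).choose m * m.factorial * (m + n - 1).factorial) := by rw [key]
    _ ≤ (m + n) * (2 ^ (2 * m + n - 1) * m.factorial * (m + n - 1).factorial) := by
        have : n ≤ m + n := by omega
        exact Nat.mul_le_mul this (Nat.mul_le_mul_right _ (Nat.mul_le_mul_right _ hch))
    _ = 2 ^ (2 * m + n - 1) * m.factorial * ((m + n) * (m + n - 1).factorial) := by ring
    _ = 2 ^ (2 * m + n - 1) * m.factorial * (m + n).factorial := by rw [hfac]
    _ ≤ 2 * 2 ^ (2 * m + n - 1) * m.factorial * (m + n).factorial := by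
        refine Nat.mul_le_mul_right _ (Nat.mul_le_mul_right _ ?_)
        exact Nat.le_mul_of_pos_left _ (by norm_num)
    _ = 2 ^ n * 4 ^ m * m.factorial * (m + n).factorial := by rw [hpow]

/-- **Factorial estimate:** for `n ≥ 1` and `m ≥ 0`,
`(2m+n-1)!/(m!(m+n)!) ≤ 2^n · 4^m / n`; equivalently,
`n·(2m+n-1)! ≤ 2^n · 4^m · m! · (m+n)!`. -/
theorem factorial_estimate (n m : ℕ) (hn : 1 ≤ n) :
    (((2 * m + n - 1).factorial : ℚ) / ((m.factorial : ℚ) * ((m + n).factorial : ℚ)) ≤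
      2 ^ n * 4 ^ m / n) ∧
    (n * (2 * m + n - 1).factorial ≤ 2 ^ n * 4 ^ m * m.factorial * (m + n).factorial) := by
  have hnat := fact_est_nat n m hn
  refine ⟨?_, hnat⟩
  have hq : (n : ℚ) * (2 * m + n - 1).factorial
      ≤ 2 ^ n * 4 ^ m * m.factorial * (m + n).factorial := by
    exact_mod_cast hnat
  have hd1 : (0 : ℚ) < (m.factorial : ℚ) * ((m + n).factorial : ℚ) := by
    positivity
  have hd2 : (0 : ℚ) < (n : ℚ) := by exact_mod_cast hn
  rw [div_le_div_iff₀ hd1 hd2]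
  linarith
end

section
/- For every integer n ≥ 1 and every z ∈ ℂ with |z| > 2, the series φ_n(z) := Σ_{m=0}^{∞} [(2m+n−1)!/(m!·(m+n)!)] · z^{−2m} converges absolutely and satisfies |φ_n(z)| ≤ (2^n/n) · |z|²/(|z|² − 4). -/
lemma coeff_bound' (n m : ℕ) (hn : 1 ≤ n) (A : ℝ) (hA : 2 < A) :
    ((2 * m + n - 1).factorial : ℝ) /
        ((m.factorial : ℝ) * ((m + n).factorial : ℝ)) * (A ^ (2 * m))⁻¹
      ≤ (2 ^ n / n) * (4 / A ^ 2) ^ m := by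
  have hA0 : (0:ℝ) < A := by linarith
  have hn0 : (0:ℝ) < (n : ℝ) := by exact_mod_cast hn
  have hnat : n * (2 * m + n - 1).factorial ≤
      2 ^ (2 * m + n) * (m.factorial * (m + n).factorial) := by
    have h1 : (2 * m + n) * (2 * m + n - 1).factorial = (2 * m + n).factorial :=
      Nat.mul_factorial_pred (by omega)
    have h2 := Nat.choose_mul_factorial_mul_factorial (show m ≤ 2 * m + n by omega)
    have h3 : 2 * m + n - m = m + n := by omega
    rw [h3] at h2
    calc n * (2 * m + n - 1).factorial
        ≤ (2 * m + n) * (2 * m + n - 1).factorial :=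
          Nat.mul_le_mul_right _ (by omega)
      _ = (2 * m + n).factorial := h1
      _ = (2 * m + n).choose m * m.factorial * (m + n).factorial := h2.symm
      _ ≤ 2 ^ (2 * m + n) * (m.factorial * (m + n).factorial) := by
          rw [← mul_assoc]
          exact Nat.mul_le_mul_right _ (Nat.mul_le_mul_right _ (choose_le_two_pow' _ _))
  have hreal : (n : ℝ) * (2 * m + n - 1).factorial ≤
      2 ^ (2 * m + n) * (m.factorial * (m + n).factorial) := by exact_mod_cast hnat
  have hfpos : (0:ℝ) < (m.factorial : ℝ) * ((m + n).factorial : ℝ) := by positivity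
  have hc : ((2 * m + n - 1).factorial : ℝ) /
      ((m.factorial : ℝ) * ((m + n).factorial : ℝ)) ≤ 2 ^ (2 * m + n) / n := by
    rw [div_le_div_iff₀ hfpos hn0]
    nlinarith [hreal]
  have hrm : ((4:ℝ) / A ^ 2) ^ m = 4 ^ m / A ^ (2 * m) := by
    rw [div_pow, ← pow_mul]
  calc ((2 * m + n - 1).factorial : ℝ) /
        ((m.factorial : ℝ) * ((m + n).factorial : ℝ)) * (A ^ (2 * m))⁻¹
      ≤ 2 ^ (2 * m + n) / n * (A ^ (2 * m))⁻¹ :=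
        mul_le_mul_of_nonneg_right hc (by positivity)
    _ = (2 ^ n / n) * (4 / A ^ 2) ^ m := by
        rw [hrm, pow_add, pow_mul]
        field_simp
        ring

/-- **Absolute convergence and bound for the auxiliary series `φ_n`:** for `n ≥ 1` and
`|z| > 2`, the series `φ_n(z) = Σ_m (2m+n-1)!/(m!(m+n)!) · z^{-2m}` converges absolutely and
`|φ_n(z)| ≤ (2^n/n) · |z|²/(|z|² - 4)`. -/
theorem phi_series_abs_convergent_and_bounded
    (n : ℕ) (hn : 1 ≤ n) (z : ℂ) (hz : 2 < ‖z‖) :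
    Summable (fun m : ℕ => ‖
      (((2 * m + n - 1).factorial : ℂ) /
          ((m.factorial : ℂ) * ((m + n).factorial : ℂ)) * (z ^ (2 * m))⁻¹)‖) ∧
    ‖(∑' m : ℕ,
        ((2 * m + n - 1).factorial : ℂ) /
          ((m.factorial : ℂ) * ((m + n).factorial : ℂ)) * (z ^ (2 * m))⁻¹)‖ ≤
      (2 ^ n / n) * ((‖z‖) ^ 2 / ((‖z‖) ^ 2 - 4)) := by
  have hA0 : (0:ℝ) < ‖z‖ := lt_trans two_pos hz
  have hA2 : (4:ℝ) < ‖z‖ ^ 2 := by nlinarith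
  have hr0 : (0:ℝ) ≤ 4 / ‖z‖ ^ 2 := by positivity
  have hr1 : 4 / ‖z‖ ^ 2 < 1 := by
    rw [div_lt_one (by linarith)]; linarith
  have key : ∀ m : ℕ, ‖
      (((2 * m + n - 1).factorial : ℂ) /
          ((m.factorial : ℂ) * ((m + n).factorial : ℂ)) * (z ^ (2 * m))⁻¹)‖
      ≤ (2 ^ n / n) * (4 / ‖z‖ ^ 2) ^ m := by
    intro m
    have habs : ‖
        (((2 * m + n - 1).factorial : ℂ) /
            ((m.factorial : ℂ) * ((m + n).factorial : ℂ)) * (z ^ (2 * m))⁻¹)‖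
        = ((2 * m + n - 1).factorial : ℝ) /
            ((m.factorial : ℝ) * ((m + n).factorial : ℝ)) * (‖z‖ ^ (2 * m))⁻¹ := by
      simp [map_mul, map_div₀, map_inv₀, map_pow, Complex.norm_natCast]
    rw [habs]
    exact coeff_bound' n m hn _ hz
  have hg : Summable (fun m : ℕ => (2 ^ n / (n:ℝ)) * (4 / ‖z‖ ^ 2) ^ m) :=
    (summable_geometric_of_lt_one hr0 hr1).mul_left _
  have hf : Summable (fun m : ℕ => ‖
      (((2 * m + n - 1).factorial : ℂ) /
          ((m.factorial : ℂ) * ((m + n).factorial : ℂ)) * (z ^ (2 * m))⁻¹)‖) :=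
    Summable.of_nonneg_of_le (fun m => norm_nonneg _) key hg
  refine ⟨hf, ?_⟩
  have hf' : Summable (fun m : ℕ => ‖((2 * m + n - 1).factorial : ℂ) /
          ((m.factorial : ℂ) * ((m + n).factorial : ℂ)) * (z ^ (2 * m))⁻¹‖) := by
    simpa using hf
  have h1 : ‖ (∑' m : ℕ,
      ((2 * m + n - 1).factorial : ℂ) /
          ((m.factorial : ℂ) * ((m + n).factorial : ℂ)) * (z ^ (2 * m))⁻¹)‖
      ≤ ∑' m : ℕ, ‖
      (((2 * m + n - 1).factorial : ℂ) /
          ((m.factorial : ℂ) * ((m + n).factorial : ℂ)) * (z ^ (2 * m))⁻¹)‖ := by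
    have := norm_tsum_le_tsum_norm hf'
    exact this
  have h2 : (∑' m : ℕ, ‖
      (((2 * m + n - 1).factorial : ℂ) /
          ((m.factorial : ℂ) * ((m + n).factorial : ℂ)) * (z ^ (2 * m))⁻¹)‖)
      ≤ ∑' m : ℕ, (2 ^ n / (n:ℝ)) * (4 / ‖z‖ ^ 2) ^ m :=
    Summable.tsum_le_tsum key hf hg
  have h3 : (∑' m : ℕ, (2 ^ n / (n:ℝ)) * (4 / ‖z‖ ^ 2) ^ m) =
      (2 ^ n / (n:ℝ)) * (‖z‖ ^ 2 / (‖z‖ ^ 2 - 4)) := by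
    rw [tsum_mul_left, tsum_geometric_of_lt_one hr0 hr1]
    congr 1
    field_simp
  linarith
end

section
/- Let c ∈ ℂ, R₀ := max(2, 2|c|), and define w(z) := Σ_{n=1}^{∞} n·c^{n−1}·z^{−n}·φ_n(z) for |z| > R₀, where φ_n(z) := Σ_{m=0}^{∞} [(2m+n−1)!/(m!·(m+n)!)] · z^{−2m}. Define s_0 := 1, s_{2k} := (2k)!·Σ_{j=0}^{k} [(2j+1)/((k−j)!·(k+j+1)!)]·c^{2j} for k ≥ 1, and s_{2k−1} := (2k−1)!·Σ_{j=1}^{k} [2j/((k−j)!·(k+j)!)]·c^{2j−1} for k ≥ 1. Then for every R > R₀ and every integer d: (1/(2πi)) ∮_{|z|=R} z^d · w(z) dz equals s_d if d ≥ 0, and equals 0 if d ≤ −1. Equivalently, w has the Laurent expansion w(z) = Σ_{k=0}^{∞} s_k · z^{−k−1} on |z| > R₀. -/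
/-- The auxiliary function `φ_n(z) = Σ_{m=0}^∞ (2m+n-1)!/(m!(m+n)!) · z^{-2m}` (for `|z| > 2`). -/
noncomputable def phiFun (n : ℕ) (z : ℂ) : ℂ :=
  ∑' m : ℕ, ((2 * m + n - 1).factorial : ℂ) /
    ((m.factorial : ℂ) * ((m + n).factorial : ℂ)) * (z ^ (2 * m))⁻¹

/-- The complex weight `w(z) = Σ_{n=1}^∞ n·c^{n-1}·z^{-n}·φ_n(z)` (for `|z| > max(2, 2|c|)`),
written here with the summation index shifted to start at `0`. -/
noncomputable def wFun (c : ℂ) (z : ℂ) : ℂ :=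
  ∑' n : ℕ, ((n + 1 : ℕ) : ℂ) * c ^ n * (z ^ (n + 1))⁻¹ * phiFun (n + 1) z

/-- The moment sequence: `s_0 = 1`,
`s_{2k} = (2k)! Σ_{j=0}^{k} (2j+1)/((k-j)!(k+j+1)!) c^{2j}` and
`s_{2k-1} = (2k-1)! Σ_{j=1}^{k} 2j/((k-j)!(k+j)!) c^{2j-1}`. -/
noncomputable def sMom (c : ℂ) (k : ℕ) : ℂ :=
  if Even k then
    ((k.factorial : ℂ)) * ∑ j ∈ Finset.range (k / 2 + 1),
      ((2 * j + 1 : ℕ) : ℂ) /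
        (((k / 2 - j).factorial : ℂ) * ((k / 2 + j + 1).factorial : ℂ)) * c ^ (2 * j)
  else
    ((k.factorial : ℂ)) * ∑ j ∈ Finset.Icc 1 ((k + 1) / 2),
      ((2 * j : ℕ) : ℂ) /
        ((((k + 1) / 2 - j).factorial : ℂ) * (((k + 1) / 2 + j).factorial : ℂ)) * c ^ (2 * j - 1)

open MeasureTheory Complex
open scoped NNReal ENNReal

/-! ### Auxiliary combinatorial identity -/

lemma sMom_eq (c : ℂ) (k : ℕ) :
    sMom c k = ∑ m ∈ Finset.range (k / 2 + 1),
      ((k - 2 * m + 1 : ℕ) : ℂ) * c ^ (k - 2 * m) *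
        ((k.factorial : ℂ) / ((m.factorial : ℂ) * ((k - m + 1).factorial : ℂ))) := by
  by_cases h : Even k
  · obtain ⟨K, rfl⟩ := h
    have hK2 : (K + K) / 2 = K := by omega
    rw [sMom, if_pos ⟨K, rfl⟩, hK2, Finset.mul_sum,
      ← Finset.sum_range_reflect (fun m => ((K + K - 2 * m + 1 : ℕ) : ℂ) * c ^ (K + K - 2 * m) *
        (((K + K).factorial : ℂ) / ((m.factorial : ℂ) * ((K + K - m + 1).factorial : ℂ)))) (K + 1)]
    refine Finset.sum_congr rfl fun j hj => ?_
    simp only [Finset.mem_range] at hj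
    have e0 : K + 1 - 1 - j = K - j := by omega
    have e1 : K + K - 2 * (K - j) + 1 = 2 * j + 1 := by omega
    have e2 : K + K - 2 * (K - j) = 2 * j := by omega
    have e3 : K + K - (K - j) + 1 = K + j + 1 := by omega
    rw [e0, e1, e2, e3]
    ring
  · obtain ⟨K, rfl⟩ : ∃ K, k = 2 * K + 1 := Nat.not_even_iff_odd.mp h
    have hK1 : (2 * K + 1 + 1) / 2 = K + 1 := by omega
    have hK2 : (2 * K + 1) / 2 = K := by omega
    rw [sMom, if_neg h, hK1, hK2, Finset.mul_sum,
      show Finset.Icc 1 (K+1) = Finset.Ico 1 (K+2) by rw [← Finset.Ico_add_one_right_eq_Icc]; rfl,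
      Finset.sum_Ico_eq_sum_range,
      ← Finset.sum_range_reflect (fun m => ((2 * K + 1 - 2 * m + 1 : ℕ) : ℂ) * c ^ (2 * K + 1 - 2 * m) *
        (((2 * K + 1).factorial : ℂ) / ((m.factorial : ℂ) * ((2 * K + 1 - m + 1).factorial : ℂ)))) (K + 1)]
    have hc : K + 1 + 1 - 1 = K + 1 := by omega
    rw [hc]
    refine Finset.sum_congr rfl fun i hi => ?_
    simp only [Finset.mem_range] at hi
    have e0 : K + 1 - 1 - i = K - i := by omega
    have e1 : 2 * K + 1 - 2 * (K - i) + 1 = 2 * (1 + i) := by omega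
    have e2 : 2 * K + 1 - 2 * (K - i) = 2 * (1 + i) - 1 := by omega
    have e3 : 2 * K + 1 - (K - i) + 1 = K + 1 + (1 + i) := by omega
    have e4 : K + 1 - (1 + i) = K - i := by omega
    rw [e0, e1, e2, e3, e4]
    ring

/-! ### The double series and its summability -/

lemma fact_ratio_le (n m : ℕ) :
    ((2 * m + n).factorial : ℝ) / ((m.factorial : ℝ) * ((m + n + 1).factorial : ℝ))
      ≤ 2 ^ n * 4 ^ m := by
  have hpos : (0:ℝ) < (m.factorial : ℝ) * ((m + n + 1).factorial : ℝ) := by positivity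
  rw [div_le_iff₀ hpos]
  have hnat : (2 * m + n).factorial ≤ (2 ^ n * 4 ^ m) * (m.factorial * (m + n + 1).factorial) := by
    have h1 : (2 * m + n).factorial = (2 * m + n).choose m * m.factorial * (m + n).factorial := by
      have hm : m ≤ 2 * m + n := by omega
      have := Nat.choose_mul_factorial_mul_factorial hm
      have e : 2 * m + n - m = m + n := by omega
      rw [e] at this
      omega
    have h2 : (2 * m + n).choose m ≤ 2 ^ (2 * m + n) := by
      calc (2 * m + n).choose m ≤ ∑ i ∈ Finset.range (2 * m + n + 1), (2 * m + n).choose i :=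
            Finset.single_le_sum (fun i _ => Nat.zero_le _) (by simp [Finset.mem_range]; omega)
        _ = 2 ^ (2 * m + n) := Nat.sum_range_choose _
    have h3 : (m + n).factorial ≤ (m + n + 1).factorial := Nat.factorial_le (by omega)
    calc (2 * m + n).factorial = (2 * m + n).choose m * m.factorial * (m + n).factorial := h1
      _ ≤ 2 ^ (2 * m + n) * m.factorial * (m + n + 1).factorial := by
          exact Nat.mul_le_mul (Nat.mul_le_mul h2 le_rfl) h3
      _ = (2 ^ n * 4 ^ m) * (m.factorial * (m + n + 1).factorial) := by
          rw [pow_add]; ring_nf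
          rw [show (4:ℕ) ^ m = 2 ^ (2 * m) by rw [pow_mul]; norm_num]
          ring
  calc ((2 * m + n).factorial : ℝ) ≤ ((2 ^ n * 4 ^ m) * (m.factorial * (m + n + 1).factorial) : ℕ) := by
        exact_mod_cast hnat
    _ = 2 ^ n * 4 ^ m * ((m.factorial : ℝ) * ((m + n + 1).factorial : ℝ)) := by push_cast; ring

/-- The general term of the double series defining `wFun`. -/
noncomputable def termF (c z : ℂ) (p : ℕ × ℕ) : ℂ :=
  (((p.1 + 1 : ℕ) : ℂ) * c ^ p.1 * (z ^ (p.1 + 1))⁻¹) *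
    (((2 * p.2 + (p.1 + 1) - 1).factorial : ℂ) /
      ((p.2.factorial : ℂ) * ((p.2 + (p.1 + 1)).factorial : ℂ)) * (z ^ (2 * p.2))⁻¹)

lemma termF_norm_le (c z : ℂ) (hz2 : 2 < ‖z‖) (hzc : 2 * ‖c‖ < ‖z‖)
    (p : ℕ × ℕ) :
    ‖termF c z p‖ ≤ ((p.1 + 1 : ℝ) * (2 * ‖c‖ / ‖z‖) ^ p.1) *
      (4 / ‖z‖ ^ 2) ^ p.2 := by
  obtain ⟨n, m⟩ := p
  set A := ‖z‖ with hA
  have hA0 : (0:ℝ) < A := lt_trans two_pos hz2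
  have e1 : 2 * m + (n + 1) - 1 = 2 * m + n := by omega
  have hnorm : ‖termF c z (n, m)‖ =
      ((n + 1 : ℝ) * (‖c‖) ^ n * (A ^ (n + 1))⁻¹) *
        (((2 * m + n).factorial : ℝ) / ((m.factorial : ℝ) * ((m + (n + 1)).factorial : ℝ)) *
          (A ^ (2 * m))⁻¹) := by
    simp only [termF, e1, norm_mul, norm_div, norm_inv, norm_pow,
      Complex.norm_natCast]
    push_cast
    ring
  rw [hnorm]
  have hratio := fact_ratio_le n m
  have e2 : m + (n + 1) = m + n + 1 := by omega
  rw [e2]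
  have hR : ((2 * m + n).factorial : ℝ) / ((m.factorial : ℝ) * ((m + n + 1).factorial : ℝ)) *
      (A ^ (2 * m))⁻¹ ≤ (2 ^ n * 4 ^ m) * (A ^ (2 * m))⁻¹ := by
    gcongr
  calc ((n + 1 : ℝ) * (‖c‖) ^ n * (A ^ (n + 1))⁻¹) *
        (((2 * m + n).factorial : ℝ) / ((m.factorial : ℝ) * ((m + n + 1).factorial : ℝ)) *
          (A ^ (2 * m))⁻¹)
      ≤ ((n + 1 : ℝ) * (‖c‖) ^ n * (A ^ (n + 1))⁻¹) *
        ((2 ^ n * 4 ^ m) * (A ^ (2 * m))⁻¹) := by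
        apply mul_le_mul_of_nonneg_left hR
        positivity
    _ = (((n + 1 : ℝ) * (2 * ‖c‖ / A) ^ n) * ((4 / A ^ 2) ^ m)) * A⁻¹ := by
        rw [div_pow, div_pow, ← pow_mul]
        field_simp
        ring
    _ ≤ ((n + 1 : ℝ) * (2 * ‖c‖ / A) ^ n) * ((4 / A ^ 2) ^ m) := by
        apply mul_le_of_le_one_right (by positivity)
        rw [inv_le_one_iff₀]
        right; linarith

lemma summable_termF (c z : ℂ) (hz : max 2 (2 * ‖c‖) < ‖z‖) :
    Summable (fun p => ‖termF c z p‖) := by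
  have hz2 : 2 < ‖z‖ := lt_of_le_of_lt (le_max_left _ _) hz
  have hzc : 2 * ‖c‖ < ‖z‖ := lt_of_le_of_lt (le_max_right _ _) hz
  have hA0 : (0:ℝ) < ‖z‖ := lt_trans two_pos hz2
  set q : ℝ := 2 * ‖c‖ / ‖z‖ with hq
  set r : ℝ := 4 / ‖z‖ ^ 2 with hr
  have hq0 : 0 ≤ q := by positivity
  have hq1 : q < 1 := by rw [hq, div_lt_one hA0]; exact hzc
  have hr0 : 0 ≤ r := by positivity
  have hr1 : r < 1 := by
    rw [hr, div_lt_one (by positivity)]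
    nlinarith
  have hf : Summable (fun n : ℕ => (n + 1 : ℝ) * q ^ n) := by
    have h1 : Summable (fun n : ℕ => (n : ℝ) ^ 1 * q ^ n) :=
      summable_pow_mul_geometric_of_norm_lt_one 1 (by rwa [Real.norm_eq_abs, _root_.abs_of_nonneg hq0])
    have h2 : Summable (fun n : ℕ => q ^ n) := summable_geometric_of_lt_one hq0 hq1
    have := h1.add h2
    refine this.congr fun n => by ring
  have hg : Summable (fun m : ℕ => r ^ m) := summable_geometric_of_lt_one hr0 hr1
  have hfg : Summable (fun p : ℕ × ℕ => ((p.1 + 1 : ℝ) * q ^ p.1) * r ^ p.2) :=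
    hf.mul_of_nonneg hg (fun n => by positivity) (fun m => by positivity)
  exact Summable.of_nonneg_of_le (fun p => norm_nonneg _)
    (fun p => termF_norm_le c z hz2 hzc p) hfg

/-! ### Rearranging the double series by total degree -/

/-- The general term after grouping by the total power `k` of `z⁻¹`. -/
noncomputable def termG (c z : ℂ) (p : ℕ × ℕ) : ℂ :=
  if 2 * p.2 ≤ p.1 then
    ((p.1 - 2 * p.2 + 1 : ℕ) : ℂ) * c ^ (p.1 - 2 * p.2) *
      ((p.1.factorial : ℂ) / ((p.2.factorial : ℂ) * ((p.1 - p.2 + 1).factorial : ℂ))) *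
      (z ^ (p.1 + 1))⁻¹
  else 0

def iotaP : ℕ × ℕ → ℕ × ℕ := fun p => (p.1 + 2 * p.2, p.2)

lemma iotaP_injective : Function.Injective iotaP := by
  rintro ⟨a, b⟩ ⟨a', b'⟩ h
  simp only [iotaP, Prod.mk.injEq] at h
  exact Prod.ext (by omega) h.2

lemma termG_comp (c z : ℂ) (p : ℕ × ℕ) : termG c z (iotaP p) = termF c z p := by
  obtain ⟨n, m⟩ := p
  simp only [termG, termF, iotaP, if_pos (by omega : 2 * m ≤ n + 2 * m)]
  simp only [show 2 * m ≤ n + 2 * m by omega, if_true]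
  have e1 : n + 2 * m - 2 * m = n := by omega
  have e2 : n + 2 * m - m + 1 = m + (n + 1) := by omega
  have e3 : 2 * m + (n + 1) - 1 = n + 2 * m := by omega
  have e4 : n + 2 * m + 1 = (n + 1) + 2 * m := by omega
  rw [e1, e2, e3, e4, pow_add, mul_inv]
  ring

lemma termG_support (c z : ℂ) :
    Function.support (termG c z) ⊆ Set.range iotaP := by
  rintro ⟨k, m⟩ h
  simp only [Function.mem_support, termG] at h
  by_cases hm : 2 * m ≤ k
  · exact ⟨(k - 2 * m, m), by simp only [iotaP]; exact Prod.ext (by omega) rfl⟩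
  · simp [if_neg hm] at h

section main
variable (c z : ℂ) (hz : max 2 (2 * ‖c‖) < ‖z‖)
include hz

lemma summable_termG : Summable (fun p => ‖termG c z p‖) := by
  have h1 : Summable (fun p => ‖termG c z (iotaP p)‖) := by
    simpa only [termG_comp] using summable_termF c z hz
  refine (Function.Injective.summable_iff iotaP_injective ?_).mp h1
  intro x hx
  by_contra h
  exact hx (termG_support c z (by simpa [Function.mem_support] using h))

lemma wFun_eq_tsum_termF : wFun c z = ∑' p : ℕ × ℕ, termF c z p := by
  have hs := summable_termF c z hz
  rw [wFun, Summable.tsum_prod' (hs.of_norm)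
    (fun n => (((summable_prod_of_nonneg (fun p => norm_nonneg _)).mp hs).1 n).of_norm)]
  refine tsum_congr fun n => ?_
  rw [phiFun, ← tsum_mul_left]
  rfl

omit hz in
lemma tsum_termG_fiber (k : ℕ) :
    ∑' m : ℕ, termG c z (k, m) = sMom c k * (z ^ (k + 1))⁻¹ := by
  rw [tsum_eq_sum (s := Finset.range (k / 2 + 1))
    (fun m hm => by
      simp only [Finset.mem_range] at hm
      simp only [termG, if_neg (by omega : ¬ 2 * m ≤ k)])]
  rw [sMom_eq, Finset.sum_mul]
  refine Finset.sum_congr rfl fun m hm => ?_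
  simp only [Finset.mem_range] at hm
  simp only [termG, if_pos (by omega : 2 * m ≤ k)]

lemma wFun_laurent : wFun c z = ∑' k : ℕ, sMom c k * (z ^ (k + 1))⁻¹ := by
  rw [wFun_eq_tsum_termF c z hz]
  have h1 : ∑' p : ℕ × ℕ, termF c z p = ∑' p : ℕ × ℕ, termG c z p := by
    rw [tsum_congr (fun p => (termG_comp c z p).symm)]
    exact Function.Injective.tsum_eq iotaP_injective (termG_support c z)
  have hsG := summable_termG c z hz
  rw [h1, Summable.tsum_prod' (hsG.of_norm)
    (fun k => (((summable_prod_of_nonneg (fun p => norm_nonneg _)).mp hsG).1 k).of_norm)]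
  exact tsum_congr fun k => tsum_termG_fiber c z k

lemma summable_fiber_norms :
    Summable (fun k : ℕ => ∑' m : ℕ, ‖termG c z (k, m)‖) := by
  have h := summable_termG c z hz
  exact ((summable_prod_of_nonneg (fun p => norm_nonneg _)).mp h).2

lemma sMom_norm_le (k : ℕ) :
    ‖sMom c k * (z ^ (k + 1))⁻¹‖ ≤ ∑' m : ℕ, ‖termG c z (k, m)‖ := by
  rw [← tsum_termG_fiber c z k]
  exact norm_tsum_le_tsum_norm (by
    have h := summable_termG c z hz
    exact (((summable_prod_of_nonneg (fun p => norm_nonneg _)).mp h).1 k))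

lemma summable_sMom_norm :
    Summable (fun k : ℕ => ‖sMom c k * (z ^ (k + 1))⁻¹‖) :=
  Summable.of_nonneg_of_le (fun k => norm_nonneg _) (sMom_norm_le c z hz)
    (summable_fiber_norms c z hz)

end main

/-! ### The basic circle integral -/

lemma intJ (n : ℤ) :
    (∫ θ in (0:ℝ)..(2 * Real.pi), Complex.exp ((n : ℂ) * ((θ : ℂ) * Complex.I)))
      = if n = 0 then ((2 * Real.pi : ℝ) : ℂ) else 0 := by
  by_cases hn : n = 0
  · simp [hn]
  · rw [if_neg hn]
    have hc : (n : ℂ) * Complex.I ≠ 0 := by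
      simp [Complex.I_ne_zero, hn]
    have he : ∀ θ : ℝ, (n : ℂ) * ((θ : ℂ) * Complex.I) = ((n : ℂ) * Complex.I) * (θ : ℝ) := by
      intro θ; ring
    rw [intervalIntegral.integral_congr (fun θ _ => by rw [he θ])]
    rw [integral_exp_mul_complex hc]
    have h1 : Complex.exp ((n : ℂ) * Complex.I * ((2 * Real.pi : ℝ) : ℂ)) = 1 := by
      have := Complex.exp_int_mul_two_pi_mul_I n
      rw [← this]
      congr 1
      push_cast
      ring
    have h2 : Complex.exp ((n : ℂ) * Complex.I * ((0 : ℝ) : ℂ)) = 1 := by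
      norm_num
    rw [h1, h2]
    simp

section circle
variable (c : ℂ) (R : ℝ) (hR : max 2 (2 * ‖c‖) < R)

lemma abs_circle (hR : max 2 (2 * ‖c‖) < R) (θ : ℝ) :
    ‖(R : ℂ) * Complex.exp ((θ : ℂ) * Complex.I)‖ = R := by
  have hR0 : (0:ℝ) < R := lt_of_le_of_lt (le_trans (by norm_num) (le_max_left _ _)) hR
  rw [norm_mul, Complex.norm_exp_ofReal_mul_I, Complex.norm_real, Real.norm_eq_abs, _root_.abs_of_pos hR0, mul_one]

include hR

lemma circle_ne_zero (θ : ℝ) : (R : ℂ) * Complex.exp ((θ : ℂ) * Complex.I) ≠ 0 := by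
  intro h
  have := abs_circle c R hR θ
  rw [h] at this
  simp at this
  have : (2:ℝ) < R := lt_of_le_of_lt (le_max_left _ _) hR
  linarith

lemma integrand_expand (d : ℤ) (θ : ℝ) :
    ((R : ℂ) * Complex.exp ((θ : ℂ) * Complex.I)) ^ d *
      wFun c ((R : ℂ) * Complex.exp ((θ : ℂ) * Complex.I)) *
      (Complex.I * (R : ℂ) * Complex.exp ((θ : ℂ) * Complex.I))
    = ∑' k : ℕ, sMom c k * Complex.I * ((R : ℂ)) ^ (d - k) *
        Complex.exp (((d - k : ℤ) : ℂ) * ((θ : ℂ) * Complex.I)) := by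
  set z : ℂ := (R : ℂ) * Complex.exp ((θ : ℂ) * Complex.I) with hzdef
  have hz0 : z ≠ 0 := circle_ne_zero c R hR θ
  have habs : ‖z‖ = R := abs_circle c R hR θ
  have hwz : wFun c z = ∑' k : ℕ, sMom c k * (z ^ (k + 1))⁻¹ :=
    wFun_laurent c z (by rw [habs]; exact hR)
  rw [hwz, ← tsum_mul_left, ← tsum_mul_right]
  refine tsum_congr fun k => ?_
  have e1 : z ^ d * (sMom c k * (z ^ (k + 1))⁻¹) * (Complex.I * (R : ℂ) *
      Complex.exp ((θ : ℂ) * Complex.I)) = sMom c k * Complex.I * (z ^ d * (z ^ (k + 1))⁻¹ * z) := by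
    rw [hzdef]; ring
  rw [e1]
  have e2 : z ^ d * (z ^ (k + 1))⁻¹ * z = z ^ (d - k) := by
    have h0 : (z ^ (k + 1))⁻¹ = z ^ (-((k : ℤ) + 1)) := by
      rw [← zpow_natCast z (k + 1), ← zpow_neg]
      norm_num
    rw [h0]
    calc z ^ d * z ^ (-((k : ℤ) + 1)) * z
        = z ^ d * z ^ (-((k : ℤ) + 1)) * z ^ (1 : ℤ) := by rw [zpow_one]
      _ = z ^ (d + -((k : ℤ) + 1) + 1) := by rw [← zpow_add₀ hz0, ← zpow_add₀ hz0]
      _ = z ^ (d - k) := by congr 1; ring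
  rw [e2, hzdef, mul_zpow]
  have e3 : (Complex.exp ((θ : ℂ) * Complex.I)) ^ (d - (k:ℤ)) =
      Complex.exp (((d - k : ℤ) : ℂ) * ((θ : ℂ) * Complex.I)) := by
    rw [← Complex.exp_int_mul]
  rw [e3]
  ring

end circle

/-! ### Exchanging sum and integral, and computing the moments -/

noncomputable def gTerm (c : ℂ) (R : ℝ) (d : ℤ) (k : ℕ) (θ : ℝ) : ℂ :=
  sMom c k * Complex.I * ((R : ℂ)) ^ (d - k) *
    Complex.exp (((d - k : ℤ) : ℂ) * ((θ : ℂ) * Complex.I))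

section main2
variable (c : ℂ) (R : ℝ) (hR : max 2 (2 * ‖c‖) < R)
include hR

lemma Rpos : (0:ℝ) < R := lt_of_lt_of_le two_pos (le_of_lt (lt_of_le_of_lt (le_max_left _ _) hR))

lemma gTerm_norm (d : ℤ) (k : ℕ) (θ : ℝ) :
    ‖gTerm c R d k θ‖ = ‖sMom c k‖ * R ^ (d - (k:ℤ)) := by
  have hR0' : (0:ℝ) < R := Rpos c R hR
  have he : (((d - k : ℤ) : ℂ) * ((θ : ℂ) * Complex.I)) = (((d - (k:ℤ)) * θ : ℝ) : ℂ) * Complex.I := by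
    push_cast; ring
  rw [gTerm, norm_mul, norm_mul, he,
    Complex.norm_exp_ofReal_mul_I, mul_one, norm_mul,
    Complex.norm_I, mul_one, norm_zpow, Complex.norm_real, Real.norm_eq_abs,
    _root_.abs_of_pos hR0']

omit hR in
lemma gTerm_continuous (d : ℤ) (k : ℕ) : Continuous (gTerm c R d k) := by
  apply Continuous.mul continuous_const
  exact Complex.continuous_exp.comp (Continuous.mul continuous_const
    ((Complex.continuous_ofReal).mul continuous_const))

lemma summable_gnorm (d : ℤ) :
    Summable (fun k : ℕ => ‖sMom c k‖ * R ^ (d - (k:ℤ))) := by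
  have hR0' : (0:ℝ) < R := Rpos c R hR
  have habsR : ‖(R:ℂ)‖ = R := by rw [Complex.norm_real, Real.norm_eq_abs, _root_.abs_of_pos hR0']
  have h1 : Summable (fun k : ℕ => ‖sMom c k * (((R:ℂ)) ^ (k + 1))⁻¹‖) :=
    summable_sMom_norm c (R:ℂ) (by rw [habsR]; exact hR)
  have h2 := h1.mul_right (R ^ (d + 1))
  refine h2.congr fun k => ?_
  have e1 : ‖sMom c k * (((R:ℂ)) ^ (k + 1))⁻¹‖ = ‖sMom c k‖ * (R ^ (k + 1))⁻¹ := by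
    rw [norm_mul, norm_inv, norm_pow, Complex.norm_real, Real.norm_eq_abs,
      _root_.abs_of_pos hR0']
  rw [e1]
  have e2 : R ^ (d - (k:ℤ)) = (R ^ (k + 1))⁻¹ * R ^ (d + 1) := by
    rw [← zpow_natCast R (k + 1), ← zpow_neg, ← zpow_add₀ (ne_of_gt hR0')]
    congr 1
    push_cast
    ring
  rw [e2]
  ring

omit hR in
lemma integral_gTerm (d : ℤ) (k : ℕ) :
    (∫ θ in (0:ℝ)..(2 * Real.pi), gTerm c R d k θ)
      = sMom c k * Complex.I * ((R : ℂ)) ^ (d - k) *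
        (if (d - (k:ℤ)) = 0 then ((2 * Real.pi : ℝ) : ℂ) else 0) := by
  simp only [gTerm]
  rw [intervalIntegral.integral_const_mul]
  rw [intJ (d - k)]

lemma moment_general (d : ℤ) :
    (∫ θ in (0:ℝ)..(2 * Real.pi),
        ((R : ℂ) * Complex.exp ((θ : ℂ) * Complex.I)) ^ d *
          wFun c ((R : ℂ) * Complex.exp ((θ : ℂ) * Complex.I)) *
          (Complex.I * (R : ℂ) * Complex.exp ((θ : ℂ) * Complex.I)))
      = if 0 ≤ d then (2 * Real.pi * Complex.I) * sMom c d.toNat else 0 := by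
  have h2pi : (0:ℝ) ≤ 2 * Real.pi := by positivity
  have hexp : ∀ θ : ℝ, ((R : ℂ) * Complex.exp ((θ : ℂ) * Complex.I)) ^ d *
      wFun c ((R : ℂ) * Complex.exp ((θ : ℂ) * Complex.I)) *
      (Complex.I * (R : ℂ) * Complex.exp ((θ : ℂ) * Complex.I)) = ∑' k : ℕ, gTerm c R d k θ :=
    fun θ => integrand_expand c R hR d θ
  rw [intervalIntegral.integral_congr (fun θ _ => hexp θ)]
  rw [intervalIntegral.integral_of_le h2pi]
  rw [MeasureTheory.integral_tsum
    (fun k => (gTerm_continuous c R d k).aestronglyMeasurable)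
    ?_]
  · have : ∀ k : ℕ, (∫ θ in Set.Ioc (0:ℝ) (2 * Real.pi), gTerm c R d k θ)
        = sMom c k * Complex.I * ((R : ℂ)) ^ (d - k) *
          (if (d - (k:ℤ)) = 0 then ((2 * Real.pi : ℝ) : ℂ) else 0) := by
      intro k
      rw [← intervalIntegral.integral_of_le h2pi]
      exact integral_gTerm c R d k
    rw [tsum_congr this]
    by_cases hd : 0 ≤ d
    · rw [if_pos hd]
      rw [tsum_eq_single d.toNat ?_]
      · rw [if_pos (by omega), show d - (d.toNat : ℤ) = 0 by omega, zpow_zero]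
        push_cast
        ring
      · intro k hk
        rw [if_neg (by omega), mul_zero]
    · rw [if_neg hd]
      have : ∀ k : ℕ, sMom c k * Complex.I * ((R : ℂ)) ^ (d - k) *
          (if (d - (k:ℤ)) = 0 then ((2 * Real.pi : ℝ) : ℂ) else 0) = 0 := by
        intro k
        rw [if_neg (by omega), mul_zero]
      rw [tsum_congr this, tsum_zero]
  · have hlint : ∀ k : ℕ, (∫⁻ θ in Set.Ioc (0:ℝ) (2 * Real.pi), ‖gTerm c R d k θ‖₊)
        = ((‖sMom c k‖₊ * (‖(R:ℝ) ^ (d - (k:ℤ))‖₊) : ℝ≥0) : ENNReal) * ENNReal.ofReal (2 * Real.pi) := by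
      intro k
      have hnn : ∀ θ : ℝ, ‖gTerm c R d k θ‖₊ = ‖sMom c k‖₊ * ‖(R:ℝ) ^ (d - (k:ℤ))‖₊ := by
        intro θ
        apply NNReal.coe_injective
        simp only [NNReal.coe_mul, coe_nnnorm]
        rw [gTerm_norm c R hR d k θ, Real.norm_eq_abs,
          _root_.abs_of_pos (zpow_pos (Rpos c R hR) _)]
      have : ∀ θ : ℝ, (‖gTerm c R d k θ‖₊ : ENNReal)
          = ((‖sMom c k‖₊ * ‖(R:ℝ) ^ (d - (k:ℤ))‖₊ : ℝ≥0) : ENNReal) := fun θ => by rw [hnn θ]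
      rw [MeasureTheory.lintegral_congr this, MeasureTheory.lintegral_const]
      rw [Measure.restrict_apply MeasurableSet.univ, Set.univ_inter, Real.volume_Ioc]
      norm_num
    simp only [enorm_eq_nnnorm]
    rw [tsum_congr hlint]
    rw [ENNReal.tsum_mul_right]
    apply ENNReal.mul_ne_top ?_ ENNReal.ofReal_ne_top
    rw [ENNReal.tsum_coe_ne_top_iff_summable]
    rw [← NNReal.summable_coe]
    refine (summable_gnorm c R hR d).congr fun k => ?_
    simp only [NNReal.coe_mul, coe_nnnorm, Real.norm_eq_abs]
    rw [_root_.abs_of_pos (zpow_pos (Rpos c R hR) _)]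

end main2

/-- **Moments of the complex weight `w` on circles `|z| = R`, `R > R₀ = max(2, 2|c|)`:**
`(1/(2πi)) ∮_{|z|=R} z^d w(z) dz = s_d` for `d ≥ 0` and `= 0` for `d ≤ -1`; equivalently, `w`
has the Laurent expansion `w(z) = Σ_{k=0}^∞ s_k z^{-k-1}` on `|z| > R₀`. -/
theorem wFun_moments (c : ℂ) (R : ℝ) (hR : max 2 (2 * ‖c‖) < R) :
    (∀ d : ℕ,
      (2 * Real.pi * Complex.I)⁻¹ *
        ∫ θ in (0:ℝ)..(2 * Real.pi),
          ((R : ℂ) * Complex.exp ((θ : ℂ) * Complex.I)) ^ d *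
            wFun c ((R : ℂ) * Complex.exp ((θ : ℂ) * Complex.I)) *
            (Complex.I * (R : ℂ) * Complex.exp ((θ : ℂ) * Complex.I))
        = sMom c d) ∧
    (∀ d : ℤ, d < 0 →
      (2 * Real.pi * Complex.I)⁻¹ *
        ∫ θ in (0:ℝ)..(2 * Real.pi),
          ((R : ℂ) * Complex.exp ((θ : ℂ) * Complex.I)) ^ d *
            wFun c ((R : ℂ) * Complex.exp ((θ : ℂ) * Complex.I)) *
            (Complex.I * (R : ℂ) * Complex.exp ((θ : ℂ) * Complex.I))
        = 0) ∧
    (∀ z : ℂ, max 2 (2 * ‖c‖) < ‖z‖ →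
      wFun c z = ∑' k : ℕ, sMom c k * (z ^ (k + 1))⁻¹) := by
  have h2piI : (2 * (Real.pi : ℂ) * Complex.I) ≠ 0 := by
    simp [Complex.I_ne_zero, Real.pi_ne_zero, Complex.ofReal_ne_zero]
  refine ⟨?_, ?_, fun z hz => wFun_laurent c z hz⟩
  · intro d
    have h := moment_general c R hR (d : ℤ)
    rw [if_pos (by positivity), Int.toNat_natCast] at h
    have hcongr : ∀ θ : ℝ,
        ((R : ℂ) * Complex.exp ((θ : ℂ) * Complex.I)) ^ d *
          wFun c ((R : ℂ) * Complex.exp ((θ : ℂ) * Complex.I)) *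
          (Complex.I * (R : ℂ) * Complex.exp ((θ : ℂ) * Complex.I))
        = ((R : ℂ) * Complex.exp ((θ : ℂ) * Complex.I)) ^ ((d : ℤ)) *
          wFun c ((R : ℂ) * Complex.exp ((θ : ℂ) * Complex.I)) *
          (Complex.I * (R : ℂ) * Complex.exp ((θ : ℂ) * Complex.I)) := by
      intro θ
      rw [zpow_natCast]
    rw [intervalIntegral.integral_congr (fun θ _ => hcongr θ), h, ← mul_assoc,
      inv_mul_cancel₀ h2piI, one_mul]
  · intro d hd
    have h := moment_general c R hR d
    rw [if_neg (by omega)] at h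
    rw [h, mul_zero]
end

section
/- Let c ∈ ℂ, R₀ := max(2, 2|c|), and let p_n ∈ ℂ[z] (n ≥ 0) be defined by p_0 = 1, p_1 = z − c, and p_{n+1} = z·p_n − p_{n−1} for n ≥ 1. Define w(z) := Σ_{n=1}^{∞} n·c^{n−1}·z^{−n}·φ_n(z) for |z| > R₀, where φ_n(z) := Σ_{m=0}^{∞} [(2m+n−1)!/(m!·(m+n)!)] · z^{−2m}. Then for every R > R₀ and all n, m ≥ 0: (1/(2πi)) ∮_{|z|=R} p_n(z)·p_m(z)·w(z) dz = δ_{n,m}. -/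
open MeasureTheory intervalIntegral

noncomputable def bet (M m : ℕ) : ℂ :=
  (M : ℂ) * ((2*m + M - 1).factorial : ℂ) / ((m.factorial : ℂ) * ((m+M).factorial : ℂ))

lemma fact_ne_s14 (k : ℕ) : ((k.factorial : ℕ) : ℂ) ≠ 0 := Nat.cast_ne_zero.2 (Nat.factorial_ne_zero _)

lemma bet_zero (m : ℕ) : bet 0 m = 0 := by simp [bet]

lemma bet_m_zero (M : ℕ) : bet (M+1) 0 = 1 := by
  unfold bet
  have h1 : 2*0 + (M+1) - 1 = M := by omega
  have h2 : 0 + (M+1) = M + 1 := by omega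
  rw [h1, h2, div_eq_one_iff_eq (mul_ne_zero (fact_ne_s14 0) (fact_ne_s14 (M+1))), Nat.factorial_succ M,
    Nat.factorial_zero]
  push_cast
  ring

lemma bet_pascal (M m : ℕ) : bet (M+1) (m+1) = bet M (m+1) + bet (M+2) m := by
  unfold bet
  have h1 : 2*(m+1) + (M+1) - 1 = (2*m+M+1) + 1 := by omega
  have h2 : (m+1) + (M+1) = (m+M+1) + 1 := by omega
  have h3 : 2*(m+1) + M - 1 = 2*m+M+1 := by omega
  have h4 : (m+1) + M = m + M + 1 := by omega
  have h5 : 2*m + (M+2) - 1 = 2*m+M+1 := by omega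
  have h6 : m + (M+2) = (m+M+1)+1 := by omega
  rw [h1, h2, h3, h4, h5, h6,
    div_add_div _ _ (mul_ne_zero (fact_ne_s14 (m+1)) (fact_ne_s14 (m+M+1)))
      (mul_ne_zero (fact_ne_s14 m) (fact_ne_s14 ((m+M+1)+1))),
    div_eq_div_iff (mul_ne_zero (fact_ne_s14 (m+1)) (fact_ne_s14 ((m+M+1)+1)))
      (mul_ne_zero (mul_ne_zero (fact_ne_s14 (m+1)) (fact_ne_s14 (m+M+1)))
        (mul_ne_zero (fact_ne_s14 m) (fact_ne_s14 ((m+M+1)+1)))),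
    Nat.factorial_succ (2*m+M+1), Nat.factorial_succ (m+M+1), Nat.factorial_succ m]
  push_cast
  ring
noncomputable def Jop (c : ℂ) : (ℕ → ℂ) →ₗ[ℂ] (ℕ → ℂ) where
  toFun f := fun n => (if n = 0 then c * f 0 else f (n-1)) + f (n+1)
  map_add' f g := by funext n; by_cases h : n = 0 <;> simp [h] <;> ring
  map_smul' a f := by funext n; by_cases h : n = 0 <;> simp [h, Pi.smul_apply, smul_eq_mul] <;> ring

def bv (n : ℕ) : ℕ → ℂ := fun i => if i = n then 1 else 0

lemma Jop_apply (c : ℂ) (f : ℕ → ℂ) (n : ℕ) :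
    Jop c f n = (if n = 0 then c * f 0 else f (n-1)) + f (n+1) := rfl

lemma Jop_bv_zero (c : ℂ) : Jop c (bv 0) = c • bv 0 + bv 1 := by
  funext i
  simp only [Jop_apply, bv, Pi.add_apply, Pi.smul_apply, smul_eq_mul]
  rcases i with _ | _ | i <;> simp

lemma Jop_bv_succ (c : ℂ) (n : ℕ) : Jop c (bv (n+1)) = bv n + bv (n+2) := by
  funext i
  simp only [Jop_apply, bv, Pi.add_apply]
  rcases i with _ | i
  · simp [eq_comm]
  · simp only [Nat.succ_ne_zero, if_false, Nat.succ_sub_one]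
    split_ifs <;> simp_all <;> omega

lemma pow_apply_succ (c : ℂ) (b : ℕ) (f : ℕ → ℂ) :
    ((Jop c)^(b+1)) f = (Jop c) (((Jop c)^b) f) := by
  rw [pow_succ']; rfl

lemma pow_apply_succ' (c : ℂ) (b : ℕ) (f : ℕ → ℂ) :
    ((Jop c)^(b+1)) f = ((Jop c)^b) (Jop c f) := by
  rw [pow_succ]; rfl

lemma Jop_sym (c : ℂ) : ∀ b n i, (((Jop c)^b) (bv n)) i = (((Jop c)^b) (bv i)) n := by
  intro b
  induction b with
  | zero => intro n i; simp [bv, eq_comm]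
  | succ b ih =>
    intro n i
    rw [pow_apply_succ']
    rcases n with _ | n
    · rw [Jop_bv_zero, map_add, _root_.map_smul]
      have : (((Jop c)^(b+1)) (bv i)) 0 = c * (((Jop c)^b) (bv i)) 0 + (((Jop c)^b) (bv i)) 1 := by
        rw [pow_apply_succ, Jop_apply]; simp
      rw [this]
      simp only [Pi.add_apply, Pi.smul_apply, smul_eq_mul]
      rw [ih 0 i, ih 1 i]
    · rw [Jop_bv_succ, map_add]
      have : (((Jop c)^(b+1)) (bv i)) (n+1)
          = (((Jop c)^b) (bv i)) n + (((Jop c)^b) (bv i)) (n+2) := by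
        rw [pow_apply_succ, Jop_apply]; simp
      rw [this]
      simp only [Pi.add_apply]
      rw [ih n i, ih (n+2) i]
noncomputable def Srow (c : ℂ) (k n : ℕ) : ℂ :=
  ∑ m ∈ Finset.range (k+1), if 2*m + n ≤ k then c^(k - n - 2*m) * bet (k+1-2*m) m else 0

lemma Srow_rec_succ (c : ℂ) (k j : ℕ) :
    Srow c (k+1) (j+1) = Srow c k j + Srow c k (j+2) := by
  unfold Srow
  rw [Finset.sum_range_succ (n := k+1),
    if_neg (by omega : ¬ (2*(k+1) + (j+1) ≤ k+1)), add_zero, Finset.sum_range_succ']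
  conv_rhs => rw [Finset.sum_range_succ' (n := k)]
  conv_rhs => rw [Finset.sum_range_succ (n := k),
    if_neg (by omega : ¬ (2*k + (j+2) ≤ k)), add_zero]
  have h0 : (if 2*0 + (j+1) ≤ k+1 then c ^ (k+1 - (j+1) - 2*0) * bet (k+1+1 - 2*0) 0 else 0)
      = (if 2*0 + j ≤ k then c ^ (k - j - 2*0) * bet (k+1 - 2*0) 0 else 0) := by
    by_cases hj : j ≤ k
    · rw [if_pos (by omega), if_pos (by omega),
        show k+1 - (j+1) - 2*0 = k - j - 2*0 from by omega,
        show k+1+1 - 2*0 = (k+1)+1 from by omega, show k+1 - 2*0 = k+1 from by omega,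
        bet_m_zero, bet_m_zero]
    · rw [if_neg (by omega), if_neg (by omega)]
  have hsum : ∀ m ∈ Finset.range k,
      (if 2*(m+1) + (j+1) ≤ k+1 then c ^ (k+1 - (j+1) - 2*(m+1)) * bet (k+1+1 - 2*(m+1)) (m+1) else 0)
      = (if 2*(m+1) + j ≤ k then c ^ (k - j - 2*(m+1)) * bet (k+1 - 2*(m+1)) (m+1) else 0)
      + (if 2*m + (j+2) ≤ k then c ^ (k - (j+2) - 2*m) * bet (k+1 - 2*m) m else 0) := by
    intro m _
    by_cases hc : 2*m + j + 2 ≤ k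
    · rw [if_pos (by omega), if_pos (by omega), if_pos (by omega),
        show k+1 - (j+1) - 2*(m+1) = k - 2*m - 2 - j from by omega,
        show k - j - 2*(m+1) = k - 2*m - 2 - j from by omega,
        show k - (j+2) - 2*m = k - 2*m - 2 - j from by omega,
        show k+1+1 - 2*(m+1) = (k - 2*m - 2 + 1) + 1 from by omega,
        show k+1 - 2*(m+1) = k - 2*m - 2 + 1 from by omega,
        show k+1 - 2*m = (k - 2*m - 2 + 1) + 2 from by omega,
        bet_pascal (k - 2*m - 2 + 1) m]
      ring
    · rw [if_neg (by omega), if_neg (by omega), if_neg (by omega), add_zero]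
  rw [Finset.sum_congr rfl hsum, Finset.sum_add_distrib, h0]
  ring

lemma Srow_rec_zero (c : ℂ) (k : ℕ) :
    Srow c (k+1) 0 = c * Srow c k 0 + Srow c k 1 := by
  unfold Srow
  rw [Finset.sum_range_succ (n := k+1),
    if_neg (by omega : ¬ (2*(k+1) + 0 ≤ k+1)), add_zero, Finset.sum_range_succ',
    Finset.mul_sum]
  conv_rhs => rw [Finset.sum_range_succ' (n := k)]
  conv_rhs => rw [Finset.sum_range_succ (n := k),
    if_neg (by omega : ¬ (2*k + 1 ≤ k)), add_zero]
  have h0 : (if 2*0 + 0 ≤ k+1 then c ^ (k+1 - 0 - 2*0) * bet (k+1+1 - 2*0) 0 else 0)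
      = c * (if 2*0 + 0 ≤ k then c ^ (k - 0 - 2*0) * bet (k+1 - 2*0) 0 else 0) := by
    rw [if_pos (by omega), if_pos (by omega),
      show k+1+1 - 2*0 = (k+1)+1 from by omega, show k+1 - 2*0 = k+1 from by omega,
      bet_m_zero, bet_m_zero]
    simp only [Nat.mul_zero, Nat.sub_zero]
    rw [pow_succ]
    ring
  have hsum : ∀ m ∈ Finset.range k,
      (if 2*(m+1) + 0 ≤ k+1 then c ^ (k+1 - 0 - 2*(m+1)) * bet (k+1+1 - 2*(m+1)) (m+1) else 0)
      = c * (if 2*(m+1) + 0 ≤ k then c ^ (k - 0 - 2*(m+1)) * bet (k+1 - 2*(m+1)) (m+1) else 0)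
      + (if 2*m + 1 ≤ k then c ^ (k - 1 - 2*m) * bet (k+1 - 2*m) m else 0) := by
    intro m _
    by_cases hc1 : 2*m + 1 ≤ k
    · by_cases hc2 : 2*m + 2 ≤ k
      · rw [if_pos (by omega), if_pos (by omega), if_pos (by omega),
          show k+1 - 0 - 2*(m+1) = (k - 0 - 2*(m+1)) + 1 from by omega,
          show k - 1 - 2*m = (k - 0 - 2*(m+1)) + 1 from by omega,
          show k+1+1 - 2*(m+1) = (k - 2*m - 2 + 1) + 1 from by omega,
          show k+1 - 2*(m+1) = k - 2*m - 2 + 1 from by omega,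
          show k+1 - 2*m = (k - 2*m - 2 + 1) + 2 from by omega,
          bet_pascal (k - 2*m - 2 + 1) m]
        ring
      · -- k = 2m+1
        rw [if_pos (by omega), if_neg (by omega), if_pos (by omega),
          show k+1 - 0 - 2*(m+1) = 0 from by omega,
          show k - 1 - 2*m = 0 from by omega,
          show k+1+1 - 2*(m+1) = 0 + 1 from by omega,
          show k+1 - 2*m = 0 + 2 from by omega,
          bet_pascal 0 m, bet_zero]
        ring
    · rw [if_neg (by omega), if_neg (by omega), if_neg (by omega)]
      ring
  rw [Finset.sum_congr rfl hsum, Finset.sum_add_distrib, h0]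
  ring
lemma Jop_closed (c : ℂ) : ∀ k n, (((Jop c)^k) (bv 0)) n = Srow c k n := by
  intro k
  induction k with
  | zero =>
    intro n
    rw [pow_zero, Module.End.one_apply]
    unfold Srow
    rw [Finset.sum_range_one]
    rcases n with _ | n
    · rw [if_pos (by omega)]
      norm_num
      rw [show bet 1 0 = 1 from bet_m_zero 0]
      simp [bv]
    · rw [if_neg (by omega)]
      simp [bv]
  | succ k ih =>
    intro n
    rw [pow_apply_succ, Jop_apply]
    rcases n with _ | n
    · rw [if_pos rfl, ih, ih, Srow_rec_zero]
    · rw [if_neg (by omega), Nat.add_sub_cancel, ih, ih, Srow_rec_succ]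

noncomputable def PJ (c : ℂ) (q : Polynomial ℂ) : Module.End ℂ (ℕ → ℂ) :=
  Polynomial.aeval (Jop c) q

lemma vec_p (c : ℂ) (p : ℕ → Polynomial ℂ)
    (hp0 : p 0 = 1) (hp1 : p 1 = Polynomial.X - Polynomial.C c)
    (hrec : ∀ n : ℕ, 1 ≤ n → p (n + 1) = Polynomial.X * p n - p (n - 1)) :
    ∀ n, PJ c (p n) (bv 0) = bv n := by
  have key : ∀ n, PJ c (p n) (bv 0) = bv n ∧ PJ c (p (n+1)) (bv 0) = bv (n+1) := by
    intro n
    induction n with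
    | zero =>
      constructor
      · rw [hp0]; unfold PJ; rw [map_one, Module.End.one_apply]
      · unfold PJ
        rw [hp1, map_sub, Polynomial.aeval_X, Polynomial.aeval_C]
        show Jop c (bv 0) - (algebraMap ℂ (Module.End ℂ (ℕ → ℂ)) c) (bv 0) = bv 1
        rw [Module.algebraMap_end_apply, Jop_bv_zero]
        abel
    | succ n ih =>
      refine ⟨ih.2, ?_⟩
      have hr := hrec (n+1) (by omega)
      rw [Nat.add_sub_cancel] at hr
      unfold PJ
      rw [hr, map_sub, map_mul, Polynomial.aeval_X]
      show Jop c ((Polynomial.aeval (Jop c) (p (n+1))) (bv 0)) - _ = _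
      rw [show (Polynomial.aeval (Jop c) (p (n+1))) (bv 0) = bv (n+1) from ih.2,
        show (Polynomial.aeval (Jop c) (p n)) (bv 0) = bv n from ih.1,
        Jop_bv_succ]
      abel
  exact fun n => (key n).1

lemma PJ_coeff_sum (c : ℂ) (q : Polynomial ℂ) :
    (PJ c q (bv 0)) 0 = ∑ i ∈ Finset.range (q.natDegree + 1), q.coeff i * Srow c i 0 := by
  unfold PJ
  rw [Polynomial.aeval_eq_sum_range]
  rw [LinearMap.coe_sum, Finset.sum_apply, Finset.sum_apply]
  refine Finset.sum_congr rfl fun i _ => ?_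
  rw [LinearMap.smul_apply, Pi.smul_apply, smul_eq_mul, Jop_closed]

theorem key_alg (c : ℂ) (p : ℕ → Polynomial ℂ)
    (hp0 : p 0 = 1) (hp1 : p 1 = Polynomial.X - Polynomial.C c)
    (hrec : ∀ n : ℕ, 1 ≤ n → p (n + 1) = Polynomial.X * p n - p (n - 1))
    (n m : ℕ) :
    (PJ c (p n * p m) (bv 0)) 0 = if n = m then 1 else 0 := by
  unfold PJ
  rw [map_mul, Module.End.mul_apply]
  rw [show (Polynomial.aeval (Jop c) (p m)) (bv 0) = bv m from vec_p c p hp0 hp1 hrec m]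
  have expand : ∀ f : ℕ → ℂ, ∀ j : ℕ, (Polynomial.aeval (Jop c) (p n)) f j
      = ∑ i ∈ Finset.range ((p n).natDegree + 1), (p n).coeff i * (((Jop c)^i) f) j := by
    intro f j
    rw [Polynomial.aeval_eq_sum_range, LinearMap.coe_sum, Finset.sum_apply, Finset.sum_apply]
    refine Finset.sum_congr rfl fun i _ => ?_
    rw [LinearMap.smul_apply, Pi.smul_apply, smul_eq_mul]
  rw [expand (bv m) 0]
  have : ∀ i ∈ Finset.range ((p n).natDegree + 1),
      (p n).coeff i * (((Jop c)^i) (bv m)) 0 = (p n).coeff i * (((Jop c)^i) (bv 0)) m := by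
    intro i _
    rw [Jop_sym c i m 0]
  rw [Finset.sum_congr rfl this, ← expand (bv 0) m,
    show (Polynomial.aeval (Jop c) (p n)) (bv 0) = bv n from vec_p c p hp0 hp1 hrec n]
  unfold bv
  by_cases h : n = m <;> simp [h, eq_comm]

noncomputable def Cf (c : ℂ) (q : ℕ × ℕ) : ℂ := c ^ q.1 * bet (q.1 + 1) q.2

lemma choose_le_two_pow (n k : ℕ) : n.choose k ≤ 2^n := by
  by_cases h : k ≤ n
  · calc n.choose k ≤ ∑ i ∈ Finset.range (n+1), n.choose i :=
        Finset.single_le_sum (f := fun i => n.choose i) (fun _ _ => Nat.zero_le _)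
          (Finset.mem_range.2 (by omega))
    _ = 2^n := Nat.sum_range_choose n
  · rw [Nat.choose_eq_zero_of_lt (by omega)]
    positivity

lemma fact_ratio (M m : ℕ) :
    (2*m + M).factorial ≤ 2^(2*m + M) * (m.factorial * (m + M + 1).factorial) := by
  have h := Nat.add_choose_mul_factorial_mul_factorial m (m + M)
  have h2 : m + (m + M) = 2*m + M := by omega
  rw [h2] at h
  calc (2*m + M).factorial = (2*m + M).choose (m+M) * m.factorial * (m + M).factorial := h.symm
    _ ≤ 2^(2*m + M) * m.factorial * (m + M).factorial := by
        exact Nat.mul_le_mul_right _ (Nat.mul_le_mul_right _ (choose_le_two_pow _ _))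
    _ ≤ 2^(2*m + M) * (m.factorial * (m + M + 1).factorial) := by
        rw [mul_assoc]
        refine Nat.mul_le_mul_left _ (Nat.mul_le_mul_left _ ?_)
        rw [Nat.factorial_succ]
        exact Nat.le_mul_of_pos_left _ (by omega)

lemma bet_norm_le (M m : ℕ) : ‖bet (M+1) m‖ ≤ (M+1 : ℝ) * 2^(2*m + M) := by
  unfold bet
  have e1 : 2*m + (M+1) - 1 = 2*m + M := by omega
  have e2 : m + (M+1) = m + M + 1 := by omega
  rw [e1, e2]
  rw [norm_div, norm_mul]
  have c1 : ‖((M+1 : ℕ) : ℂ)‖ = (M+1 : ℝ) := by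
    rw [show (((M:ℕ)+1 : ℕ) : ℂ) = ((M+1 : ℕ) : ℂ) from rfl, Complex.norm_natCast]
    push_cast; ring
  have c2 : ‖(((2*m+M).factorial : ℕ) : ℂ)‖ = ((2*m+M).factorial : ℝ) := Complex.norm_natCast _
  have c3 : ‖((m.factorial : ℕ) : ℂ)‖ = (m.factorial : ℝ) := Complex.norm_natCast _
  have c4 : ‖(((m+M+1).factorial : ℕ) : ℂ)‖ = ((m+M+1).factorial : ℝ) := Complex.norm_natCast _
  rw [norm_mul, c1, c2, c3, c4]
  rw [div_le_iff₀ (by positivity)]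
  have := fact_ratio M m
  have hcast : ((2*m+M).factorial : ℝ) ≤ 2^(2*m+M) * ((m.factorial : ℝ) * ((m+M+1).factorial : ℝ)) := by
    exact_mod_cast this
  nlinarith [(Nat.cast_pos (α := ℝ)).2 (Nat.factorial_pos m),
    (Nat.cast_pos (α := ℝ)).2 (Nat.factorial_pos (m+M+1)),
    Nat.cast_nonneg (α := ℝ) (2*m+M).factorial]

noncomputable def bnd (r R : ℝ) (q : ℕ × ℕ) : ℝ :=
  ((q.1 + 1 : ℝ) * (2*r/R)^q.1 / R) * (4/R^2)^q.2

lemma norm_term_le {c z : ℂ} {R : ℝ} (hR : 0 < R) (hz : ‖z‖ = R) (q : ℕ × ℕ) :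
    ‖Cf c q * (z ^ (q.1 + 2*q.2 + 1))⁻¹‖ ≤ bnd ‖c‖ R q := by
  obtain ⟨n, m⟩ := q
  rw [norm_mul, norm_inv, norm_pow, hz]
  unfold Cf
  simp only
  rw [norm_mul, norm_pow]
  have hb := bet_norm_le n m
  have h1 : ‖c‖^n * ‖bet (n+1) m‖ * (R ^ (n + 2*m + 1))⁻¹
      ≤ ‖c‖^n * ((n+1 : ℝ) * 2^(2*m+n)) * (R ^ (n + 2*m + 1))⁻¹ := by
    apply mul_le_mul_of_nonneg_right _ (by positivity)
    exact mul_le_mul_of_nonneg_left hb (by positivity)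
  refine le_trans h1 (le_of_eq ?_)
  unfold bnd
  simp only
  rw [show (2:ℝ)^(2*m+n) = 4^m * 2^n from by rw [pow_add, pow_mul]; norm_num,
    show R^(n+2*m+1) = R^n * (R^2)^m * R from by rw [← pow_mul, ← pow_add, ← pow_succ]]
  have hR0 : R ≠ 0 := hR.ne'
  field_simp
  ring_nf
  rw [inv_pow, inv_pow]
  field_simp

lemma bnd_summable {r R : ℝ} (hr : 0 ≤ r) (h2 : 2 < R) (hc : 2*r < R) :
    Summable (bnd r R) := by
  have hR : 0 < R := by linarith
  have hx : (0:ℝ) ≤ 2*r/R := by positivity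
  have hx1 : 2*r/R < 1 := (div_lt_one hR).2 hc
  have hy : (0:ℝ) ≤ 4/R^2 := by positivity
  have hy1 : 4/R^2 < 1 := by
    rw [div_lt_one (by positivity)]
    nlinarith
  have hf : Summable (fun n : ℕ => (n + 1 : ℝ) * (2*r/R)^n / R) := by
    have h1 : Summable (fun n : ℕ => (n:ℝ)^1 * (2*r/R)^n) :=
      summable_pow_mul_geometric_of_norm_lt_one 1 (by
        rw [Real.norm_eq_abs, abs_of_nonneg hx]; exact hx1)
    have h2' : Summable (fun n : ℕ => (2*r/R)^n) := summable_geometric_of_lt_one hx hx1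
    have := (h1.add h2').div_const R
    refine this.congr fun n => ?_
    simp only [pow_one]
    ring
  have hg : Summable (fun m : ℕ => (4/R^2)^m) := summable_geometric_of_lt_one hy hy1
  exact hf.mul_of_nonneg hg (fun n => by positivity) (fun m => by positivity)

lemma F_summable {c z : ℂ} {R : ℝ} (hz : ‖z‖ = R) (h2 : 2 < R) (hc : 2*‖c‖ < R) :
    Summable (fun q : ℕ × ℕ => Cf c q * (z ^ (q.1 + 2*q.2 + 1))⁻¹) :=
  Summable.of_norm_bounded (bnd_summable (norm_nonneg c) h2 hc)
    (norm_term_le (by linarith) hz)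

lemma wFun_eq {c z : ℂ} {R : ℝ} (hz : ‖z‖ = R) (h2 : 2 < R) (hc : 2*‖c‖ < R) :
    wFun c z = ∑' q : ℕ × ℕ, Cf c q * (z ^ (q.1 + 2*q.2 + 1))⁻¹ := by
  rw [(F_summable hz h2 hc).tsum_prod' (F_summable hz h2 hc).prod_factor]
  unfold wFun
  refine tsum_congr fun n => ?_
  unfold phiFun
  rw [← tsum_mul_left]
  refine tsum_congr fun m => ?_
  simp only [Cf]
  unfold bet
  rw [show n + 2*m + 1 = (n+1) + 2*m from by omega, pow_add, mul_inv]
  ring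

lemma exp_theta_ne (θ : ℝ) : Complex.exp ((θ:ℂ) * Complex.I) ≠ 0 := Complex.exp_ne_zero _

lemma elem_integral {R : ℝ} (hR : 0 < R) (a N : ℕ) :
    ∫ θ in (0:ℝ)..(2*Real.pi),
      ((R:ℂ) * Complex.exp ((θ:ℂ) * Complex.I))^a *
        ((((R:ℂ) * Complex.exp ((θ:ℂ) * Complex.I))^N)⁻¹) *
        (Complex.I * (R:ℂ) * Complex.exp ((θ:ℂ) * Complex.I))
    = if a + 1 = N then 2*Real.pi*Complex.I else 0 := by
  have hRC : (R:ℂ) ≠ 0 := Complex.ofReal_ne_zero.2 (ne_of_gt hR)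
  set k : ℤ := (a : ℤ) + 1 - (N : ℤ) with hk
  have key : ∀ θ : ℝ, ((R:ℂ) * Complex.exp ((θ:ℂ) * Complex.I))^a *
        ((((R:ℂ) * Complex.exp ((θ:ℂ) * Complex.I))^N)⁻¹) *
        (Complex.I * (R:ℂ) * Complex.exp ((θ:ℂ) * Complex.I))
      = (Complex.I * (R:ℂ)^(a+1) * (((R:ℂ)^N)⁻¹)) * Complex.exp (((k:ℂ) * Complex.I) * (θ:ℂ)) := by
    intro θ
    have e1 : ((R:ℂ) * Complex.exp ((θ:ℂ) * Complex.I))^a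
        = (R:ℂ)^a * Complex.exp ((a:ℂ) * ((θ:ℂ) * Complex.I)) := by
      rw [mul_pow, ← Complex.exp_nat_mul]
    have e2 : ((R:ℂ) * Complex.exp ((θ:ℂ) * Complex.I))^N
        = (R:ℂ)^N * Complex.exp ((N:ℂ) * ((θ:ℂ) * Complex.I)) := by
      rw [mul_pow, ← Complex.exp_nat_mul]
    rw [e1, e2, mul_inv, ← Complex.exp_neg]
    rw [show Complex.exp (((k:ℂ) * Complex.I) * (θ:ℂ))
        = Complex.exp ((a:ℂ) * ((θ:ℂ) * Complex.I)) *
          Complex.exp (-((N:ℂ) * ((θ:ℂ) * Complex.I))) * Complex.exp ((θ:ℂ) * Complex.I) from by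
      rw [← Complex.exp_add, ← Complex.exp_add]
      congr 1
      push_cast [hk]
      ring]
    ring
  rw [intervalIntegral.integral_congr (g := fun θ : ℝ =>
      (Complex.I * (R:ℂ)^(a+1) * (((R:ℂ)^N)⁻¹)) * Complex.exp (((k:ℂ) * Complex.I) * (θ:ℂ)))
      (fun θ _ => key θ)]
  rw [intervalIntegral.integral_const_mul]
  by_cases hcase : a + 1 = N
  · have hk0 : k = 0 := by omega
    rw [hk0]
    simp only [Int.cast_zero, zero_mul, Complex.exp_zero]
    rw [intervalIntegral.integral_const]
    subst hcase
    rw [if_pos rfl]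
    simp only [sub_zero, Complex.real_smul, Complex.ofReal_mul, mul_one]
    field_simp
    ring
    all_goals norm_num
  · have hk0 : (k:ℂ) * Complex.I ≠ 0 := by
      apply mul_ne_zero _ Complex.I_ne_zero
      exact_mod_cast fun h => hcase (by omega : a + 1 = N)
    rw [integral_exp_mul_complex hk0]
    rw [if_neg hcase]
    have : Complex.exp ((k:ℂ) * Complex.I * (2*Real.pi:ℝ)) = 1 := by
      rw [show (k:ℂ) * Complex.I * ((2*Real.pi:ℝ):ℂ) = (k:ℂ) * (2*(Real.pi:ℂ)*Complex.I) from by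
        push_cast; ring]
      exact Complex.exp_int_mul_two_pi_mul_I k
    rw [this]
    simp
theorem main_calc (c : ℂ) (P : Polynomial ℂ) (R : ℝ)
    (h2 : 2 < R) (hc : 2 * ‖c‖ < R) :
    ∫ θ in (0:ℝ)..(2 * Real.pi),
        P.eval ((R : ℂ) * Complex.exp ((θ : ℂ) * Complex.I)) *
          wFun c ((R : ℂ) * Complex.exp ((θ : ℂ) * Complex.I)) *
          (Complex.I * (R : ℂ) * Complex.exp ((θ : ℂ) * Complex.I))
      = (2 * Real.pi * Complex.I) *
          ∑ i ∈ Finset.range (P.natDegree + 1), P.coeff i * Srow c i 0 := by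
  have hRpos : (0:ℝ) < R := by linarith
  have hRC : (R:ℂ) ≠ 0 := Complex.ofReal_ne_zero.2 (ne_of_gt hRpos)
  set z : ℝ → ℂ := fun θ => (R:ℂ) * Complex.exp ((θ:ℂ) * Complex.I) with hz
  have hzne : ∀ θ, z θ ≠ 0 := fun θ => mul_ne_zero hRC (Complex.exp_ne_zero _)
  have hznorm : ∀ θ : ℝ, ‖z θ‖ = R := by
    intro θ
    rw [hz]
    simp only [norm_mul, Complex.norm_real, Real.norm_eq_abs, abs_of_pos hRpos]
    rw [Complex.norm_exp_ofReal_mul_I]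
    simp
  have hzc : Continuous z := by
    apply Continuous.mul continuous_const
    exact Complex.continuous_exp.comp (by continuity)
  set G : ℕ × ℕ → ℝ → ℂ := fun q θ =>
    P.eval (z θ) * (Cf c q * ((z θ) ^ (q.1 + 2*q.2 + 1))⁻¹) * (Complex.I * (R:ℂ) * Complex.exp ((θ:ℂ) * Complex.I)) with hG
  have hGcont : ∀ q, Continuous (G q) := by
    intro q
    apply Continuous.mul
    apply Continuous.mul
    · exact (Polynomial.continuous P).comp hzc
    · exact Continuous.mul continuous_const (((hzc.pow _).inv₀ (fun θ => pow_ne_zero _ (hzne θ))))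
    · exact Continuous.mul continuous_const (Complex.continuous_exp.comp (by continuity))
  have h02 : (0:ℝ) ≤ 2 * Real.pi := by positivity
  -- rewrite integrand as a tsum
  have step1 : ∫ θ in (0:ℝ)..(2 * Real.pi),
      P.eval (z θ) * wFun c (z θ) * (Complex.I * (R:ℂ) * Complex.exp ((θ:ℂ) * Complex.I))
      = ∫ θ in (0:ℝ)..(2 * Real.pi), ∑' q : ℕ × ℕ, G q θ := by
    refine intervalIntegral.integral_congr fun θ _ => ?_
    rw [wFun_eq (hznorm θ) h2 hc, ← tsum_mul_left, ← tsum_mul_right]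
  rw [step1]
  rw [intervalIntegral.integral_of_le h02]
  rw [← MeasureTheory.integral_tsum_of_summable_integral_norm]
  rotate_left
  · exact fun q => (hGcont q).integrableOn_Ioc
  · -- summability of integral norms
    obtain ⟨Kp, hKp⟩ := (isCompact_Icc (a := (0:ℝ)) (b := 2*Real.pi)).exists_bound_of_continuousOn
      ((Polynomial.continuous P).comp hzc).continuousOn
    have hKp0 : 0 ≤ Kp := le_trans (norm_nonneg _) (hKp 0 (Set.left_mem_Icc.2 h02))
    have key : ∀ q : ℕ × ℕ, ∫ θ in Set.Ioc (0:ℝ) (2*Real.pi), ‖G q θ‖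
        ≤ (2*Real.pi) * (Kp * R * bnd ‖c‖ R q) := by
      intro q
      have hb : ∀ θ ∈ Set.Ioc (0:ℝ) (2*Real.pi), ‖G q θ‖ ≤ Kp * R * bnd ‖c‖ R q := by
        intro θ hθ
        rw [hG]
        simp only
        rw [norm_mul, norm_mul]
        have h1 : ‖P.eval (z θ)‖ ≤ Kp := hKp θ (Set.mem_Icc.2 ⟨le_of_lt hθ.1, hθ.2⟩)
        have h2' : ‖Cf c q * ((z θ) ^ (q.1 + 2*q.2 + 1))⁻¹‖ ≤ bnd ‖c‖ R q :=
          norm_term_le hRpos (hznorm θ) q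
        have h3 : ‖Complex.I * (R:ℂ) * Complex.exp ((θ:ℂ) * Complex.I)‖ = R := by
          rw [mul_assoc, norm_mul, Complex.norm_I, one_mul]
          exact hznorm θ
        rw [h3]
        have hb0 : 0 ≤ bnd ‖c‖ R q := le_trans (norm_nonneg _) h2'
        calc ‖P.eval (z θ)‖ * ‖Cf c q * ((z θ) ^ (q.1 + 2*q.2 + 1))⁻¹‖ * R
            ≤ Kp * (bnd ‖c‖ R q) * R := by
              apply mul_le_mul_of_nonneg_right _ (le_of_lt hRpos)
              exact mul_le_mul h1 h2' (norm_nonneg _) hKp0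
          _ = Kp * R * bnd ‖c‖ R q := by ring
      calc ∫ θ in Set.Ioc (0:ℝ) (2*Real.pi), ‖G q θ‖
          ≤ ∫ _ in Set.Ioc (0:ℝ) (2*Real.pi), (Kp * R * bnd ‖c‖ R q) := by
            apply MeasureTheory.setIntegral_mono_on
            · exact (hGcont q).norm.integrableOn_Ioc
            · exact integrableOn_const measure_Ioc_lt_top.ne
            · exact measurableSet_Ioc
            · exact hb
        _ = (2*Real.pi) * (Kp * R * bnd ‖c‖ R q) := by
            rw [MeasureTheory.setIntegral_const, MeasureTheory.measureReal_def, Real.volume_Ioc, smul_eq_mul]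
            congr 1
            rw [ENNReal.toReal_ofReal (by linarith)]
            ring
    apply Summable.of_nonneg_of_le
        (fun q => MeasureTheory.integral_nonneg (fun θ => norm_nonneg _)) key
    exact ((bnd_summable (norm_nonneg c) h2 hc).mul_left (2*Real.pi * (Kp * R))).congr
      (fun q => by ring)
  -- now compute each integral
  have perq : ∀ q : ℕ × ℕ, ∫ θ in Set.Ioc (0:ℝ) (2*Real.pi), G q θ
      = ∑ i ∈ Finset.range (P.natDegree + 1),
          (P.coeff i * Cf c q) * (if i + 1 = q.1 + 2*q.2 + 1 then 2*Real.pi*Complex.I else 0) := by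
    intro q
    rw [← intervalIntegral.integral_of_le h02]
    have expand : ∀ θ : ℝ, G q θ = ∑ i ∈ Finset.range (P.natDegree + 1),
        (P.coeff i * Cf c q) * ((z θ)^i * (((z θ) ^ (q.1 + 2*q.2 + 1))⁻¹) *
          (Complex.I * (R:ℂ) * Complex.exp ((θ:ℂ) * Complex.I))) := by
      intro θ
      rw [hG]
      simp only
      rw [Polynomial.eval_eq_sum_range, Finset.sum_mul, Finset.sum_mul]
      refine Finset.sum_congr rfl fun i _ => ?_
      ring
    rw [intervalIntegral.integral_congr (fun θ _ => expand θ)]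
    rw [intervalIntegral.integral_finset_sum]
    swap
    · intro i _
      apply Continuous.intervalIntegrable
      apply Continuous.mul continuous_const
      apply Continuous.mul
      · exact Continuous.mul (hzc.pow _) ((hzc.pow _).inv₀ (fun θ => pow_ne_zero _ (hzne θ)))
      · exact Continuous.mul continuous_const (Complex.continuous_exp.comp (by continuity))
    refine Finset.sum_congr rfl fun i _ => ?_
    rw [intervalIntegral.integral_const_mul, elem_integral hRpos i (q.1 + 2*q.2 + 1)]
  rw [tsum_congr perq]
  -- swap tsum and finite sum
  have hfin : ∀ i : ℕ, ∀ q : ℕ × ℕ, q ∉ (Finset.range (i+1)) ×ˢ (Finset.range (i+1)) →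
      (P.coeff i * Cf c q) * (if i + 1 = q.1 + 2*q.2 + 1 then 2*Real.pi*Complex.I else 0) = 0 := by
    intro i q hq
    rw [if_neg, mul_zero]
    intro h
    apply hq
    rw [Finset.mem_product, Finset.mem_range, Finset.mem_range]
    omega
  rw [Summable.tsum_finsetSum (fun i _ => summable_of_ne_finset_zero (hfin i))]
  rw [Finset.mul_sum]
  refine Finset.sum_congr rfl fun i _ => ?_
  rw [tsum_eq_sum (hfin i)]
  rw [Finset.sum_product_right]
  have inner : ∀ m' ∈ Finset.range (i+1),
      (∑ n' ∈ Finset.range (i+1),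
        (P.coeff i * Cf c (n', m')) * (if i + 1 = n' + 2*m' + 1 then 2*Real.pi*Complex.I else 0))
      = (P.coeff i * (2*Real.pi*Complex.I)) *
          (if 2*m' + 0 ≤ i then c^(i - 0 - 2*m') * bet (i+1-2*m') m' else 0) := by
    intro m' _
    rw [Finset.sum_eq_single (i - 2*m')]
    · by_cases hm : 2*m' ≤ i
      · rw [if_pos (by omega), if_pos (by omega)]
        unfold Cf
        simp only
        rw [show i - 0 - 2*m' = i - 2*m' from by omega, show i+1-2*m' = (i - 2*m') + 1 from by omega]
        ring
      · rw [if_neg (by omega), if_neg (by omega)]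
        ring
    · intro b _ hb
      rw [if_neg (by omega), mul_zero]
    · intro hmem
      exact absurd (Finset.mem_range.2 (by omega)) hmem
  rw [Finset.sum_congr rfl inner, ← Finset.mul_sum]
  rw [show (∑ m' ∈ Finset.range (i+1),
      if 2*m' + 0 ≤ i then c^(i - 0 - 2*m') * bet (i+1-2*m') m' else 0) = Srow c i 0 from rfl]
  ring
/-- **Complex orthogonality on circles for the rank-one perturbation of the free Jacobi
matrix:** for every `R > R₀ = max(2, 2|c|)`,
`(1/(2πi)) ∮_{|z|=R} p_n(z) p_m(z) w(z) dz = δ_{n,m}`. -/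
theorem rank_one_perturbation_complex_orthogonality
    (c : ℂ) (p : ℕ → Polynomial ℂ)
    (hp0 : p 0 = 1) (hp1 : p 1 = Polynomial.X - Polynomial.C c)
    (hrec : ∀ n : ℕ, 1 ≤ n → p (n + 1) = Polynomial.X * p n - p (n - 1))
    (R : ℝ) (hR : max 2 (2 * ‖c‖) < R) :
    ∀ n m : ℕ,
      (2 * Real.pi * Complex.I)⁻¹ *
        ∫ θ in (0:ℝ)..(2 * Real.pi),
          (p n).eval ((R : ℂ) * Complex.exp ((θ : ℂ) * Complex.I)) *
            (p m).eval ((R : ℂ) * Complex.exp ((θ : ℂ) * Complex.I)) *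
            wFun c ((R : ℂ) * Complex.exp ((θ : ℂ) * Complex.I)) *
            (Complex.I * (R : ℂ) * Complex.exp ((θ : ℂ) * Complex.I))
        = if n = m then 1 else 0 := by
  intro n m
  have h2 : 2 < R := lt_of_le_of_lt (le_max_left _ _) hR
  have hc : 2 * ‖c‖ < R := by
    exact lt_of_le_of_lt (le_max_right _ _) hR
  have step : ∫ θ in (0:ℝ)..(2 * Real.pi),
      (p n).eval ((R : ℂ) * Complex.exp ((θ : ℂ) * Complex.I)) *
        (p m).eval ((R : ℂ) * Complex.exp ((θ : ℂ) * Complex.I)) *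
        wFun c ((R : ℂ) * Complex.exp ((θ : ℂ) * Complex.I)) *
        (Complex.I * (R : ℂ) * Complex.exp ((θ : ℂ) * Complex.I))
      = ∫ θ in (0:ℝ)..(2 * Real.pi),
      (p n * p m).eval ((R : ℂ) * Complex.exp ((θ : ℂ) * Complex.I)) *
        wFun c ((R : ℂ) * Complex.exp ((θ : ℂ) * Complex.I)) *
        (Complex.I * (R : ℂ) * Complex.exp ((θ : ℂ) * Complex.I)) := by
    refine intervalIntegral.integral_congr fun θ _ => ?_
    rw [Polynomial.eval_mul]
  rw [step, main_calc c (p n * p m) R h2 hc, ← PJ_coeff_sum,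
    key_alg c p hp0 hp1 hrec n m, inv_mul_cancel_left₀]
  apply mul_ne_zero (mul_ne_zero two_ne_zero _) Complex.I_ne_zero
  exact Complex.ofReal_ne_zero.2 Real.pi_ne_zero
end

section
/- Let c ∈ ℂ, R₀ := max(2, 2|c|), and fix R > R₀. Define w(z) := Σ_{n=1}^{∞} n·c^{n−1}·z^{−n}·φ_n(z) for |z| > R₀, where φ_n(z) := Σ_{m=0}^{∞} [(2m+n−1)!/(m!·(m+n)!)]·z^{−2m}; define s_0 := 1, s_{2k} := (2k)!·Σ_{j=0}^{k} [(2j+1)/((k−j)!·(k+j+1)!)]·c^{2j} (k ≥ 1), s_{2k−1} := (2k−1)!·Σ_{j=1}^{k} [2j/((k−j)!·(k+j)!)]·c^{2j−1} (k ≥ 1). Then the series g(z) := (1/R²)·Σ_{j=0}^{∞} conj(s_{j+1})·(z/R²)^j converges for all |z| < R²/R₀, defines an analytic function on the open disk {z : |z| < R²/R₀} (note R²/R₀ > R), and satisfies, for 0 < |z| < R²/R₀: g(z) = (R²/z²)·conj( w( R²/conj(z) ) ) − 1/z. -/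
/-- The correction function `g(z) = (1/R²) Σ_{j=0}^∞ conj(s_{j+1}) (z/R²)^j`. -/
noncomputable def gFun (c : ℂ) (R : ℝ) (z : ℂ) : ℂ :=
  (1 / (R : ℂ) ^ 2) * ∑' j : ℕ, (starRingEnd ℂ) (sMom c (j + 1)) * (z / (R : ℂ) ^ 2) ^ j

namespace GFunAux

open Finset

lemma choose_le_two_pow (n k : ℕ) : n.choose k ≤ 2 ^ n := by
  rcases le_or_gt k n with h | h
  · calc n.choose k ≤ ∑ i ∈ Finset.range (n + 1), n.choose i :=
        Finset.single_le_sum (fun i _ => Nat.zero_le _) (Finset.mem_range.mpr (by omega))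
      _ = 2 ^ n := Nat.sum_range_choose n
  · simp [Nat.choose_eq_zero_of_lt h]

lemma factorial_ratio_le (k m : ℕ) (h : m ≤ k) :
    (k.factorial : ℝ) / ((m.factorial : ℝ) * ((k - m + 1).factorial : ℝ)) ≤ 2 ^ k := by
  have key : k.factorial ≤ 2 ^ k * (m.factorial * (k - m + 1).factorial) := by
    have h1 : k.choose m * m.factorial * (k - m).factorial = k.factorial :=
      Nat.choose_mul_factorial_mul_factorial h
    have h2 : (k - m).factorial ≤ (k - m + 1).factorial := Nat.factorial_le (by omega)
    calc k.factorial = k.choose m * m.factorial * (k - m).factorial := h1.symm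
      _ ≤ 2 ^ k * m.factorial * (k - m + 1).factorial :=
        Nat.mul_le_mul (Nat.mul_le_mul (choose_le_two_pow k m) le_rfl) h2
      _ = 2 ^ k * (m.factorial * (k - m + 1).factorial) := by ring
  have hpos : (0 : ℝ) < (m.factorial : ℝ) * ((k - m + 1).factorial : ℝ) := by positivity
  rw [div_le_iff₀ hpos]
  exact_mod_cast key

/-- The moment `s_k` rewritten as a sum over the fibre `{(n,m) : n + 2m = k}`. -/
lemma sMom_eq_fiber (c : ℂ) (k : ℕ) :
    sMom c k = ∑ m ∈ Finset.range (k / 2 + 1),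
      ((k - 2 * m + 1 : ℕ) : ℂ) * c ^ (k - 2 * m) *
        ((k.factorial : ℂ) / ((m.factorial : ℂ) * ((k - m + 1).factorial : ℂ))) := by
  rcases Nat.even_or_odd k with he | ho
  · obtain ⟨K, hK⟩ := he
    have hk2 : k / 2 = K := by omega
    unfold sMom
    rw [if_pos (show Even k from ⟨K, hK⟩), hk2, Finset.mul_sum]
    refine Finset.sum_nbij' (fun j => K - j) (fun m => K - m) ?_ ?_ ?_ ?_ ?_
    · intro a ha; simp only [Finset.mem_range] at ha ⊢; omega
    · intro a ha; simp only [Finset.mem_range] at ha ⊢; omega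
    · intro a ha; simp only [Finset.mem_range] at ha; show K - (K - a) = a; omega
    · intro a ha; simp only [Finset.mem_range] at ha; show K - (K - a) = a; omega
    · intro j hj
      simp only [Finset.mem_range] at hj
      show _ = ((k - 2 * (K - j) + 1 : ℕ) : ℂ) * c ^ (k - 2 * (K - j)) *
        ((k.factorial : ℂ) / (((K - j).factorial : ℂ) * ((k - (K - j) + 1).factorial : ℂ)))
      have e1 : k - 2 * (K - j) + 1 = 2 * j + 1 := by omega
      have e2 : k - 2 * (K - j) = 2 * j := by omega
      have e3 : k - (K - j) + 1 = K + j + 1 := by omega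
      rw [e1, e2, e3]
      ring
  · obtain ⟨K', hK'⟩ := ho
    have hk2 : k / 2 + 1 = K' + 1 := by omega
    have hk3 : (k + 1) / 2 = K' + 1 := by omega
    unfold sMom
    rw [if_neg (Nat.not_even_iff_odd.mpr ⟨K', hK'⟩), hk3, hk2, Finset.mul_sum]
    refine Finset.sum_nbij' (fun j => K' + 1 - j) (fun m => K' + 1 - m) ?_ ?_ ?_ ?_ ?_
    · intro a ha; simp only [Finset.mem_Icc, Finset.mem_range] at ha ⊢; omega
    · intro a ha; simp only [Finset.mem_Icc, Finset.mem_range] at ha ⊢; omega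
    · intro a ha; simp only [Finset.mem_Icc] at ha; show K' + 1 - (K' + 1 - a) = a; omega
    · intro a ha; simp only [Finset.mem_range] at ha; show K' + 1 - (K' + 1 - a) = a; omega
    · intro j hj
      simp only [Finset.mem_Icc] at hj
      show _ = ((k - 2 * (K' + 1 - j) + 1 : ℕ) : ℂ) * c ^ (k - 2 * (K' + 1 - j)) *
        ((k.factorial : ℂ) /
          (((K' + 1 - j).factorial : ℂ) * ((k - (K' + 1 - j) + 1).factorial : ℂ)))
      have e1 : k - 2 * (K' + 1 - j) + 1 = 2 * j := by omega
      have e2 : k - 2 * (K' + 1 - j) = 2 * j - 1 := by omega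
      have e3 : k - (K' + 1 - j) + 1 = K' + 1 + j := by omega
      rw [e1, e2, e3]
      ring

lemma sMom_zero (c : ℂ) : sMom c 0 = 1 := by
  rw [sMom_eq_fiber]
  norm_num

lemma sMom_bound (c : ℂ) (k : ℕ) :
    ‖sMom c k‖ ≤ ((k : ℝ) + 1) ^ 2 * (max 2 (2 * ‖c‖)) ^ k := by
  set M := max 2 (2 * ‖c‖) with hM
  have hM1 : (1 : ℝ) ≤ max 1 (‖c‖) := le_max_left _ _
  have hMeq : M = 2 * max 1 (‖c‖) := by
    rw [hM]; rcases le_total 1 (‖c‖) with h | h <;>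
      simp [max_eq_left, max_eq_right, h] <;> nlinarith
  rw [sMom_eq_fiber]
  calc ‖∑ m ∈ Finset.range (k / 2 + 1),
        ((k - 2 * m + 1 : ℕ) : ℂ) * c ^ (k - 2 * m) *
          ((k.factorial : ℂ) / ((m.factorial : ℂ) * ((k - m + 1).factorial : ℂ)))‖
      ≤ ∑ m ∈ Finset.range (k / 2 + 1), ‖((k - 2 * m + 1 : ℕ) : ℂ) * c ^ (k - 2 * m) *
          ((k.factorial : ℂ) / ((m.factorial : ℂ) * ((k - m + 1).factorial : ℂ)))‖ := by
        exact norm_sum_le _ _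
    _ ≤ ∑ m ∈ Finset.range (k / 2 + 1),
          ((k : ℝ) + 1) * (max 1 (‖c‖)) ^ k * 2 ^ k := by
        refine Finset.sum_le_sum ?_
        intro m hm
        simp only [Finset.mem_range] at hm
        have hmk : m ≤ k := by omega
        rw [norm_mul, norm_mul, norm_div, norm_mul, Complex.norm_natCast, Complex.norm_natCast,
          Complex.norm_natCast, Complex.norm_natCast, norm_pow]
        have b1 : ((k - 2 * m + 1 : ℕ) : ℝ) ≤ (k : ℝ) + 1 := by
          have : (k - 2 * m + 1 : ℕ) ≤ k + 1 := by omega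
          exact_mod_cast this
        have b2 : ‖c‖ ^ (k - 2 * m) ≤ (max 1 (‖c‖)) ^ k := by
          calc ‖c‖ ^ (k - 2 * m) ≤ (max 1 (‖c‖)) ^ (k - 2 * m) :=
              pow_le_pow_left₀ (norm_nonneg c) (le_max_right _ _) _
            _ ≤ (max 1 (‖c‖)) ^ k := pow_le_pow_right₀ hM1 (by omega)
        have b3 : (k.factorial : ℝ) / ((m.factorial : ℝ) * ((k - m + 1).factorial : ℝ))
            ≤ 2 ^ k := factorial_ratio_le k m hmk
        have hb3' : (0 : ℝ) ≤ (k.factorial : ℝ) /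
            ((m.factorial : ℝ) * ((k - m + 1).factorial : ℝ)) := by positivity
        gcongr
    _ ≤ ((k : ℝ) + 1) ^ 2 * M ^ k := by
        rw [Finset.sum_const, Finset.card_range, nsmul_eq_mul, hMeq, mul_pow]
        have hcard : ((k / 2 + 1 : ℕ) : ℝ) ≤ (k : ℝ) + 1 := by
          have : k / 2 + 1 ≤ k + 1 := by omega
          exact_mod_cast this
        have h1 : (0 : ℝ) ≤ (k : ℝ) + 1 := by positivity
        nlinarith [pow_nonneg (le_trans zero_le_one hM1) k,
          pow_nonneg (by norm_num : (0:ℝ) ≤ 2) k,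
          mul_le_mul_of_nonneg_right hcard (mul_nonneg
            (mul_nonneg h1 (pow_nonneg (le_trans zero_le_one hM1) k))
            (pow_nonneg (by norm_num : (0:ℝ) ≤ 2) k))]

lemma summable_quad_geo (t : ℝ) (h0 : 0 ≤ t) (h1 : t < 1) :
    Summable (fun j : ℕ => ((j : ℝ) + 2) ^ 2 * t ^ j) := by
  have hn : ‖t‖ < 1 := by rwa [Real.norm_eq_abs, abs_of_nonneg h0]
  have h2 : Summable (fun j : ℕ => (j : ℝ) ^ 2 * t ^ j) :=
    summable_pow_mul_geometric_of_norm_lt_one 2 hn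
  have h3 : Summable (fun j : ℕ => (j : ℝ) ^ 1 * t ^ j) :=
    summable_pow_mul_geometric_of_norm_lt_one 1 hn
  have h4 : Summable (fun j : ℕ => t ^ j) := summable_geometric_of_lt_one h0 h1
  refine ((h2.add ((h3.mul_left 4).add (h4.mul_left 4)))).congr fun j => ?_
  ring

lemma summable_s_mul (c : ℂ) (R : ℝ) (hR : max 2 (2 * ‖c‖) < R) (x : ℝ)
    (hx0 : 0 ≤ x) (hx : x < R ^ 2 / max 2 (2 * ‖c‖)) :
    Summable (fun j : ℕ => ‖sMom c (j + 1)‖ / (R ^ 2) ^ (j + 1) * x ^ j) := by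
  set M := max 2 (2 * ‖c‖) with hM
  have hM2 : (2 : ℝ) ≤ M := le_max_left _ _
  have hM0 : (0 : ℝ) < M := by linarith
  have hR0 : (0 : ℝ) < R := by linarith
  have hR2 : (0 : ℝ) < R ^ 2 := by positivity
  set t := M * x / R ^ 2 with ht
  have ht0 : 0 ≤ t := by positivity
  have ht1 : t < 1 := by
    rw [ht, div_lt_one hR2]
    calc M * x < M * (R ^ 2 / M) := by
          exact mul_lt_mul_of_pos_left hx hM0
      _ = R ^ 2 := by field_simp
  have hmaj := (summable_quad_geo t ht0 ht1).mul_left (M / R ^ 2)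
  refine Summable.of_nonneg_of_le (fun j => by positivity) (fun j => ?_) hmaj
  have hb := sMom_bound c (j + 1)
  have hcast : (((j + 1 : ℕ) : ℝ) + 1) = (j : ℝ) + 2 := by push_cast; ring
  rw [hcast] at hb
  calc ‖sMom c (j + 1)‖ / (R ^ 2) ^ (j + 1) * x ^ j
      ≤ ((j : ℝ) + 2) ^ 2 * M ^ (j + 1) / (R ^ 2) ^ (j + 1) * x ^ j := by
        gcongr
    _ = M / R ^ 2 * (((j : ℝ) + 2) ^ 2 * t ^ j) := by
        rw [ht]
        have hRne : R ≠ 0 := hR0.ne'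
        field_simp
        have hRR : R ^ (j * 2) * R⁻¹ ^ (j * 2) = 1 := by rw [← mul_pow, mul_inv_cancel₀ hRne, one_pow]
        linear_combination (-(M * M ^ j * R ^ 2 * x ^ j)) * hRR

/-- The summand of the double series defining `w`. -/
noncomputable def Fterm (c ζ : ℂ) (p : ℕ × ℕ) : ℂ :=
  ((p.1 + 1 : ℕ) : ℂ) * c ^ p.1 * (ζ ^ (p.1 + 1))⁻¹ *
    (((2 * p.2 + p.1).factorial : ℂ) /
      ((p.2.factorial : ℂ) * ((p.2 + p.1 + 1).factorial : ℂ)) * (ζ ^ (2 * p.2))⁻¹)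

lemma Fterm_abs (c ζ : ℂ) (n m : ℕ) :
    ‖Fterm c ζ (n, m)‖ =
      ((n : ℝ) + 1) * ‖c‖ ^ n * ((‖ζ‖) ^ (n + 1))⁻¹ *
        (((2 * m + n).factorial : ℝ) /
          ((m.factorial : ℝ) * ((m + n + 1).factorial : ℝ)) * ((‖ζ‖) ^ (2 * m))⁻¹) := by
  unfold Fterm
  simp only [norm_mul, norm_div, norm_inv, norm_pow, Complex.norm_natCast]
  push_cast
  ring

lemma Fterm_summable (c ζ : ℂ) (hζ : max 2 (2 * ‖c‖) < ‖ζ‖) :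
    Summable (Fterm c ζ) := by
  set a := ‖ζ‖ with ha
  have ha2 : (2 : ℝ) < a := lt_of_le_of_lt (le_max_left _ _) hζ
  have hac : 2 * ‖c‖ < a := lt_of_le_of_lt (le_max_right _ _) hζ
  have ha0 : (0 : ℝ) < a := by linarith
  set r := 2 * ‖c‖ / a with hr
  set q := 4 / a ^ 2 with hq
  have hr0 : 0 ≤ r := by positivity
  have hr1 : r < 1 := (div_lt_one ha0).mpr hac
  have hq0 : 0 ≤ q := by positivity
  have hq1 : q < 1 := by rw [hq, div_lt_one (by positivity)]; nlinarith
  have hu : Summable (fun n : ℕ => (((n : ℝ) + 1) * r ^ n) * a⁻¹) := by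
    have h3 : Summable (fun n : ℕ => (n : ℝ) ^ 1 * r ^ n) :=
      summable_pow_mul_geometric_of_norm_lt_one 1
        (by rwa [Real.norm_eq_abs, abs_of_nonneg hr0])
    have h4 : Summable (fun n : ℕ => r ^ n) := summable_geometric_of_lt_one hr0 hr1
    exact ((h3.add h4).congr (fun n => by ring)).mul_right a⁻¹
  have hv : Summable (fun m : ℕ => q ^ m) := summable_geometric_of_lt_one hq0 hq1
  have hprod : Summable (fun p : ℕ × ℕ =>
      ((((p.1 : ℝ) + 1) * r ^ p.1) * a⁻¹) * q ^ p.2) :=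
    hu.mul_of_nonneg hv (fun n => by positivity) (fun m => by positivity)
  refine Summable.of_norm_bounded hprod ?_
  rintro ⟨n, m⟩
  rw [Fterm_abs]
  have hfac : ((2 * m + n).factorial : ℝ) /
      ((m.factorial : ℝ) * ((m + n + 1).factorial : ℝ)) ≤ 2 ^ (2 * m + n) := by
    have h := factorial_ratio_le (2 * m + n) m (by omega)
    have e1 : 2 * m + n - m + 1 = m + n + 1 := by omega
    rwa [e1] at h
  calc ((n : ℝ) + 1) * ‖c‖ ^ n * (a ^ (n + 1))⁻¹ *
        (((2 * m + n).factorial : ℝ) /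
          ((m.factorial : ℝ) * ((m + n + 1).factorial : ℝ)) * (a ^ (2 * m))⁻¹)
      ≤ ((n : ℝ) + 1) * ‖c‖ ^ n * (a ^ (n + 1))⁻¹ *
        ((2 : ℝ) ^ (2 * m + n) * (a ^ (2 * m))⁻¹) := by
        gcongr
    _ = (((n : ℝ) + 1) * r ^ n) * a⁻¹ * q ^ m := by
        rw [hr, hq, show (4 : ℝ) = 2 ^ 2 from by norm_num, div_pow, div_pow, mul_pow,
          pow_add (2 : ℝ), ← pow_mul, ← pow_mul]
        field_simp
        ring

/-- The reindexing bijection `(k, m) ↦ (k - 2m, m)` between `Σ k, Fin (k/2+1)` and `ℕ × ℕ`. -/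
def idxEquiv : (Σ k : ℕ, Fin (k / 2 + 1)) ≃ ℕ × ℕ where
  toFun σ := (σ.1 - 2 * (σ.2 : ℕ), (σ.2 : ℕ))
  invFun p := ⟨p.1 + 2 * p.2, ⟨p.2, by omega⟩⟩
  left_inv := by
    rintro ⟨k, ⟨m, hm⟩⟩
    have h2 : 2 * m ≤ k := by omega
    refine Sigma.ext ?_ ?_
    · show k - 2 * m + 2 * m = k
      omega
    · refine (Fin.heq_ext_iff ?_).mpr rfl
      show (k - 2 * m + 2 * m) / 2 + 1 = k / 2 + 1
      omega
  right_inv := by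
    rintro ⟨n, m⟩
    show (n + 2 * m - 2 * m, m) = (n, m)
    simp only [Prod.mk.injEq]
    exact ⟨by omega, trivial⟩

lemma wFun_expansion (c ζ : ℂ) (hζ : max 2 (2 * ‖c‖) < ‖ζ‖) :
    wFun c ζ = (∑' k : ℕ, sMom c k * (ζ ^ (k + 1))⁻¹) ∧
      Summable (fun k : ℕ => sMom c k * (ζ ^ (k + 1))⁻¹) := by
  have hF := Fterm_summable c ζ hζ
  have hfib : ∀ k : ℕ, ∑ m ∈ Finset.range (k / 2 + 1), Fterm c ζ (k - 2 * m, m)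
      = sMom c k * (ζ ^ (k + 1))⁻¹ := by
    intro k
    rw [sMom_eq_fiber, Finset.sum_mul]
    refine Finset.sum_congr rfl fun m hm => ?_
    simp only [Finset.mem_range] at hm
    have h2m : 2 * m ≤ k := by omega
    unfold Fterm
    simp only
    have e1 : 2 * m + (k - 2 * m) = k := by omega
    have e2 : m + (k - 2 * m) + 1 = k - m + 1 := by omega
    have e3 : k - 2 * m + 1 + 2 * m = k + 1 := by omega
    rw [e1, e2]
    have hpow : (ζ ^ (k - 2 * m + 1))⁻¹ * (ζ ^ (2 * m))⁻¹ = (ζ ^ (k + 1))⁻¹ := by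
      rw [← mul_inv, ← pow_add, e3]
    calc ((k - 2 * m + 1 : ℕ) : ℂ) * c ^ (k - 2 * m) * (ζ ^ (k - 2 * m + 1))⁻¹ *
          ((k.factorial : ℂ) / ((m.factorial : ℂ) * ((k - m + 1).factorial : ℂ)) *
            (ζ ^ (2 * m))⁻¹)
        = ((k - 2 * m + 1 : ℕ) : ℂ) * c ^ (k - 2 * m) *
          ((k.factorial : ℂ) / ((m.factorial : ℂ) * ((k - m + 1).factorial : ℂ))) *
          ((ζ ^ (k - 2 * m + 1))⁻¹ * (ζ ^ (2 * m))⁻¹) := by ring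
      _ = _ := by rw [hpow]
  have hsig : Summable (fun σ : (Σ k : ℕ, Fin (k / 2 + 1)) => Fterm c ζ (idxEquiv σ)) :=
    (Equiv.summable_iff idxEquiv).mpr hF
  have hfin : ∀ k : ℕ, (∑' m : Fin (k / 2 + 1), Fterm c ζ (idxEquiv ⟨k, m⟩))
      = sMom c k * (ζ ^ (k + 1))⁻¹ := by
    intro k
    rw [tsum_fintype]
    rw [show (∑ m : Fin (k / 2 + 1), Fterm c ζ (idxEquiv ⟨k, m⟩))
      = ∑ m : Fin (k / 2 + 1), Fterm c ζ (k - 2 * (m : ℕ), (m : ℕ)) from rfl]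
    rw [Fin.sum_univ_eq_sum_range (fun m => Fterm c ζ (k - 2 * m, m)) (k / 2 + 1)]
    exact hfib k
  constructor
  · have hw : wFun c ζ = ∑' p : ℕ × ℕ, Fterm c ζ p := by
      rw [Summable.tsum_prod hF]
      unfold wFun
      refine tsum_congr fun n => ?_
      have hphi : phiFun (n + 1) ζ = ∑' m : ℕ, ((2 * m + n).factorial : ℂ) /
          ((m.factorial : ℂ) * ((m + n + 1).factorial : ℂ)) * (ζ ^ (2 * m))⁻¹ := by
        unfold phiFun
        refine tsum_congr fun m => ?_
        have e1 : 2 * m + (n + 1) - 1 = 2 * m + n := by omega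
        have e2 : m + (n + 1) = m + n + 1 := by omega
        rw [e1, e2]
      rw [hphi, ← tsum_mul_left]
      rfl
    rw [hw, ← Equiv.tsum_eq idxEquiv (Fterm c ζ), Summable.tsum_sigma hsig]
    exact tsum_congr hfin
  · exact (summable_congr hfin).mp hsig.sigma

end GFunAux

open GFunAux in
/-- **The correction function `g`:** its defining series converges on the disk
`|z| < R²/R₀` (where `R₀ = max(2, 2|c|) < R`, so `R²/R₀ > R`), `g` is analytic there, and
`g(z) = (R²/z²)·conj(w(R²/conj z)) - 1/z` for `0 < |z| < R²/R₀`. -/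
theorem gFun_convergence_analytic_and_representation
    (c : ℂ) (R : ℝ) (hR : max 2 (2 * ‖c‖) < R) :
    R < R ^ 2 / max 2 (2 * ‖c‖) ∧
    (∀ z : ℂ, ‖z‖ < R ^ 2 / max 2 (2 * ‖c‖) →
      Summable fun j : ℕ => (starRingEnd ℂ) (sMom c (j + 1)) * (z / (R : ℂ) ^ 2) ^ j) ∧
    DifferentiableOn ℂ (gFun c R)
      {z : ℂ | ‖z‖ < R ^ 2 / max 2 (2 * ‖c‖)} ∧
    (∀ z : ℂ, z ≠ 0 → ‖z‖ < R ^ 2 / max 2 (2 * ‖c‖) →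
      gFun c R z = ((R : ℂ) ^ 2 / z ^ 2) *
          (starRingEnd ℂ) (wFun c ((R : ℂ) ^ 2 / (starRingEnd ℂ) z)) - 1 / z) := by
  have hM2 : (2 : ℝ) ≤ max 2 (2 * ‖c‖) := le_max_left _ _
  have hM0 : (0 : ℝ) < max 2 (2 * ‖c‖) := by linarith
  have hR0 : (0 : ℝ) < R := by linarith
  have hRc : (R : ℂ) ≠ 0 := by exact_mod_cast ne_of_gt hR0
  have hRabs : ‖(R : ℂ) ^ 2‖ = R ^ 2 := by
    rw [show ((R : ℂ) ^ 2) = ((R ^ 2 : ℝ) : ℂ) by push_cast; ring, Complex.norm_real,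
      Real.norm_of_nonneg (by positivity)]
  have part2 : ∀ z : ℂ, ‖z‖ < R ^ 2 / max 2 (2 * ‖c‖) →
      Summable fun j : ℕ => (starRingEnd ℂ) (sMom c (j + 1)) * (z / (R : ℂ) ^ 2) ^ j := by
    intro z hz
    have key := (summable_s_mul c R hR (‖z‖) (norm_nonneg z) hz).mul_left
      (R ^ 2)
    refine Summable.of_norm_bounded key fun j => ?_
    rw [norm_mul, norm_pow, norm_div, Complex.norm_conj, hRabs]
    refine le_of_eq ?_
    rw [div_pow]
    field_simp
    ring
  refine ⟨by rw [lt_div_iff₀ hM0]; nlinarith, part2, ?_, ?_⟩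
  · -- differentiability
    set b : ℕ → ℂ := fun j => (starRingEnd ℂ) (sMom c (j + 1)) / ((R : ℂ) ^ 2) ^ (j + 1)
      with hb
    set p := FormalMultilinearSeries.ofScalars ℂ b with hp
    have hnorm : ∀ n : ℕ, ‖p n‖ = ‖sMom c (n + 1)‖ / (R ^ 2) ^ (n + 1) := by
      intro n
      rw [hp, FormalMultilinearSeries.ofScalars_norm, hb]
      simp only
      rw [norm_div, Complex.norm_conj, norm_pow, hRabs]
    have hg : gFun c R = p.sum := by
      funext z
      unfold gFun
      rw [FormalMultilinearSeries.sum, ← tsum_mul_left]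
      refine tsum_congr fun j => ?_
      rw [hp, FormalMultilinearSeries.ofScalars_apply_eq, smul_eq_mul, hb]
      simp only
      rw [div_pow, pow_succ]
      ring
    rw [hg]
    intro z hz
    simp only [Set.mem_setOf_eq] at hz
    set x : ℝ := (‖z‖ + R ^ 2 / max 2 (2 * ‖c‖)) / 2 with hx
    have hx0 : 0 < x := by
      have := norm_nonneg z
      have : (0 : ℝ) < R ^ 2 / max 2 (2 * ‖c‖) := by positivity
      rw [hx]; linarith [norm_nonneg z]
    have hzx : ‖z‖ < x := by rw [hx]; linarith
    have hxlt : x < R ^ 2 / max 2 (2 * ‖c‖) := by rw [hx]; linarith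
    have hrad : (x.toNNReal : ENNReal) ≤ p.radius := by
      refine FormalMultilinearSeries.le_radius_of_summable p ?_
      refine (summable_s_mul c R hR x hx0.le hxlt).congr fun n => ?_
      rw [hnorm, Real.coe_toNNReal x hx0.le]
    have hradpos : 0 < p.radius :=
      lt_of_lt_of_le (by simpa using (Real.toNNReal_pos.mpr hx0)) hrad
    have hball := p.hasFPowerSeriesOnBall hradpos
    have hmem : z ∈ EMetric.ball (0 : ℂ) p.radius := by
      refine lt_of_lt_of_le ?_ hrad
      have hlt : ‖z‖₊ < x.toNNReal := by
        rw [Real.lt_toNNReal_iff_coe_lt]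
        simpa [coe_nnnorm] using hzx
      simpa [EMetric.mem_ball, edist_zero_right, ENNReal.coe_lt_coe] using hlt
    exact ((hball.analyticAt_of_mem hmem).differentiableAt).differentiableWithinAt
  · -- representation
    intro z hz0 hzlt
    set ζ : ℂ := (R : ℂ) ^ 2 / (starRingEnd ℂ) z with hζ
    have hzabs : 0 < ‖z‖ := norm_pos_iff.mpr hz0
    have hζabs : ‖ζ‖ = R ^ 2 / ‖z‖ := by
      rw [hζ, norm_div, hRabs, Complex.norm_conj]
    have hζM : max 2 (2 * ‖c‖) < ‖ζ‖ := by
      rw [hζabs, lt_div_iff₀ hzabs]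
      have := (lt_div_iff₀ hM0).mp hzlt
      nlinarith
    obtain ⟨hwe, hws⟩ := wFun_expansion c ζ hζM
    have hconjζ : ((starRingEnd ℂ) ζ)⁻¹ = z / (R : ℂ) ^ 2 := by
      rw [hζ, map_div₀, Complex.conj_conj, map_pow, Complex.conj_ofReal, inv_div]
    have key : ∀ k : ℕ, (starRingEnd ℂ) (sMom c k * (ζ ^ (k + 1))⁻¹)
        = (starRingEnd ℂ) (sMom c k) * (z / (R : ℂ) ^ 2) ^ (k + 1) := by
      intro k
      rw [map_mul, map_inv₀, map_pow, ← inv_pow, hconjζ]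
    have hconjw : (starRingEnd ℂ) (wFun c ζ)
        = ∑' k : ℕ, (starRingEnd ℂ) (sMom c k) * (z / (R : ℂ) ^ 2) ^ (k + 1) := by
      rw [hwe, starRingEnd_apply, tsum_star]
      exact tsum_congr fun k => by rw [← starRingEnd_apply]; exact key k
    have hsum2 : Summable fun k : ℕ =>
        (starRingEnd ℂ) (sMom c k) * (z / (R : ℂ) ^ 2) ^ (k + 1) := by
      refine (summable_congr fun k => ?_).mp hws.star
      rw [← starRingEnd_apply]
      exact key k
    rw [hconjw, Summable.tsum_eq_zero_add hsum2, sMom_zero, map_one, one_mul]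
    have h1 : ((R : ℂ) ^ 2 / z ^ 2) * (z / (R : ℂ) ^ 2) ^ (0 + 1) = 1 / z := by
      rw [zero_add, pow_one]
      field_simp
    rw [mul_add, h1, ← tsum_mul_left]
    unfold gFun
    rw [← tsum_mul_left]
    have h2 : ∀ k : ℕ, ((R : ℂ) ^ 2 / z ^ 2) *
        ((starRingEnd ℂ) (sMom c (k + 1)) * (z / (R : ℂ) ^ 2) ^ (k + 1 + 1))
        = (1 / (R : ℂ) ^ 2) * ((starRingEnd ℂ) (sMom c (k + 1)) * (z / (R : ℂ) ^ 2) ^ k) := by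
      intro k
      have hp2 : (z / (R : ℂ) ^ 2) ^ (k + 1 + 1) = (z / (R : ℂ) ^ 2) ^ k *
          (z / (R : ℂ) ^ 2) ^ 2 := by rw [← pow_add]
      rw [hp2]
      have h3 : (z / (R : ℂ) ^ 2) ^ 2 * ((R : ℂ) ^ 2 / z ^ 2) = 1 / (R : ℂ) ^ 2 := by
        rw [div_pow]
        field_simp
      calc ((R : ℂ) ^ 2 / z ^ 2) * ((starRingEnd ℂ) (sMom c (k + 1)) *
            ((z / (R : ℂ) ^ 2) ^ k * (z / (R : ℂ) ^ 2) ^ 2))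
          = (starRingEnd ℂ) (sMom c (k + 1)) * (z / (R : ℂ) ^ 2) ^ k *
            ((z / (R : ℂ) ^ 2) ^ 2 * ((R : ℂ) ^ 2 / z ^ 2)) := by ring
        _ = _ := by rw [h3]; ring
    rw [tsum_congr h2]
    ring
end
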